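/- arXiv:0805.0629 — 4 statements merged into one kernel-verified Lean document; each statement's English description precedes it below -/
import Mathlib

section
/- Let M be an equilateral convex polygon with n ≥ 4 vertices and interior angles α₁,…,αₙ in cyclic order. Then at least two of the angles are local minima (i.e., αᵢ ≤ αᵢ₋₁ and αᵢ ≤ αᵢ₊₁ for at least two indices i, taken cyclically) and at least two are local maxima. -/
noncomputable def planeDet (u v : ℂ) : ℝ := u.re * v.im - u.im * v.re

def IsConvexPolygon {n : ℕ} (V : ZMod n → ℂ) : Prop :=
  ∀ i j : ZMod n, j ≠ i → j ≠ i + 1 → 0 < planeDet (V (i + 1) - V i) (V j - V i)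

section NoLint
set_option maxHeartbeats 1000000
set_option linter.unusedSectionVars false
set_option linter.unnecessarySeqFocus false

namespace FourVertexAux


lemma planeDet_self (u : ℂ) : planeDet u u = 0 := by simp [planeDet]; ring

lemma planeDet_swap (u v : ℂ) : planeDet u v = - planeDet v u := by
  simp [planeDet]; ring

lemma planeDet_add_right (w u v : ℂ) :
    planeDet w (u + v) = planeDet w u + planeDet w v := by
  simp [planeDet]; ring

lemma planeDet_smul_right (a : ℝ) (w u : ℂ) :
    planeDet w (a • u) = a * planeDet w u := by
  simp [planeDet, Complex.smul_re, Complex.smul_im]; ring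

lemma planeDet_split (E X Y P : ℂ) :
    planeDet E (X - Y) = planeDet E (X - P) - planeDet E (Y - P) := by
  simp [planeDet]; ring

lemma cramer (u v w : ℂ) :
    planeDet u v • w = planeDet w v • u + planeDet u w • v := by
  apply Complex.ext <;>
    simp [planeDet, Complex.add_re, Complex.add_im, Complex.smul_re, Complex.smul_im] <;> ring

lemma one_ne_zero' {n : ℕ} (hn : 3 ≤ n) : (1 : ZMod n) ≠ 0 := by
  intro h2
  have : ((1:ℕ) : ZMod n) = 0 := by exact_mod_cast h2
  rw [ZMod.natCast_eq_zero_iff] at this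
  have := Nat.le_of_dvd (by norm_num) this; omega

lemma two_ne_zero' {n : ℕ} (hn : 3 ≤ n) : (2 : ZMod n) ≠ 0 := by
  intro h2
  have : ((2:ℕ) : ZMod n) = 0 := by exact_mod_cast h2
  rw [ZMod.natCast_eq_zero_iff] at this
  have := Nat.le_of_dvd (by norm_num) this; omega

lemma zmod_ne_of_sub {n : ℕ} {x y : ZMod n} (h : x - y ≠ 0) : x ≠ y := by
  intro he; apply h; rw [he]; ring

/-- The "skip chord" lemma. -/
lemma skipchord {n : ℕ} (hn : 3 ≤ n) (V : ZMod n → ℂ) (hconv : IsConvexPolygon V)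
    (d j : ZMod n) (h1 : j ≠ d - 1) (h2 : j ≠ d) (h3 : j ≠ d + 1) :
    0 < planeDet (V (d + 1) - V (d - 1)) (V j - V (d - 1)) := by
  by_contra hcon
  push_neg at hcon
  set A := V (d - 1) with hA
  set B := V d with hB
  set C := V (d + 1) with hC
  set P := V j with hP
  have hd1 : (d - 1) + 1 = d := by ring
  have e10 : (1 : ZMod n) ≠ 0 := one_ne_zero' hn
  have e20 : (2 : ZMod n) ≠ 0 := two_ne_zero' hn
  have ne1 : d + 1 ≠ d - 1 := zmod_ne_of_sub (by
    have : d + 1 - (d - 1) = 2 := by ring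
    rw [this]; exact e20)
  have ne2 : d + 1 ≠ d := zmod_ne_of_sub (by
    have : d + 1 - d = 1 := by ring
    rw [this]; exact e10)
  have hΔ : 0 < planeDet (B - A) (C - A) := by
    have := hconv (d - 1) (d + 1) ne1 (by rw [hd1]; exact ne2)
    rwa [hd1] at this
  set Δ := planeDet (B - A) (C - A) with hΔdef
  have hnu : 0 < planeDet (B - A) (P - A) := by
    have := hconv (d - 1) j h1 (by rwa [hd1])
    rwa [hd1] at this
  set mu := planeDet (P - A) (C - A) / Δ with hmu
  set nu := planeDet (B - A) (P - A) / Δ with hnudef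
  have hmu0 : 0 ≤ mu := by
    apply div_nonneg _ (le_of_lt hΔ)
    rw [planeDet_swap]; linarith
  have hnu0 : 0 < nu := div_pos hnu hΔ
  have hΔne : Δ ≠ 0 := ne_of_gt hΔ
  have hcr : P - A = mu • (B - A) + nu • (C - A) := by
    have h := cramer (B - A) (C - A) (P - A)
    rw [← hΔdef] at h
    rw [hmu, hnudef, div_eq_inv_mul, div_eq_inv_mul, mul_smul, mul_smul, ← smul_add, ← h,
      smul_smul, inv_mul_cancel₀ hΔne, one_smul]
  -- edge d gives mu + nu < 1
  have hedged : 0 < planeDet (C - B) (P - B) := hconv d j h2 h3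
  have hPB : P - B = (mu - 1) • (B - A) + nu • (C - A) := by
    have h : P - B = (P - A) - (B - A) := by ring
    rw [h, hcr]; module
  have k1 : planeDet (C - B) (B - A) = -Δ := by
    rw [hΔdef]; simp only [planeDet, Complex.sub_re, Complex.sub_im]; ring
  have k2 : planeDet (C - B) (C - A) = -Δ := by
    rw [hΔdef]; simp only [planeDet, Complex.sub_re, Complex.sub_im]; ring
  have hsum : mu + nu < 1 := by
    have hval : planeDet (C - B) (P - B) = (mu - 1) * -Δ + nu * -Δ := by
      rw [hPB, planeDet_add_right, planeDet_smul_right, planeDet_smul_right, k1, k2]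
    rw [hval] at hedged
    nlinarith
  -- edge j functional
  set E := V (j + 1) - V j with hE
  have hlin : planeDet E (P - A) = mu * planeDet E (B - A) + nu * planeDet E (C - A) := by
    rw [hcr, planeDet_add_right, planeDet_smul_right, planeDet_smul_right]
  have e1 : planeDet E (P - A) = - planeDet E (A - P) := by
    simp only [planeDet, Complex.sub_re, Complex.sub_im]; ring
  have e2 : planeDet E (B - A) = planeDet E (B - P) - planeDet E (A - P) :=
    planeDet_split E B A P
  have e3 : planeDet E (C - A) = planeDet E (C - P) - planeDet E (A - P) :=
    planeDet_split E C A P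
  have hfB : 0 < planeDet E (B - P) := by
    apply hconv j d (Ne.symm h2)
    intro h; exact h1 (by rw [h]; ring)
  have hfC : 0 < planeDet E (C - P) := by
    apply hconv j (d + 1) (fun h => h3 h.symm)
    intro h
    have hd : d = j := add_right_cancel h
    exact h2 hd.symm
  have hfA : 0 ≤ planeDet E (A - P) := by
    rcases eq_or_ne (d - 1) (j + 1) with he | he
    · have h : A - P = E := by rw [hA, hP, hE, he]
      rw [h, planeDet_self]
    · exact le_of_lt (hconv j (d - 1) (fun h => h1 h.symm) he)
  rw [e1] at hlin
  rw [e2, e3] at hlin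
  nlinarith [mul_nonneg (le_of_lt (by linarith : (0:ℝ) < 1 - mu - nu)) hfA,
    mul_nonneg hmu0 (le_of_lt hfB), mul_pos hnu0 hfC]



lemma planeDet_cycle (A B C : ℂ) : planeDet (B - A) (C - A) = planeDet (C - B) (A - B) := by
  simp [planeDet]; ring

lemma natCast_inj_lt {m x y : ℕ} [NeZero m] (hx : x < m) (hy : y < m)
    (h : (x : ZMod m) = y) : x = y := by
  have := congrArg ZMod.val h
  rwa [ZMod.val_cast_of_lt hx, ZMod.val_cast_of_lt hy] at this

lemma ccw : ∀ (N : ℕ), 3 ≤ N → ∀ (V : ZMod N → ℂ), IsConvexPolygon V →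
    ∀ (a : ZMod N) (p q : ℕ), 0 < p → p < q → q < N →
    0 < planeDet (V (a + (p : ZMod N)) - V a) (V (a + (q : ZMod N)) - V a) := by
  intro N
  induction N using Nat.strong_induction_on with
  | _ N IH =>
  intro hN V hconv a p q hp hpq hqN
  haveI : NeZero N := ⟨by omega⟩
  rcases eq_or_lt_of_le hN with hN3 | hN4
  · -- base case N = 3
    have hp1 : p = 1 := by omega
    have hq2 : q = 2 := by omega
    subst hp1 hq2
    have h2 : ((2:ℕ) : ZMod N) ≠ 0 := by
      intro hh; rw [ZMod.natCast_eq_zero_iff] at hh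
      have := Nat.le_of_dvd (by norm_num) hh; omega
    have h1 : ((1:ℕ) : ZMod N) ≠ 0 := by
      intro hh; rw [ZMod.natCast_eq_zero_iff] at hh
      have := Nat.le_of_dvd (by norm_num) hh; omega
    have := hconv a (a + (2:ℕ))
      (by intro hh; apply h2; have := add_left_cancel (a := a) (by rw [hh, add_zero] : a + (2:ℕ) = a + 0); exact this)
      (by intro hh; apply h1
          have : ((2:ℕ) : ZMod N) = ((1:ℕ) : ZMod N) := by
            apply add_left_cancel (a := a); exact_mod_cast hh
          have h21 : ((2:ℕ) : ZMod N) - 1 = 0 := by rw [this]; push_cast; ring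
          calc ((1:ℕ) : ZMod N) = ((2:ℕ) : ZMod N) - 1 := by push_cast; ring
            _ = 0 := h21)
    convert this using 3 <;> push_cast <;> ring
  · -- N ≥ 4
    have hN4' : 4 ≤ N := by omega
    -- key: the case q ≤ N - 2, proven by deleting the vertex a - 1
    have key : ∀ (a : ZMod N) (p q : ℕ), 0 < p → p < q → q ≤ N - 2 →
        0 < planeDet (V (a + (p : ZMod N)) - V a) (V (a + (q : ZMod N)) - V a) := by
      intro a p q hp hpq hqN2
      haveI : NeZero (N - 1) := ⟨by omega⟩
      set W : ZMod (N - 1) → ℂ := fun x => V (a + ((x.val : ℕ) : ZMod N)) with hW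
      have hWc : IsConvexPolygon W := by
        intro i j hji hji1
        have hiv : i.val < N - 1 := ZMod.val_lt i
        have hjv : j.val < N - 1 := ZMod.val_lt j
        have hi : ((i.val : ℕ) : ZMod (N-1)) = i := ZMod.natCast_rightInverse i
        have hj : ((j.val : ℕ) : ZMod (N-1)) = j := ZMod.natCast_rightInverse j
        rcases lt_or_eq_of_le (by omega : i.val + 1 ≤ N - 1) with hlt | heq
        · -- ordinary edge
          have hip : (i + 1).val = i.val + 1 := by
            have h0 : i + 1 = ((i.val + 1 : ℕ) : ZMod (N-1)) := by
              conv_lhs => rw [← hi]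
              push_cast; ring
            rw [h0, ZMod.val_cast_of_lt hlt]
          have hgoal : W (i+1) = V (a + ((i.val + 1 : ℕ) : ZMod N)) := by
            rw [hW]; simp only; rw [hip]
          have hji' : a + ((j.val : ℕ) : ZMod N) ≠ a + ((i.val : ℕ) : ZMod N) := by
            intro hh; apply hji
            have := add_left_cancel hh
            have := natCast_inj_lt (by omega) (by omega) this
            rw [← hi, ← hj, this]
          have hji1' : a + ((j.val : ℕ) : ZMod N) ≠ a + ((i.val : ℕ) : ZMod N) + 1 := by
            intro hh; apply hji1
            rw [add_assoc, ← Nat.cast_add_one] at hh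
            have h5 := add_left_cancel hh
            have h6 := natCast_inj_lt (by omega) (by omega) h5
            conv_lhs => rw [← hj]
            rw [h6]
            conv_rhs => rw [← hi]
            push_cast; ring
          have hcv := hconv (a + ((i.val : ℕ) : ZMod N)) (a + ((j.val : ℕ) : ZMod N)) hji' hji1'
          have e7 : a + ((i.val : ℕ) : ZMod N) + 1 = a + ((i.val + 1 : ℕ) : ZMod N) := by
            push_cast; ring
          rw [e7] at hcv
          have hgi : W i = V (a + ((i.val : ℕ) : ZMod N)) := by rw [hW]
          have hgj : W j = V (a + ((j.val : ℕ) : ZMod N)) := by rw [hW]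
          rw [hgoal, hgi, hgj]
          exact hcv
        · -- chord edge: i.val = N - 2
          have hiN2 : i.val = N - 2 := by omega
          have hi1 : i + 1 = 0 := by
            rw [← hi, hiN2, ← Nat.cast_add_one]
            have : N - 2 + 1 = N - 1 := by omega
            rw [this, ZMod.natCast_self]
          set d : ZMod N := a - 1 with hd
          have hrw1 : W (i + 1) = V (d + 1) := by
            rw [hi1, hW]; simp only [ZMod.val_zero, Nat.cast_zero, add_zero]
            congr 1; rw [hd]; ring
          have hrw2 : W i = V (d - 1) := by
            rw [hW]; simp only; rw [hiN2, hd]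
            congr 1
            have : ((N - 2 : ℕ) : ZMod N) = -2 := by
              push_cast [Nat.cast_sub (by omega : 2 ≤ N)]; simp
            rw [this]; ring
          have hj1 : a + ((j.val : ℕ) : ZMod N) ≠ d - 1 := by
            rw [hd]; intro hh
            have h3 : a - 1 - 1 = a + (-2 : ZMod N) := by ring
            rw [h3] at hh
            have h2 : ((j.val : ℕ) : ZMod N) = ((N - 2 : ℕ) : ZMod N) := by
              have hc : ((N - 2 : ℕ) : ZMod N) = -2 := by
                push_cast [Nat.cast_sub (by omega : 2 ≤ N)]; simp
              rw [hc]; exact add_left_cancel hh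
            have h4 := natCast_inj_lt (by omega) (by omega) h2
            apply hji
            conv_lhs => rw [← hj]
            rw [h4]
            conv_rhs => rw [← hi]
            rw [hiN2]
          have hj2 : a + ((j.val : ℕ) : ZMod N) ≠ d := by
            rw [hd]; intro hh
            have h3 : a - 1 = a + ((N - 1 : ℕ) : ZMod N) := by
              push_cast [Nat.cast_sub (by omega : 1 ≤ N)]; simp; ring
            rw [h3] at hh
            have := natCast_inj_lt (by omega) (by omega) (add_left_cancel hh)
            omega
          have hj3 : a + ((j.val : ℕ) : ZMod N) ≠ d + 1 := by
            rw [hd]; intro hh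
            have h3 : a - 1 + 1 = a + ((0:ℕ) : ZMod N) := by push_cast; ring
            rw [h3] at hh
            have := natCast_inj_lt (by omega) (by omega) (add_left_cancel hh)
            apply hji1; rw [hi1, ← hj, this]; simp
          have hsc := skipchord (by omega) V hconv d (a + ((j.val : ℕ) : ZMod N)) hj1 hj2 hj3
          have hgj : W j = V (a + ((j.val : ℕ) : ZMod N)) := by rw [hW]
          rw [hrw1, hrw2, hgj]
          exact hsc
      -- apply IH to W
      have hIH := IH (N - 1) (by omega) (by omega) W hWc 0 p q hp hpq (by omega)
      have hc0 : W 0 = V a := by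
        rw [hW]; simp only [ZMod.val_zero, Nat.cast_zero, add_zero]
      have hcp : W (0 + (p : ZMod (N-1))) = V (a + (p : ZMod N)) := by
        rw [hW]; simp only [zero_add]
        rw [ZMod.val_cast_of_lt (by omega : p < N - 1)]
      have hcq : W (0 + (q : ZMod (N-1))) = V (a + (q : ZMod N)) := by
        rw [hW]; simp only [zero_add]
        rw [ZMod.val_cast_of_lt (by omega : q < N - 1)]
      rwa [hc0, hcp, hcq] at hIH
    -- three cases
    rcases lt_or_eq_of_le (by omega : q ≤ N - 1) with hq2 | hq1
    · exact key a p q hp hpq (by omega)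
    · rcases eq_or_lt_of_le (show 1 ≤ p from hp) with hp1 | hp2
      · -- p = 1, q = N - 1 : use triple (c, a, b) with c = a + q
        have h := key (a + (q : ZMod N)) 1 2 (by norm_num) (by norm_num) (by omega)
        have e1 : a + (q : ZMod N) + ((1:ℕ) : ZMod N) = a := by
          rw [hq1]; push_cast [Nat.cast_sub (by omega : 1 ≤ N)]
          rw [ZMod.natCast_self]; ring
        have e2 : a + (q : ZMod N) + ((2:ℕ) : ZMod N) = a + (p : ZMod N) := by
          rw [hq1, ← hp1]; push_cast [Nat.cast_sub (by omega : 1 ≤ N)]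
          rw [ZMod.natCast_self]; ring
        rw [e1, e2] at h
        rw [planeDet_cycle] at h
        exact h
      · -- p ≥ 2, q = N - 1 : use triple (b, c, a) with b = a + p
        have h := key (a + (p : ZMod N)) (q - p) (N - p) (by omega) (by omega) (by omega)
        have e1 : a + (p : ZMod N) + ((q - p : ℕ) : ZMod N) = a + (q : ZMod N) := by
          push_cast [Nat.cast_sub (le_of_lt hpq)]; ring
        have e2 : a + (p : ZMod N) + ((N - p : ℕ) : ZMod N) = a := by
          push_cast [Nat.cast_sub (by omega : p ≤ N)]
          rw [ZMod.natCast_self]; ring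
        rw [e1, e2] at h
        rw [planeDet_cycle] at h
        rw [planeDet_cycle] at h
        exact h


noncomputable def planeDetL (w : ℂ) : ℂ →ₗ[ℝ] ℝ where
  toFun := fun v => planeDet w v
  map_add' := by intro u v; simp [planeDet]; ring
  map_smul' := by intro a u; simp [planeDet, Complex.smul_re, Complex.smul_im]; ring

lemma sum_zmod_shift {n : ℕ} [NeZero n] {M : Type*} [AddCommMonoid M]
    (f : ZMod n → M) (g : ZMod n) :
    ∑ k : ZMod n, f k = ∑ l ∈ Finset.range n, f (g + (l : ZMod n)) := by
  apply Finset.sum_nbij' (i := fun k => (k - g).val) (j := fun l => g + (l : ZMod n))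
  · intro k _; exact Finset.mem_range.mpr (ZMod.val_lt _)
  · intro l _; exact Finset.mem_univ _
  · intro k _; rw [ZMod.natCast_rightInverse]; ring
  · intro l hl
    rw [add_sub_cancel_left, ZMod.val_cast_of_lt (Finset.mem_range.mp hl)]
  · intro k _; rw [ZMod.natCast_rightInverse]; congr 1; ring

lemma core {n : ℕ} [NeZero n] (hn : 4 ≤ n) (V : ZMod n → ℂ) (hconv : IsConvexPolygon V)
    (d : ZMod n → ℝ)
    (hd1 : ∑ k : ZMod n, d k = 0) (hd2 : ∑ k : ZMod n, d k • (V k + V (k + 1)) = 0)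
    (g : ZMod n) (m : ℕ) (hm1 : 1 ≤ m) (hm2 : m ≤ n - 1)
    (hneg : ∀ l : ℕ, l < m → d (g + (l : ZMod n)) ≤ 0)
    (hpos : ∀ l : ℕ, m ≤ l → l < n → 0 < d (g + (l : ZMod n))) : False := by
  have hn0 : ((n : ℕ) : ZMod n) = 0 := ZMod.natCast_self n
  -- the general sum identity, for any D P
  have hiden : ∀ D P : ℂ,
      ∑ k : ZMod n, d k * (planeDet D (V k - P) + planeDet D (V (k+1) - P)) = 0 := by
    intro D P
    have hlin : ∀ k : ZMod n, d k * (planeDet D (V k - P) + planeDet D (V (k+1) - P))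
        = planeDetL D (d k • (V k + V (k+1))) + (d k * (2 * planeDet D (-P))) := by
      intro k
      simp only [planeDetL, LinearMap.coe_mk, AddHom.coe_mk, map_smul, smul_eq_mul]
      simp only [planeDet, Complex.sub_re, Complex.sub_im, Complex.add_re, Complex.add_im,
        Complex.neg_re, Complex.neg_im]
      ring
    calc ∑ k : ZMod n, d k * (planeDet D (V k - P) + planeDet D (V (k+1) - P))
        = ∑ k : ZMod n, (planeDetL D (d k • (V k + V (k+1))) + d k * (2 * planeDet D (-P))) := by
          apply Finset.sum_congr rfl; intro k _; rw [hlin k]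
      _ = planeDetL D (∑ k : ZMod n, d k • (V k + V (k+1)))
            + (∑ k : ZMod n, d k) * (2 * planeDet D (-P)) := by
          rw [Finset.sum_add_distrib, map_sum, Finset.sum_mul]
      _ = 0 := by rw [hd1, hd2]; simp
  -- index conversion helpers
  have hidx : ∀ (x y : ℕ), g + ((x + y : ℕ) : ZMod n) = g + (x : ZMod n) + (y : ZMod n) := by
    intro x y; push_cast; ring
  have hwrap : g + ((n : ℕ) : ZMod n) = g := by rw [hn0, add_zero]
  set a := g + (m : ZMod n) with ha
  have hag : a + ((n - m : ℕ) : ZMod n) = g := by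
    rw [ha, add_assoc, ← Nat.cast_add, Nat.add_sub_cancel' (by omega : m ≤ n), hn0, add_zero]
  have haidx : ∀ l : ℕ, m ≤ l → g + (l : ZMod n) = a + ((l - m : ℕ) : ZMod n) := by
    intro l hl
    rw [ha, add_assoc, ← Nat.cast_add, Nat.add_sub_cancel' hl]
  rcases lt_or_eq_of_le hm2 with hmlt | hmeq
  · -- main case : m < n - 1
    set D := V g - V a with hD
    have hin : ∀ r : ℕ, 0 < r → r < n - m → planeDet D (V (a + (r : ZMod n)) - V a) < 0 := by
      intro r hr1 hr2
      have := ccw n (by omega) V hconv a r (n - m) hr1 hr2 (by omega)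
      rw [hag] at this
      rw [hD, planeDet_swap]; linarith
    have hout : ∀ r : ℕ, n - m < r → r < n → 0 < planeDet D (V (a + (r : ZMod n)) - V a) := by
      intro r hr1 hr2
      have := ccw n (by omega) V hconv a (n - m) r (by omega) hr1 hr2
      rw [hag] at this
      rw [hD]
      exact this
    have h0a : planeDet D (V a - V a) = 0 := by simp [planeDet]
    have h0g : planeDet D (V g - V a) = 0 := by rw [hD]; exact planeDet_self _
    -- sign of h at vertices g + l
    have hVgl : ∀ l : ℕ, l ≤ m → 0 ≤ planeDet D (V (g + (l : ZMod n)) - V a) := by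
      intro l hl
      rcases Nat.eq_zero_or_pos l with h0 | hpos'
      · subst h0
        have e0 : g + ((0:ℕ) : ZMod n) = g := by push_cast; ring
        rw [e0, h0g]
      rcases eq_or_lt_of_le hl with hlm | hlm
      · subst hlm; rw [← ha, h0a]
      · -- 1 ≤ l < m : vertex = a + (n - m + l)
        have : g + (l : ZMod n) = a + ((n - m + l : ℕ) : ZMod n) := by
          rw [ha, Nat.cast_add, ← add_assoc, add_assoc g, ← Nat.cast_add,
            Nat.add_sub_cancel' (by omega : m ≤ n), hn0, add_zero]
        rw [this]
        exact le_of_lt (hout (n - m + l) (by omega) (by omega))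
    have hVmid : ∀ l : ℕ, m < l → l < n → planeDet D (V (g + (l : ZMod n)) - V a) < 0 := by
      intro l h1 h2
      rw [haidx l (by omega)]
      exact hin (l - m) (by omega) (by omega)
    -- evaluate the sum
    have hS := hiden D (V a)
    rw [sum_zmod_shift _ g] at hS
    have hsplit : Finset.range n = Finset.range m ∪ Finset.Ico m n := by
      rw [Finset.range_eq_Ico, ← Finset.Ico_union_Ico_eq_Ico (by omega : 0 ≤ m) (by omega : m ≤ n), Finset.range_eq_Ico]
    set F : ℕ → ℝ := fun l =>
      d (g + (l : ZMod n)) * (planeDet D (V (g + (l : ZMod n)) - V a)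
        + planeDet D (V ((g + (l : ZMod n)) + 1) - V a)) with hF
    have hSF : ∑ l ∈ Finset.range n, F l = 0 := hS
    have hsucc : ∀ l : ℕ, (g + (l : ZMod n)) + 1 = g + ((l + 1 : ℕ) : ZMod n) := by
      intro l; push_cast; ring
    have hFneg : ∀ l ∈ Finset.Ico m n, F l < 0 := by
      intro l hl
      rw [Finset.mem_Ico] at hl
      rw [hF]; simp only
      apply mul_neg_of_pos_of_neg (hpos l hl.1 hl.2)
      rcases eq_or_lt_of_le hl.1 with hlm | hlm
      · -- l = m : first term 0, second < 0
        have e1 : planeDet D (V (g + (l : ZMod n)) - V a) = 0 := by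
          rw [← hlm, ← ha]; exact h0a
        have e2 : planeDet D (V ((g + (l : ZMod n)) + 1) - V a) < 0 := by
          rw [hsucc l]; exact hVmid (l + 1) (by omega) (by omega)
        rw [e1]; linarith [e2]
      · -- l > m
        have e1 : planeDet D (V (g + (l : ZMod n)) - V a) < 0 := hVmid l hlm hl.2
        have e2 : planeDet D (V ((g + (l : ZMod n)) + 1) - V a) ≤ 0 := by
          rw [hsucc l]
          rcases eq_or_lt_of_le (by omega : l + 1 ≤ n) with hln | hln
          · rw [hln, hwrap]; exact le_of_eq h0g
          · exact le_of_lt (hVmid (l + 1) (by omega) hln)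
        linarith
    have hFpos : ∀ l ∈ Finset.range m, F l ≤ 0 := by
      intro l hl
      rw [Finset.mem_range] at hl
      rw [hF]; simp only
      apply mul_nonpos_of_nonpos_of_nonneg (hneg l hl)
      have e1 : 0 ≤ planeDet D (V (g + (l : ZMod n)) - V a) := hVgl l (by omega)
      have e2 : 0 ≤ planeDet D (V ((g + (l : ZMod n)) + 1) - V a) := by
        rw [hsucc l]; exact hVgl (l + 1) (by omega)
      linarith
    have hdisj : Disjoint (Finset.range m) (Finset.Ico m n) := by
      rw [Finset.range_eq_Ico]
      exact Finset.Ico_disjoint_Ico_consecutive 0 m n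
    rw [hsplit, Finset.sum_union hdisj] at hSF
    have hs1 : ∑ l ∈ Finset.range m, F l ≤ 0 := Finset.sum_nonpos hFpos
    have hs2 : ∑ l ∈ Finset.Ico m n, F l < 0 := by
      apply Finset.sum_neg hFneg
      exact Finset.nonempty_Ico.mpr (by omega)
    linarith
  · -- single positive edge case : m = n - 1
    have hagm : a = g - 1 := by
      rw [ha, hmeq]
      rw [Nat.cast_sub (by omega : 1 ≤ n), hn0]; push_cast; ring
    set D := V g - V (g - 1) with hD
    have hg1 : (g - 1) + 1 = g := by ring
    have hposh : ∀ k : ZMod n, k ≠ g - 1 → k ≠ g → 0 < planeDet D (V k - V (g - 1)) := by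
      intro k h1 h2
      have := hconv (g - 1) k h1 (by rwa [hg1])
      rw [hg1] at this
      exact this
    have hzero1 : planeDet D (V (g-1) - V (g-1)) = 0 := by simp [planeDet]
    have hzero2 : planeDet D (V g - V (g-1)) = 0 := by rw [hD]; exact planeDet_self _
    have hgm1 : g - 1 = g + ((n - 1 : ℕ) : ZMod n) := by
      rw [Nat.cast_sub (by omega : 1 ≤ n), hn0]; push_cast; ring
    have hg0 : g = g + ((0:ℕ) : ZMod n) := by push_cast; ring
    have shift_ne : ∀ (x y : ℕ), x < n → y < n → x ≠ y →
        g + (x : ZMod n) ≠ g + (y : ZMod n) := by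
      intro x y hx hy hxy hc
      exact hxy (natCast_inj_lt hx hy (add_left_cancel hc))
    have hgeall : ∀ k : ZMod n, 0 ≤ planeDet D (V k - V (g - 1)) := by
      intro k
      rcases eq_or_ne k (g - 1) with he | he
      · rw [he]; exact le_of_eq hzero1.symm
      rcases eq_or_ne k g with he2 | he2
      · rw [he2]; exact le_of_eq hzero2.symm
      · exact le_of_lt (hposh k he he2)
    have hS := hiden D (V (g - 1))
    rw [sum_zmod_shift _ g] at hS
    set F : ℕ → ℝ := fun l =>
      d (g + (l : ZMod n)) * (planeDet D (V (g + (l : ZMod n)) - V (g - 1))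
        + planeDet D (V ((g + (l : ZMod n)) + 1) - V (g - 1))) with hF
    have hSF : ∑ l ∈ Finset.range n, F l = 0 := hS
    have hsucc : ∀ l : ℕ, (g + (l : ZMod n)) + 1 = g + ((l + 1 : ℕ) : ZMod n) := by
      intro l; push_cast; ring
    -- F l has nonneg factor, and the factor is > 0 for l ≤ n - 2
    have hFpos : ∀ l : ℕ, l < n - 1 →
        0 < planeDet D (V (g + (l : ZMod n)) - V (g - 1))
          + planeDet D (V ((g + (l : ZMod n)) + 1) - V (g - 1)) := by
      intro l hl
      rcases Nat.eq_zero_or_pos l with h0 | hl1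
      · -- l = 0 : second factor at g+1 > 0
        subst h0
        have e2 : 0 < planeDet D (V (g + ((1:ℕ) : ZMod n)) - V (g - 1)) := by
          apply hposh
          · rw [hgm1]; exact shift_ne 1 (n-1) (by omega) (by omega) (by omega)
          · nth_rewrite 2 [hg0]
            exact shift_ne 1 0 (by omega) (by omega) (by omega)
        have e1 : 0 ≤ planeDet D (V (g + ((0:ℕ) : ZMod n)) - V (g - 1)) := hgeall _
        have heq : (g + ((0:ℕ) : ZMod n)) + 1 = g + ((1:ℕ) : ZMod n) := by push_cast; ring
        rw [heq]
        linarith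
      · -- l ≥ 1 : first factor at g+l > 0
        have e1 : 0 < planeDet D (V (g + (l : ZMod n)) - V (g - 1)) := by
          apply hposh
          · rw [hgm1]; exact shift_ne l (n-1) (by omega) (by omega) (by omega)
          · nth_rewrite 2 [hg0]
            exact shift_ne l 0 (by omega) (by omega) (by omega)
        have e2 : 0 ≤ planeDet D (V ((g + (l : ZMod n)) + 1) - V (g - 1)) := hgeall _
        linarith
    -- all terms l < n-1 are ≤ 0 ; term n-1 is 0
    have hlast : F (n - 1) = 0 := by
      rw [hF]; simp only
      have e1 : g + ((n - 1 : ℕ) : ZMod n) = g - 1 := by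
        rw [Nat.cast_sub (by omega : 1 ≤ n), hn0]; push_cast; ring
      have e2 : (g + ((n - 1 : ℕ) : ZMod n)) + 1 = g := by rw [e1]; ring
      rw [e2, e1]
      have z1 : planeDet D (V (g - 1) - V (g - 1)) = 0 := by simp [planeDet]
      have z2 : planeDet D (V g - V (g - 1)) = 0 := by rw [hD]; exact planeDet_self _
      rw [z1, z2]; ring
    have hrange : Finset.range n = Finset.range (n - 1) ∪ {n - 1} := by
      have : n = (n - 1) + 1 := by omega
      rw [this]
      rw [Finset.range_add_one]
      have : (n - 1) + 1 - 1 = n - 1 := by omega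
      rw [this]
      ext x; simp [Finset.mem_insert, or_comm]
    have hdisj2 : Disjoint (Finset.range (n - 1)) ({n - 1} : Finset ℕ) := by
      simp [Finset.disjoint_singleton_right]
    rw [hrange, Finset.sum_union hdisj2, Finset.sum_singleton, hlast, add_zero] at hSF
    -- every term in range (n-1) is ≤ 0, sum = 0, so all are 0
    have hterms : ∀ l ∈ Finset.range (n - 1), F l ≤ 0 := by
      intro l hl
      rw [Finset.mem_range] at hl
      rw [hF]; simp only
      exact mul_nonpos_of_nonpos_of_nonneg (hneg l (by omega)) (le_of_lt (hFpos l hl))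
    have hallzero := (Finset.sum_eq_zero_iff_of_nonpos hterms).mp hSF
    have hdzero : ∀ l : ℕ, l < n - 1 → d (g + (l : ZMod n)) = 0 := by
      intro l hl
      have := hallzero l (Finset.mem_range.mpr hl)
      rw [hF] at this; simp only at this
      rcases mul_eq_zero.mp this with h | h
      · exact h
      · exfalso; exact ne_of_gt (hFpos l hl) h
    -- contradiction with hd1
    have hd1' : ∑ l ∈ Finset.range n, d (g + (l : ZMod n)) = 0 := by
      rw [← sum_zmod_shift (fun k => d k) g]; exact hd1
    rw [hrange, Finset.sum_union hdisj2, Finset.sum_singleton] at hd1'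
    have : ∑ l ∈ Finset.range (n - 1), d (g + (l : ZMod n)) = 0 := by
      apply Finset.sum_eq_zero
      intro l hl; exact hdzero l (Finset.mem_range.mp hl)
    rw [this, zero_add] at hd1'
    have := hpos (n - 1) (by omega) (by omega)
    linarith



def dotp (u v : ℂ) : ℝ := u.re * v.re + u.im * v.im

section TauSetup

variable {n : ℕ} [NeZero n] (hn : 4 ≤ n) (V : ZMod n → ℂ)

/-- edge vectors -/
noncomputable def edge (V : ZMod n → ℂ) : ZMod n → ℂ := fun k => V (k + 1) - V k

/-- common squared side length -/
noncomputable def sq (V : ZMod n → ℂ) : ℝ := Complex.normSq (V 1 - V 0)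

/-- tangent of half exterior angle at vertex k (times nothing), algebraically -/
noncomputable def tau (V : ZMod n → ℂ) : ZMod n → ℝ := fun k =>
  planeDet (edge V (k - 1)) (edge V k) / (sq V + dotp (edge V (k - 1)) (edge V k))

variable (hconv : IsConvexPolygon V)
variable (hequi : ∀ i j : ZMod n, dist (V i) (V (i + 1)) = dist (V j) (V (j + 1)))

include hequi in
lemma normSq_edge : ∀ k : ZMod n, Complex.normSq (edge V k) = sq V := by
  intro k
  have h := hequi k 0
  have h2 : ‖V k - V (k+1)‖ = ‖V 0 - V (0+1)‖ := by rw [← dist_eq_norm, ← dist_eq_norm]; exact h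
  have h3 : ‖edge V k‖ = ‖V 1 - V 0‖ := by
    rw [show edge V k = -(V k - V (k+1)) by rw [edge]; ring, norm_neg, h2,
      show V 0 - V (0+1) = -(V (0+1) - V 0) by ring, norm_neg, zero_add]
  rw [sq, ← Complex.sq_norm, ← Complex.sq_norm, h3]

include hconv in
lemma det_edge_pos (hn : 4 ≤ n) : ∀ k : ZMod n, 0 < planeDet (edge V (k - 1)) (edge V k) := by
  intro k
  have e10 : (1 : ZMod n) ≠ 0 := one_ne_zero' (by omega)
  have e20 : (2 : ZMod n) ≠ 0 := two_ne_zero' (by omega)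
  have h1 : k + 1 ≠ k - 1 := zmod_ne_of_sub (by
    have : k + 1 - (k - 1) = 2 := by ring
    rw [this]; exact e20)
  have h2 : k + 1 ≠ (k - 1) + 1 := by
    rw [show (k-1) + 1 = k by ring]
    exact zmod_ne_of_sub (by rw [show k + 1 - k = 1 by ring]; exact e10)
  have := hconv (k - 1) (k + 1) h1 h2
  rw [show (k-1) + 1 = k by ring] at this
  have hsplit : V (k+1) - V (k-1) = edge V (k-1) + edge V k := by
    simp only [edge]; rw [show (k-1) + 1 = k by ring]; ring
  rw [hsplit] at this
  have : 0 < planeDet (edge V (k-1)) (edge V k) := by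
    have hexp : planeDet (edge V (k-1)) (edge V (k-1) + edge V k)
        = planeDet (edge V (k-1)) (edge V k) := by
      simp [planeDet, Complex.add_re, Complex.add_im]; ring
    rw [← hexp]
    have heq : V k - V (k - 1) = edge V (k-1) := by
      simp only [edge]; rw [show (k-1)+1 = k by ring]
    rwa [heq] at this
  exact this

-- Lagrange identity
lemma lagrange (u v : ℂ) :
    planeDet u v ^ 2 + dotp u v ^ 2 = Complex.normSq u * Complex.normSq v := by
  simp [planeDet, dotp, Complex.normSq_apply]; ring

include hconv hequi in
lemma den_pos (hn : 4 ≤ n) : ∀ k : ZMod n, 0 < sq V + dotp (edge V (k - 1)) (edge V k) := by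
  intro k
  have hdet := det_edge_pos V hconv hn k
  have hlag := lagrange (edge V (k-1)) (edge V k)
  rw [normSq_edge V hequi, normSq_edge V hequi] at hlag
  have hsq : 0 ≤ sq V := by rw [sq]; exact Complex.normSq_nonneg _
  by_contra hcon
  push_neg at hcon
  have h1 : sq V ≤ - dotp (edge V (k-1)) (edge V k) := by linarith
  have h2 : sq V * sq V ≤ dotp (edge V (k-1)) (edge V k) ^ 2 := by nlinarith
  have h3 : 0 < planeDet (edge V (k-1)) (edge V k) ^ 2 := pow_pos hdet 2
  linarith

include hconv hequi in
lemma tau_identity (hn : 4 ≤ n) : ∀ k : ZMod n,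
    (tau V k) • (edge V (k - 1) + edge V k) = Complex.I * (edge V (k - 1) - edge V k) := by
  intro k
  set u := edge V (k-1) with hu
  set v := edge V k with hv
  have hden := den_pos V hconv hequi hn k
  have hnu : Complex.normSq u = sq V := normSq_edge V hequi (k-1)
  have hnv : Complex.normSq v = sq V := normSq_edge V hequi k
  have key : (sq V + dotp u v) • (Complex.I * (u - v)) = planeDet u v • (u + v) := by
    rw [Complex.normSq_apply] at hnu hnv
    apply Complex.ext
    · simp only [Complex.smul_re, Complex.mul_re, Complex.sub_re, Complex.sub_im,
        Complex.add_re, Complex.I_re, Complex.I_im, dotp, planeDet, smul_eq_mul]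
      linear_combination (-v.im) * hnu + u.im * hnv
    · simp only [Complex.smul_im, Complex.mul_im, Complex.sub_re, Complex.sub_im,
        Complex.add_im, Complex.I_re, Complex.I_im, dotp, planeDet, smul_eq_mul]
      linear_combination v.re * hnu + (-u.re) * hnv
  have : tau V k • (u + v)
      = (sq V + dotp u v)⁻¹ • ((sq V + dotp u v) • (Complex.I * (u - v))) := by
    rw [key, smul_smul, tau]
    congr 1
    field_simp
    exact (mul_div_cancel_left₀ _ (ne_of_gt hden)).symm
  rw [this, smul_smul, inv_mul_cancel₀ (ne_of_gt hden), one_smul]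

include hequi hconv in
lemma sum_tau_smul (hn : 4 ≤ n) :
    ∑ k : ZMod n, (tau V k) • (edge V (k - 1) + edge V k) = 0 := by
  have h1 : ∀ k : ZMod n, (tau V k) • (edge V (k - 1) + edge V k)
      = Complex.I * edge V (k - 1) - Complex.I * edge V k := by
    intro k; rw [tau_identity V hconv hequi hn k]; ring
  rw [Finset.sum_congr rfl (fun k _ => h1 k), Finset.sum_sub_distrib]
  have h2 : ∑ k : ZMod n, Complex.I * edge V (k - 1) = ∑ k : ZMod n, Complex.I * edge V k := by
    apply Fintype.sum_equiv (Equiv.subRight (1 : ZMod n))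
    intro x; rfl
  rw [h2, sub_self]

include hequi hconv in
lemma hD1 : ∑ k : ZMod n, (tau V (k + 1) - tau V k) = 0 := by
  rw [Finset.sum_sub_distrib]
  have h2 : ∑ k : ZMod n, tau V (k + 1) = ∑ k : ZMod n, tau V k := by
    apply Fintype.sum_equiv (Equiv.addRight (1 : ZMod n))
    intro x; rfl
  rw [h2, sub_self]

include hequi hconv in
lemma hD2 (hn : 4 ≤ n) :
    ∑ k : ZMod n, (tau V (k + 1) - tau V k) • (V k + V (k + 1)) = 0 := by
  have h1 : ∀ k : ZMod n, (tau V (k + 1) - tau V k) • (V k + V (k + 1))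
      = tau V (k+1) • (V k + V (k+1)) - tau V k • (V k + V (k+1)) := by
    intro k; rw [sub_smul]
  rw [Finset.sum_congr rfl (fun k _ => h1 k), Finset.sum_sub_distrib]
  have h2 : ∑ k : ZMod n, tau V (k + 1) • (V k + V (k + 1))
      = ∑ k : ZMod n, tau V k • (V (k - 1) + V k) := by
    apply Fintype.sum_equiv (Equiv.addRight (1 : ZMod n))
    intro x; simp only [Equiv.coe_addRight]
    rw [show x + 1 - 1 = x by ring]
  rw [h2, ← Finset.sum_sub_distrib]
  have h3 : ∀ k : ZMod n, tau V k • (V (k - 1) + V k) - tau V k • (V k + V (k + 1))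
      = -(tau V k • (edge V (k-1) + edge V k)) := by
    intro k
    rw [← smul_sub, ← smul_neg]
    congr 1
    simp only [edge]
    rw [show (k-1) + 1 = k by ring]
    ring
  rw [Finset.sum_congr rfl (fun k _ => h3 k), Finset.sum_neg_distrib,
    sum_tau_smul V hconv hequi hn, neg_zero]

include hconv in
lemma sq_pos (hn : 4 ≤ n) : 0 < sq V := by
  have e10 : (1 : ZMod n) ≠ 0 := one_ne_zero' (by omega)
  have e20 : (2 : ZMod n) ≠ 0 := two_ne_zero' (by omega)
  rcases lt_or_eq_of_le (Complex.normSq_nonneg (V 1 - V 0)) with h | h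
  · exact h
  · exfalso
    have h0 : V 1 - V 0 = 0 := Complex.normSq_eq_zero.mp h.symm
    have := hconv 0 2 (by simpa using e20) (by
      rw [zero_add]
      exact zmod_ne_of_sub (by rw [show (2 : ZMod n) - 1 = 1 by ring]; exact e10))
    rw [zero_add, h0] at this
    simp [planeDet] at this

lemma inner_eq_dotp (z w : ℂ) : (inner ℝ z w : ℝ) = dotp z w := by
  rw [Complex.inner]; simp [Complex.mul_re, dotp]; ring

include hconv hequi in
lemma cos_angle_eq (hn : 4 ≤ n) (i : ZMod n) :
    Real.cos (EuclideanGeometry.angle (V (i-1)) (V i) (V (i+1)))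
      = - dotp (edge V (i-1)) (edge V i) / sq V := by
  have hS : 0 < sq V := sq_pos V hconv hn
  rw [EuclideanGeometry.angle]
  rw [InnerProductGeometry.cos_angle]
  have hvs1 : (V (i-1) -ᵥ V i : ℂ) = V (i-1) - V i := rfl
  have hvs2 : (V (i+1) -ᵥ V i : ℂ) = V (i+1) - V i := rfl
  rw [hvs1, hvs2, inner_eq_dotp]
  have hx : V (i-1) - V i = - edge V (i-1) := by
    simp only [edge]; rw [show (i-1) + 1 = i by ring]; ring
  have hy : V (i+1) - V i = edge V i := rfl
  have hnx : ‖V (i-1) - V i‖^2 = sq V := by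
    rw [Complex.sq_norm, hx, Complex.normSq_neg]
    exact normSq_edge V hequi (i-1)
  have hny : ‖V (i+1) - V i‖^2 = sq V := by
    rw [Complex.sq_norm, hy]
    exact normSq_edge V hequi i
  have hprod : ‖V (i-1) - V i‖ * ‖V (i+1) - V i‖ = sq V := by
    have h1 : ‖V (i-1) - V i‖ = Real.sqrt (sq V) := by
      rw [← hnx, Real.sqrt_sq (norm_nonneg _)]
    have h2 : ‖V (i+1) - V i‖ = Real.sqrt (sq V) := by
      rw [← hny, Real.sqrt_sq (norm_nonneg _)]
    rw [h1, h2, Real.mul_self_sqrt (le_of_lt hS)]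
  rw [hprod, hx, hy]
  congr 1
  simp only [dotp, Complex.neg_re, Complex.neg_im]; ring

include hconv hequi in
lemma tau_lt_of_dot_lt (hn : 4 ≤ n) (k l : ZMod n)
    (h : dotp (edge V (k-1)) (edge V k) < dotp (edge V (l-1)) (edge V l)) :
    tau V l < tau V k := by
  have hS : 0 < sq V := sq_pos V hconv hn
  have dk := det_edge_pos V hconv hn k
  have dl := det_edge_pos V hconv hn l
  have ek := den_pos V hconv hequi hn k
  have el := den_pos V hconv hequi hn l
  have lk := lagrange (edge V (k-1)) (edge V k)
  have ll := lagrange (edge V (l-1)) (edge V l)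
  rw [normSq_edge V hequi, normSq_edge V hequi] at lk ll
  set S := sq V
  set xk := dotp (edge V (k-1)) (edge V k)
  set xl := dotp (edge V (l-1)) (edge V l)
  set Dk := planeDet (edge V (k-1)) (edge V k)
  set Dl := planeDet (edge V (l-1)) (edge V l)
  rw [tau, tau]
  rw [div_lt_div_iff₀ el ek]
  have hfac : (Dk * (S + xl))^2 - (Dl * (S + xk))^2
      = (S + xk) * (S + xl) * (2*S*(xl - xk)) := by
    linear_combination ((S+xl)^2) * lk - ((S+xk)^2) * ll
  have hpos : 0 < (S + xk) * (S + xl) * (2*S*(xl - xk)) := by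
    apply mul_pos (mul_pos ek el)
    nlinarith
  have hsq : (Dl * (S + xk))^2 < (Dk * (S + xl))^2 := by linarith
  nlinarith [mul_pos dl ek, mul_pos dk el]

include hconv hequi in
lemma tau_eq_of_dot_eq (hn : 4 ≤ n) (k l : ZMod n)
    (h : dotp (edge V (k-1)) (edge V k) = dotp (edge V (l-1)) (edge V l)) :
    tau V l = tau V k := by
  have dk := det_edge_pos V hconv hn k
  have dl := det_edge_pos V hconv hn l
  have lk := lagrange (edge V (k-1)) (edge V k)
  have ll := lagrange (edge V (l-1)) (edge V l)
  rw [normSq_edge V hequi, normSq_edge V hequi] at lk ll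
  have h2 : planeDet (edge V (l-1)) (edge V l) ^ 2 = planeDet (edge V (k-1)) (edge V k) ^ 2 := by
    linear_combination ll - lk + (dotp (edge V (k-1)) (edge V k)
      + dotp (edge V (l-1)) (edge V l)) * h
  have h3 : (planeDet (edge V (l-1)) (edge V l) - planeDet (edge V (k-1)) (edge V k))
      * (planeDet (edge V (l-1)) (edge V l) + planeDet (edge V (k-1)) (edge V k)) = 0 := by
    linear_combination h2
  have hdet : planeDet (edge V (l-1)) (edge V l) = planeDet (edge V (k-1)) (edge V k) := by
    rcases mul_eq_zero.mp h3 with h4 | h4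
    · linarith [sub_eq_zero.mp h4]
    · linarith
  rw [tau, tau, hdet, h]

include hconv hequi in
lemma angle_le_iff (hn : 4 ≤ n) (i j : ZMod n) :
    EuclideanGeometry.angle (V (i-1)) (V i) (V (i+1))
      ≤ EuclideanGeometry.angle (V (j-1)) (V j) (V (j+1))
    ↔ tau V j ≤ tau V i := by
  have hS : 0 < sq V := sq_pos V hconv hn
  have hi : EuclideanGeometry.angle (V (i-1)) (V i) (V (i+1)) ∈ Set.Icc 0 Real.pi :=
    ⟨EuclideanGeometry.angle_nonneg _ _ _, EuclideanGeometry.angle_le_pi _ _ _⟩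
  have hj : EuclideanGeometry.angle (V (j-1)) (V j) (V (j+1)) ∈ Set.Icc 0 Real.pi :=
    ⟨EuclideanGeometry.angle_nonneg _ _ _, EuclideanGeometry.angle_le_pi _ _ _⟩
  rw [← (Real.strictAntiOn_cos.le_iff_ge hj hi)]
  rw [cos_angle_eq V hconv hequi hn i, cos_angle_eq V hconv hequi hn j]
  rw [div_le_div_iff_of_pos_right hS, neg_le_neg_iff]
  constructor
  · intro hxx
    rcases eq_or_lt_of_le hxx with he | hlt
    · exact le_of_eq (tau_eq_of_dot_eq V hconv hequi hn i j he)
    · exact le_of_lt (tau_lt_of_dot_lt V hconv hequi hn i j hlt)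
  · intro htt
    by_contra hxx
    push_neg at hxx
    have := tau_lt_of_dot_lt V hconv hequi hn j i hxx
    linarith

end TauSetup



lemma two_lmax {n : ℕ} [NeZero n] (hn : 4 ≤ n) (τ : ZMod n → ℝ)
    (hcore : ∀ (g : ZMod n) (m : ℕ), 1 ≤ m → m ≤ n - 1 →
      (∀ l : ℕ, l < m → τ (g + (l : ZMod n) + 1) - τ (g + (l : ZMod n)) ≤ 0) →
      (∀ l : ℕ, m ≤ l → l < n → 0 < τ (g + (l : ZMod n) + 1) - τ (g + (l : ZMod n))) → False) :
    ∃ i j : ZMod n, i ≠ j ∧ (τ (i - 1) ≤ τ i ∧ τ (i + 1) ≤ τ i)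
      ∧ (τ (j - 1) ≤ τ j ∧ τ (j + 1) ≤ τ j) := by
  by_contra hcon
  have hne10 : (1 : ZMod n) ≠ 0 := by
    intro h2
    have : ((1:ℕ) : ZMod n) = ((0:ℕ) : ZMod n) := by push_cast; exact h2
    have := natCast_inj_lt (by omega : 1 < n) (by omega : 0 < n) this
    omega
  obtain ⟨g, hgm⟩ := Finite.exists_max τ
  have hgmax : τ (g - 1) ≤ τ g ∧ τ (g + 1) ≤ τ g := ⟨hgm _, hgm _⟩
  have huniq : ∀ k : ZMod n, (τ (k - 1) ≤ τ k ∧ τ (k + 1) ≤ τ k) → k = g := by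
    intro k hk
    by_contra hne
    exact hcon ⟨k, g, hne, hk, hgmax⟩
  set T := (Finset.range n).filter
    (fun l : ℕ => 0 < τ (g + (l : ZMod n) + 1) - τ (g + (l : ZMod n))) with hT
  by_cases hTne : T.Nonempty
  · -- minimum element of T
    set m := T.min' hTne with hm
    have hmmem : m ∈ T := T.min'_mem hTne
    rw [hT, Finset.mem_filter, Finset.mem_range] at hmmem
    have hm1 : 1 ≤ m := by
      by_contra h0
      have hm0 : m = 0 := by omega
      have := hmmem.2
      rw [hm0] at this
      have e0 : g + ((0:ℕ) : ZMod n) = g := by push_cast; ring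
      rw [e0] at this
      linarith [hgmax.2]
    have hneg : ∀ l : ℕ, l < m → τ (g + (l : ZMod n) + 1) - τ (g + (l : ZMod n)) ≤ 0 := by
      intro l hl
      by_contra hpos'
      push_neg at hpos'
      have hlT : l ∈ T := by
        rw [hT, Finset.mem_filter, Finset.mem_range]
        exact ⟨by omega, hpos'⟩
      have := T.min'_le l hlT
      omega
    have hpos : ∀ l : ℕ, m ≤ l → l < n →
        0 < τ (g + (l : ZMod n) + 1) - τ (g + (l : ZMod n)) := by
      intro l hml
      induction l, hml using Nat.le_induction with
      | base => exact fun _ => hmmem.2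
      | succ l hml IH =>
        intro hln
        have hll : l < n := by omega
        have hdl := IH hll
        set k : ZMod n := g + ((l + 1 : ℕ) : ZMod n) with hk
        have hkg : k ≠ g := by
          rw [hk]
          intro hc
          have : ((l + 1 : ℕ) : ZMod n) = ((0:ℕ) : ZMod n) := by
            push_cast
            have := add_left_cancel (a := g) (b := ((l+1:ℕ) : ZMod n)) (c := 0)
              (by rw [add_zero]; exact_mod_cast hc)
            exact_mod_cast this
          have := natCast_inj_lt (by omega : l + 1 < n) (by omega : 0 < n) this
          omega
        have hnotmax : ¬ (τ (k - 1) ≤ τ k ∧ τ (k + 1) ≤ τ k) := by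
          intro hc; exact hkg (huniq k hc)
        rcases not_and_or.mp hnotmax with hc | hc
        · exfalso
          push_neg at hc
          have e1 : k - 1 = g + (l : ZMod n) := by rw [hk]; push_cast; ring
          have e2 : k = g + (l : ZMod n) + 1 := by rw [hk]; push_cast; ring
          rw [e1, e2] at hc
          linarith
        · push_neg at hc
          have e2 : k = g + ((l + 1 : ℕ) : ZMod n) := hk
          have : 0 < τ (k + 1) - τ k := by linarith
          rw [e2] at this
          exact this
    exact hcore g m hm1 (by omega) hneg hpos
  · -- T empty : τ weakly decreasing all around, second max at g + 1
    have hall : ∀ l : ℕ, l < n → τ (g + (l : ZMod n) + 1) ≤ τ (g + (l : ZMod n)) := by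
      intro l hl
      by_contra hc
      push_neg at hc
      exact hTne ⟨l, by rw [hT, Finset.mem_filter, Finset.mem_range]; exact ⟨hl, by linarith⟩⟩
    have chain : ∀ l : ℕ, 1 ≤ l → l ≤ n → τ (g + (l : ZMod n)) ≤ τ (g + ((1:ℕ) : ZMod n)) := by
      intro l
      induction l with
      | zero => omega
      | succ p IH =>
        intro h1 h2
        rcases Nat.eq_zero_or_pos p with hp0 | hp1
        · subst hp0; norm_num
        · have hstep : τ (g + ((p + 1 : ℕ) : ZMod n)) ≤ τ (g + (p : ZMod n)) := by
            have := hall p (by omega)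
            have e : g + ((p + 1 : ℕ) : ZMod n) = g + (p : ZMod n) + 1 := by push_cast; ring
            rw [e]
            exact this
          exact le_trans hstep (IH (by omega) (by omega))
    have c1 : τ ((g + 1) - 1) ≤ τ (g + 1) := by
      have := chain n (by omega) (le_refl n)
      have e1 : g + ((n:ℕ) : ZMod n) = g := by rw [ZMod.natCast_self]; ring
      have e2 : g + ((1:ℕ) : ZMod n) = g + 1 := by push_cast; ring
      rw [e1, e2] at this
      have e3 : (g + 1) - 1 = g := by ring
      rw [e3]
      exact this
    have c2 : τ ((g + 1) + 1) ≤ τ (g + 1) := by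
      have := hall 1 (by omega)
      have e2 : g + ((1:ℕ) : ZMod n) = g + 1 := by push_cast; ring
      rw [e2] at this
      exact this
    have hne : g + 1 ≠ g := by
      intro hc
      apply hne10
      have := add_left_cancel (a := g) (b := (1 : ZMod n)) (c := 0) (by rw [add_zero]; exact hc)
      exact this
    exact hcon ⟨g + 1, g, hne, ⟨c1, c2⟩, hgmax⟩


end FourVertexAux
end NoLint

/-- In an equilateral convex polygon with `n ≥ 4` vertices, the cyclic
sequence of interior angles has at least two local minima and at least two local maxima. -/
theorem equilateral_convex_polygon_four_angle_extrema (n : ℕ) [NeZero n] (hn : 4 ≤ n)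
    (V : ZMod n → ℂ) (hconv : IsConvexPolygon V)
    (hequi : ∀ i j : ZMod n, dist (V i) (V (i + 1)) = dist (V j) (V (j + 1))) :
    (∃ i j : ZMod n, i ≠ j ∧
      (EuclideanGeometry.angle (V (i - 1)) (V i) (V (i + 1)) ≤
        EuclideanGeometry.angle (V (i - 2)) (V (i - 1)) (V i) ∧
       EuclideanGeometry.angle (V (i - 1)) (V i) (V (i + 1)) ≤
        EuclideanGeometry.angle (V i) (V (i + 1)) (V (i + 2))) ∧
      (EuclideanGeometry.angle (V (j - 1)) (V j) (V (j + 1)) ≤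
        EuclideanGeometry.angle (V (j - 2)) (V (j - 1)) (V j) ∧
       EuclideanGeometry.angle (V (j - 1)) (V j) (V (j + 1)) ≤
        EuclideanGeometry.angle (V j) (V (j + 1)) (V (j + 2)))) ∧
    (∃ i j : ZMod n, i ≠ j ∧
      (EuclideanGeometry.angle (V (i - 2)) (V (i - 1)) (V i) ≤
        EuclideanGeometry.angle (V (i - 1)) (V i) (V (i + 1)) ∧
       EuclideanGeometry.angle (V i) (V (i + 1)) (V (i + 2)) ≤
        EuclideanGeometry.angle (V (i - 1)) (V i) (V (i + 1))) ∧
      (EuclideanGeometry.angle (V (j - 2)) (V (j - 1)) (V j) ≤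
        EuclideanGeometry.angle (V (j - 1)) (V j) (V (j + 1)) ∧
       EuclideanGeometry.angle (V j) (V (j + 1)) (V (j + 2)) ≤
        EuclideanGeometry.angle (V (j - 1)) (V j) (V (j + 1)))) := by
  classical
  open FourVertexAux in
  -- angle rewriting helpers
  have hA : ∀ i : ZMod n, EuclideanGeometry.angle (V (i - 2)) (V (i - 1)) (V i)
      = EuclideanGeometry.angle (V ((i-1) - 1)) (V (i-1)) (V ((i-1) + 1)) := by
    intro i
    rw [show (i : ZMod n) - 1 - 1 = i - 2 by ring, show (i : ZMod n) - 1 + 1 = i by ring]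
  have hB : ∀ i : ZMod n, EuclideanGeometry.angle (V i) (V (i + 1)) (V (i + 2))
      = EuclideanGeometry.angle (V ((i+1) - 1)) (V (i+1)) (V ((i+1) + 1)) := by
    intro i
    rw [show (i : ZMod n) + 1 - 1 = i by ring, show (i : ZMod n) + 1 + 1 = i + 2 by ring]
  have hiff := FourVertexAux.angle_le_iff V hconv hequi hn
  have hd1 := FourVertexAux.hD1 V hconv hequi
  have hd2 := FourVertexAux.hD2 V hconv hequi hn
  constructor
  · -- two local minima of the angles = two local maxima of tau
    have hcoremax : ∀ (g : ZMod n) (m : ℕ), 1 ≤ m → m ≤ n - 1 →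
        (∀ l : ℕ, l < m → FourVertexAux.tau V (g + (l : ZMod n) + 1)
          - FourVertexAux.tau V (g + (l : ZMod n)) ≤ 0) →
        (∀ l : ℕ, m ≤ l → l < n → 0 < FourVertexAux.tau V (g + (l : ZMod n) + 1)
          - FourVertexAux.tau V (g + (l : ZMod n))) → False := by
      intro g m h1 h2 hneg hpos
      exact FourVertexAux.core hn V hconv
        (fun k => FourVertexAux.tau V (k + 1) - FourVertexAux.tau V k)
        hd1 hd2 g m h1 h2 hneg hpos
    obtain ⟨i, j, hij, hi, hj⟩ := FourVertexAux.two_lmax hn (FourVertexAux.tau V) hcoremax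
    refine ⟨i, j, hij, ⟨?_, ?_⟩, ⟨?_, ?_⟩⟩
    · rw [hA i]; exact (hiff i (i - 1)).mpr hi.1
    · rw [hB i]; exact (hiff i (i + 1)).mpr hi.2
    · rw [hA j]; exact (hiff j (j - 1)).mpr hj.1
    · rw [hB j]; exact (hiff j (j + 1)).mpr hj.2
  · -- two local maxima of the angles = two local minima of tau
    have hd1n : ∑ k : ZMod n, (FourVertexAux.tau V k - FourVertexAux.tau V (k + 1)) = 0 := by
      have : ∀ k : ZMod n, FourVertexAux.tau V k - FourVertexAux.tau V (k + 1)
          = -(FourVertexAux.tau V (k + 1) - FourVertexAux.tau V k) := by intro k; ring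
      rw [Finset.sum_congr rfl (fun k _ => this k), Finset.sum_neg_distrib, hd1, neg_zero]
    have hd2n : ∑ k : ZMod n, (FourVertexAux.tau V k - FourVertexAux.tau V (k + 1))
        • (V k + V (k + 1)) = 0 := by
      have : ∀ k : ZMod n, (FourVertexAux.tau V k - FourVertexAux.tau V (k + 1)) • (V k + V (k+1))
          = -((FourVertexAux.tau V (k + 1) - FourVertexAux.tau V k) • (V k + V (k+1))) := by
        intro k; rw [← neg_smul]; congr 1; ring
      rw [Finset.sum_congr rfl (fun k _ => this k), Finset.sum_neg_distrib, hd2, neg_zero]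
    have hcoremin : ∀ (g : ZMod n) (m : ℕ), 1 ≤ m → m ≤ n - 1 →
        (∀ l : ℕ, l < m → (- FourVertexAux.tau V (g + (l : ZMod n) + 1))
          - (- FourVertexAux.tau V (g + (l : ZMod n))) ≤ 0) →
        (∀ l : ℕ, m ≤ l → l < n → 0 < (- FourVertexAux.tau V (g + (l : ZMod n) + 1))
          - (- FourVertexAux.tau V (g + (l : ZMod n)))) → False := by
      intro g m h1 h2 hneg hpos
      apply FourVertexAux.core hn V hconv
        (fun k => FourVertexAux.tau V k - FourVertexAux.tau V (k + 1))
        hd1n hd2n g m h1 h2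
      · intro l hl
        have := hneg l hl
        linarith
      · intro l hl1 hl2
        have := hpos l hl1 hl2
        linarith
    obtain ⟨i, j, hij, hi, hj⟩ := FourVertexAux.two_lmax hn
      (fun k => - FourVertexAux.tau V k) hcoremin
    refine ⟨i, j, hij, ⟨?_, ?_⟩, ⟨?_, ?_⟩⟩
    · rw [hA i]; exact (hiff (i - 1) i).mpr (by linarith [hi.1])
    · rw [hB i]; exact (hiff (i + 1) i).mpr (by linarith [hi.2])
    · rw [hA j]; exact (hiff (j - 1) j).mpr (by linarith [hj.1])
    · rw [hB j]; exact (hiff (j + 1) j).mpr (by linarith [hj.2])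
end

section
/- Let M be a convex polygon with n ≥ 4 vertices whose interior angles are all equal, with side lengths s₁,…,sₙ in cyclic order. Then at least two of the side lengths are local minima of the cyclic sequence (sᵢ ≤ sᵢ₋₁ and sᵢ ≤ sᵢ₊₁) and at least two are local maxima. -/
open Complex Finset Real

lemma sin_sum_formula (t : ℝ) (j : ℕ) :
    Real.sin (t/2) * ∑ m ∈ range j, Real.sin (m * t)
      = Real.sin (j * t / 2) * Real.sin ((j - 1) * t / 2) := by
  induction j with
  | zero => simp
  | succ j ih =>
    rw [Finset.sum_range_succ, mul_add, ih]
    push_cast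
    have h1 : ((j:ℝ) + 1) * t / 2 = (j:ℝ) * t/2 + t/2 := by ring
    have h2 : ((j:ℝ) + 1 - 1) * t / 2 = (j:ℝ) * t/2 := by ring
    have h3 : ((j:ℝ) - 1) * t / 2 = (j:ℝ) * t/2 - t/2 := by ring
    have h4 : (j:ℝ) * t = 2 * ((j:ℝ)*t/2) := by ring
    rw [h1, h2, h3, h4, Real.sin_add, Real.sin_sub, Real.sin_two_mul]
    ring

lemma sin_nonpos_pi_two_pi {x : ℝ} (h1 : π ≤ x) (h2 : x ≤ 2 * π) : Real.sin x ≤ 0 := by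
  have := Real.sin_nonneg_of_nonneg_of_le_pi (x := x - π) (by linarith) (by linarith)
  rw [Real.sin_sub_pi] at this
  linarith

lemma k_eq_one (n k : ℕ) (hn : 4 ≤ n) (hk1 : 1 ≤ k) (hk2 : 2 * k < n)
    (hsum : ∀ (j : ℕ), Real.sin ((2 * π * k / n)/2) * ∑ m ∈ range j, Real.sin (m * (2 * π * k / n))
      = Real.sin (j * (2 * π * k / n) / 2) * Real.sin ((j - 1) * (2 * π * k / n) / 2))
    (hpos : ∀ j : ℕ, 2 ≤ j → j ≤ n - 1 →
      0 < ∑ m ∈ range j, Real.sin (m * (2 * π * k / n))) :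
    k = 1 := by
  by_contra hne
  have hk : 2 ≤ k := by omega
  have hnR : (0:ℝ) < n := by positivity
  obtain ⟨q, hkq, hkq2⟩ : ∃ q, k * q ≤ n - 1 ∧ n - 1 < k * q + k := by
    refine ⟨(n-1)/k, Nat.mul_div_le _ _, ?_⟩
    have h1 := Nat.div_add_mod (n-1) k
    have h2 := Nat.mod_lt (n-1) (show 0 < k by omega)
    omega
  have hq : True := trivial
  have hq2 : 2 ≤ q := by
    have h1 : k * 1 < k * q := by omega
    have := Nat.lt_of_mul_lt_mul_left h1
    omega
  have h2q : 2 * q ≤ k * q := Nat.mul_le_mul_right q hk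
  set j : ℕ := q + 1 with hj
  have hkj : k * j = k * q + k := by rw [hj]; ring
  have hjn : j ≤ n - 1 := by omega
  have hkjn : n ≤ k * j := by omega
  have hkjn2 : k * j < 2 * n := by omega
  set t : ℝ := 2 * π * k / n with ht
  have hP := hpos j (by omega) hjn
  have hF := hsum j
  have hkqR : ((k:ℝ) * q) ≤ n := by exact_mod_cast (by omega : k * q ≤ n)
  have hkjR : (n:ℝ) ≤ k * j := by exact_mod_cast hkjn
  have hkjR2 : ((k:ℝ) * j) ≤ 2 * n := by exact_mod_cast hkjn2.le
  have hkR : (k:ℝ) < n := by exact_mod_cast (by omega : k < n)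
  have hpi := Real.pi_pos
  -- sin(t/2) > 0
  have htpos : 0 < Real.sin (t / 2) := by
    apply Real.sin_pos_of_pos_of_lt_pi
    · rw [ht]; positivity
    · have e : t / 2 = π * ((k:ℝ)/n) := by rw [ht]; ring
      have : (k:ℝ)/n < 1 := (div_lt_one hnR).2 hkR
      rw [e]; nlinarith
  -- sin((j-1)t/2) ≥ 0
  have h2 : 0 ≤ Real.sin (((j:ℝ) - 1) * t / 2) := by
    apply Real.sin_nonneg_of_nonneg_of_le_pi
    · have e : ((j:ℝ) - 1) * t / 2 = π * ((k:ℝ)*q/n) := by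
        rw [ht]; simp only [hj]; push_cast; ring
      rw [e]; positivity
    · have e : ((j:ℝ) - 1) * t / 2 = π * ((k:ℝ)*q/n) := by
        rw [ht]; simp only [hj]; push_cast; ring
      have : (k:ℝ)*q/n ≤ 1 := (div_le_one hnR).2 hkqR
      rw [e]; nlinarith
  -- sin(jt/2) ≤ 0
  have h3 : Real.sin ((j:ℝ) * t / 2) ≤ 0 := by
    apply sin_nonpos_pi_two_pi
    · have e : (j:ℝ) * t / 2 = π * ((k:ℝ)*j/n) := by rw [ht]; ring
      have : (1:ℝ) ≤ (k:ℝ)*j/n := (one_le_div hnR).2 hkjR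
      rw [e]; nlinarith
    · have e : (j:ℝ) * t / 2 = π * ((k:ℝ)*j/n) := by rw [ht]; ring
      have : (k:ℝ)*j/n ≤ 2 := by rw [div_le_iff₀ hnR]; linarith
      rw [e]; nlinarith
  nlinarith

lemma zsum_eq (n : ℕ) [NeZero n] (f : ZMod n → ℂ) :
    ∑ m ∈ range n, f m = ∑ x : ZMod n, f x := by
  apply Finset.sum_nbij' (i := fun (m : ℕ) => (m : ZMod n)) (j := fun (x : ZMod n) => x.val)
  · intro a ha; exact mem_univ _
  · intro a ha; exact mem_range.2 (ZMod.val_lt a)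
  · intro a ha; exact ZMod.val_cast_of_lt (mem_range.1 ha)
  · intro a ha; exact ZMod.natCast_zmod_val a
  · intro a ha; rfl

lemma ofReal_mul_im' (a : ℝ) (z : ℂ) : ((a:ℂ) * z).im = a * z.im := by
  rw [Complex.mul_im, Complex.ofReal_re, Complex.ofReal_im]; ring

lemma trig_key (a b : ℝ) :
    (Real.cos (2*a) - 1) * Real.sin (2*b) - Real.sin (2*a) * (Real.cos (2*b) - 1)
      = 4 * Real.sin a * Real.sin b * Real.sin (b - a) := by
  rw [Real.sin_two_mul, Real.sin_two_mul, Real.cos_two_mul, Real.cos_two_mul, Real.sin_sub]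
  linear_combination (4*Real.sin b*Real.cos b) * (Real.sin_sq_add_cos_sq a)
    - (4*Real.sin a*Real.cos a) * (Real.sin_sq_add_cos_sq b)

set_option maxHeartbeats 1000000 in
lemma key_min (n : ℕ) [NeZero n] (hn : 4 ≤ n) (s : ZMod n → ℝ)
    (hsum : ∑ m ∈ range n, (s m : ℂ) * Complex.exp (2 * π * Complex.I / n) ^ m = 0) :
    ∃ i j : ZMod n, i ≠ j ∧ (s i ≤ s (i-1) ∧ s i ≤ s (i+1)) ∧
      (s j ≤ s (j-1) ∧ s j ≤ s (j+1)) := by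
  set ζ : ℂ := Complex.exp (2 * π * Complex.I / n) with hζ
  have hζn : ζ ^ n = 1 := (Complex.isPrimitiveRoot_exp n (NeZero.ne n)).pow_eq_one
  have hζ0 : ζ ≠ 0 := Complex.exp_ne_zero _
  have hζmod : ∀ a : ℕ, ζ ^ a = ζ ^ (a % n) := by
    intro a
    conv_lhs => rw [← Nat.div_add_mod a n]
    rw [pow_add, pow_mul, hζn, one_pow, one_mul]
  obtain ⟨i₀, -, hmin⟩ := Finset.exists_min_image univ s ⟨0, mem_univ 0⟩
  by_cases hex : ∃ j : ZMod n, j ≠ i₀ ∧ (s j ≤ s (j-1) ∧ s j ≤ s (j+1))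
  · obtain ⟨j, hji, hj⟩ := hex
    exact ⟨i₀, j, (Ne.symm hji), ⟨hmin _ (mem_univ _), hmin _ (mem_univ _)⟩, hj⟩
  exfalso
  push_neg at hex
  set r : ℕ → ℝ := fun m => s (i₀ + m) with hr
  have hr0 : r 0 = s i₀ := by simp [hr]
  have hglob : ∀ m : ℕ, r 0 ≤ r m := by
    intro m; rw [hr0]; exact hmin _ (mem_univ _)
  have hrn : r n = r 0 := by simp [hr, ZMod.natCast_self]
  have hcastne : ∀ i : ℕ, 1 ≤ i → i ≤ n - 1 → ((i : ZMod n) ≠ 0) := by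
    intro i h1 h2 h0
    rw [ZMod.natCast_eq_zero_iff] at h0
    have := Nat.le_of_dvd (by omega) h0
    omega
  have hno : ∀ i : ℕ, 1 ≤ i → i ≤ n - 1 → ¬(r i ≤ r (i-1) ∧ r i ≤ r (i+1)) := by
    intro i h1 h2 hcon
    have hne : i₀ + (i : ZMod n) ≠ i₀ := by
      intro h
      exact hcastne i h1 h2 (by rwa [add_eq_left] at h)
    have e1 : (i₀ + (i:ZMod n)) - 1 = i₀ + ((i-1 : ℕ) : ZMod n) := by
      have : ((i-1 : ℕ) : ZMod n) = (i : ZMod n) - 1 := by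
        have : (i : ℕ) = (i - 1) + 1 := by omega
        rw [this]; push_cast; ring
      rw [this]; ring
    have e2 : (i₀ + (i:ZMod n)) + 1 = i₀ + ((i+1 : ℕ) : ZMod n) := by push_cast; ring
    have := hex (i₀ + i) hne (by rw [e1]; exact hcon.1)
    rw [e2] at this
    exact absurd hcon.2 (not_le.mpr this)
  -- propagation of descents
  have hprop : ∀ m : ℕ, r (m+1) < r m → ∀ d : ℕ, m + d ≤ n - 1 → r (m+d+1) < r (m+d) := by
    intro m hm d
    induction d with
    | zero => intro _; simpa using hm
    | succ d ih =>
      intro hle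
      have ihd := ih (by omega)
      have := hno (m+d+1) (by omega) (by omega)
      rcases not_and_or.mp this with h | h
      · exfalso; apply h
        have e : m+d+1-1 = m+d := by omega
        rw [e]; exact ihd.le
      · have e : m+d+1+1 = m+(d+1)+1 := by omega
        have e2 : m+d+1 = m+(d+1) := by omega
        rw [← e2]; exact not_le.mp h
  -- rotated sum
  have hFsum : ∑ x : ZMod n, (s x : ℂ) * ζ ^ x.val = 0 := by
    rw [← zsum_eq]
    rw [← hsum]
    apply Finset.sum_congr rfl
    intro m hm
    rw [ZMod.val_natCast, ← hζmod]
  have hrsum : ∑ m ∈ range n, (r m : ℂ) * ζ ^ m = 0 := by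
    have hshift : ∑ x : ZMod n, (s (i₀ + x) : ℂ) * ζ ^ (i₀ + x).val = 0 := by
      have := Equiv.sum_comp (Equiv.addLeft i₀) (fun x => (s x : ℂ) * ζ ^ x.val)
      simp only [Equiv.coe_addLeft] at this
      rw [this]
      exact hFsum
    have h2 : ∑ m ∈ range n, (s (i₀ + (m:ZMod n)) : ℂ) * ζ ^ ((i₀ + (m:ZMod n)).val) = 0 := by
      rw [zsum_eq n (fun x => (s (i₀ + x) : ℂ) * ζ ^ (i₀ + x).val)]
      exact hshift
    have h3 : ∀ m : ℕ, ζ ^ ((i₀ + (m:ZMod n)).val) = ζ ^ i₀.val * ζ ^ m := by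
      intro m
      rw [ZMod.val_add, ZMod.val_natCast, ← hζmod, pow_add, ← hζmod]
    have h4 : ∑ m ∈ range n, (r m : ℂ) * ζ ^ m * ζ ^ i₀.val = 0 := by
      rw [← h2]
      apply Finset.sum_congr rfl
      intro m hm
      rw [h3]
      simp only [hr]
      ring
    rw [← Finset.sum_mul] at h4
    rcases mul_eq_zero.mp h4 with h | h
    · exact h
    · exact absurd h (pow_ne_zero _ hζ0)
  classical
  -- first descent
  have hd : ∃ m : ℕ, m ≤ n - 1 ∧ r (m+1) < r m := by
    by_contra hne
    push_neg at hne
    have hasc : ∀ i : ℕ, i ≤ n - 1 → r i ≤ r (i+1) := fun i hi => hne i hi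
    have mono : ∀ d : ℕ, 1 + d ≤ n → r 1 ≤ r (1 + d) := by
      intro d
      induction d with
      | zero => intro _; simp
      | succ d ih =>
        intro hle
        have h1 := ih (by omega)
        have h2 := hasc (1+d) (by omega)
        calc r 1 ≤ r (1+d) := h1
          _ ≤ r (1+d+1) := h2
          _ = r (1+(d+1)) := by rw [show 1+d+1 = 1+(d+1) from by omega]
    have h10 : r 1 ≤ r 0 := by
      have := mono (n-1) (by omega)
      rwa [show 1 + (n-1) = n from by omega, hrn] at this
    exact hno 1 le_rfl (by omega) ⟨by simpa using h10, hasc 1 (by omega)⟩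
  set m : ℕ := Nat.find hd with hmdef
  have hm := Nat.find_spec hd
  rw [← hmdef] at hm
  have hm1 : 1 ≤ m := by
    rcases Nat.eq_zero_or_pos m with h | h
    · exfalso
      have := hm.2
      rw [h] at this
      exact absurd (hglob 1) (by simpa using not_le.mpr this)
    · exact h
  have hasc : ∀ i : ℕ, i < m → r i ≤ r (i+1) := by
    intro i hi
    have := Nat.find_min hd hi
    rw [not_and_or] at this
    rcases this with h | h
    · exact absurd (by omega : i ≤ n - 1) h
    · exact not_lt.mp h
  have hdesc : ∀ l : ℕ, m ≤ l → l ≤ n - 1 → r (l+1) < r l := by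
    intro l h1 h2
    have := hprop m hm.2 (l - m) (by omega)
    rwa [show m + (l-m) = l from by omega] at this
  -- Abel summation with test functional
  set θs : ℝ := π * (2*m+1) / n with hθs
  set qC : ℂ := (starRingEnd ℂ) (Complex.exp ((θs : ℝ) * Complex.I) - 1) with hqC
  set T : ℕ → ℝ := fun i => (qC * (ζ^i - 1)).im with hTdef
  have Tform : ∀ i : ℕ, T i
      = 4 * Real.sin (θs/2) * Real.sin (π*i/n) * Real.sin (π*i/n - θs/2) := by
    intro i
    have hzi : ζ ^ i = Complex.exp (((2*π*i/n : ℝ)) * Complex.I) := by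
      rw [hζ, ← Complex.exp_nat_mul]
      congr 1
      push_cast
      ring
    have key := trig_key (θs/2) (π*i/n)
    rw [show 2*(θs/2) = θs from by ring, show 2*(π*(i:ℝ)/n) = 2*π*i/n from by ring] at key
    rw [hTdef]
    simp only []
    rw [hzi, ← key, hqC]
    simp only [Complex.mul_im, Complex.conj_re, Complex.conj_im, Complex.sub_re,
      Complex.sub_im, Complex.one_re, Complex.one_im, Complex.exp_ofReal_mul_I_re,
      Complex.exp_ofReal_mul_I_im]
    ring
  -- sign facts
  have hπ := Real.pi_pos
  have hnR : (0:ℝ) < n := by positivity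
  have hmle : m ≤ n - 1 := hm.1
  have sθpos : 0 < Real.sin (θs/2) := by
    apply Real.sin_pos_of_pos_of_lt_pi
    · rw [hθs]; positivity
    · rw [hθs]
      have h1 : (2*(m:ℝ)+1) < 2*n := by
        have : (m:ℝ) ≤ (n:ℝ) - 1 := by
          have : (m:ℝ) ≤ ((n-1 : ℕ):ℝ) := by exact_mod_cast hmle
          rw [Nat.cast_sub (by omega)] at this
          simpa using this
        linarith
      rw [show π * (2*(m:ℝ)+1) / n / 2 = π * ((2*(m:ℝ)+1)/(2*n)) from by ring]
      have h2 : (2*(m:ℝ)+1)/(2*n) < 1 := by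
        rw [div_lt_one (by positivity)]
        linarith
      nlinarith
  have hsinj : ∀ j : ℕ, 1 ≤ j → j ≤ n - 1 → 0 < Real.sin (π*j/n) := by
    intro j h1 h2
    apply Real.sin_pos_of_pos_of_lt_pi
    · positivity
    · have : (j:ℝ) < n := by exact_mod_cast (by omega : j < n)
      rw [div_lt_iff₀ hnR] at *
      nlinarith
  have hTneg : ∀ j : ℕ, 1 ≤ j → j ≤ m → T j < 0 := by
    intro j h1 h2
    rw [Tform j]
    have hs1 := hsinj j h1 (by omega)
    have hs2 : Real.sin (π*j/n - θs/2) < 0 := by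
      apply Real.sin_neg_of_neg_of_neg_pi_lt
      · rw [hθs]
        have : (j:ℝ) ≤ m := by exact_mod_cast h2
        rw [show π*(j:ℝ)/n - π * (2*m+1)/n/2 = π * ((2*(j:ℝ) - (2*m+1))/(2*n)) from by ring]
        have hneg : (2*(j:ℝ) - (2*m+1))/(2*n) < 0 := by
          apply div_neg_of_neg_of_pos _ (by positivity)
          linarith
        nlinarith
      · rw [hθs]
        have hjm : (1:ℝ) ≤ j := by exact_mod_cast h1
        have hmn : (m:ℝ) < n := by exact_mod_cast (by omega : m < n)
        rw [show π*(j:ℝ)/n - π * (2*m+1)/n/2 = π * ((2*(j:ℝ) - (2*m+1))/(2*n)) from by ring]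
        have hgt : -1 < (2*(j:ℝ) - (2*m+1))/(2*n) := by
          rw [neg_lt, ← neg_div, div_lt_one (by positivity : (0:ℝ) < 2*n)]
          linarith
        nlinarith
    exact mul_neg_of_pos_of_neg (mul_pos (mul_pos (by norm_num : (0:ℝ)<4) sθpos) hs1) hs2
  have hTpos : ∀ j : ℕ, m+1 ≤ j → j ≤ n - 1 → 0 < T j := by
    intro j h1 h2
    rw [Tform j]
    have hs1 := hsinj j (by omega) h2
    have hs2 : 0 < Real.sin (π*j/n - θs/2) := by
      apply Real.sin_pos_of_pos_of_lt_pi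
      · rw [hθs]
        have hjm : (m:ℝ)+1 ≤ j := by exact_mod_cast h1
        rw [show π*(j:ℝ)/n - π * (2*m+1)/n/2 = π * ((2*(j:ℝ) - (2*m+1))/(2*n)) from by ring]
        have : (0:ℝ) < (2*(j:ℝ) - (2*m+1))/(2*n) := by
          apply div_pos _ (by positivity)
          linarith
        nlinarith
      · rw [hθs]
        have hjn : (j:ℝ) ≤ (n:ℝ) - 1 := by
          have : (j:ℝ) ≤ ((n-1:ℕ):ℝ) := by exact_mod_cast h2
          rw [Nat.cast_sub (by omega)] at this
          simpa using this
        have hm0 : (0:ℝ) ≤ m := by positivity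
        rw [show π*(j:ℝ)/n - π * (2*m+1)/n/2 = π * ((2*(j:ℝ) - (2*m+1))/(2*n)) from by ring]
        have : (2*(j:ℝ) - (2*m+1))/(2*n) < 1 := by
          rw [div_lt_one (by positivity : (0:ℝ) < 2*n)]
          linarith
        nlinarith
    exact mul_pos (mul_pos (mul_pos (by norm_num : (0:ℝ)<4) sθpos) hs1) hs2
  -- Abel summation
  have hT : ∀ i : ℕ, ((qC * (1 - ζ)) * ζ ^ i).im = T i - T (i+1) := by
    intro i
    have e : (qC * (1-ζ)) * ζ^i = qC * (ζ^i - 1) - qC * (ζ^(i+1) - 1) := by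
      rw [pow_succ]; ring
    rw [e, Complex.sub_im]
  have habel0 : ∑ i ∈ range n, r i * (T i - T (i+1)) = 0 := by
    have e1 : ∑ i ∈ range n, r i * (T i - T (i+1))
        = ∑ i ∈ range n, ((qC*(1-ζ)) * ((r i : ℂ) * ζ^i)).im := by
      apply Finset.sum_congr rfl
      intro i _
      rw [← hT i, show (qC*(1-ζ)) * ((r i :ℂ) * ζ^i) = ((r i : ℂ)) * ((qC*(1-ζ)) * ζ^i) from by ring,
        ofReal_mul_im']
    rw [e1, ← Complex.im_sum, ← Finset.mul_sum, hrsum, mul_zero, Complex.zero_im]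
  have T0 : T 0 = 0 := by
    rw [hTdef]
    simp only [pow_zero, sub_self, mul_zero, Complex.zero_im]
  have Tn : T n = 0 := by
    rw [hTdef]
    simp only [hζn, sub_self, mul_zero, Complex.zero_im]
  have habel : ∑ i ∈ range (n-1), (r (i+1) - r i) * T (i+1) = 0 := by
    have hn' : n = (n-1)+1 := by omega
    have e2 : ∑ i ∈ range n, r i * T i = ∑ i ∈ range (n-1), r (i+1) * T (i+1) + r 0 * T 0 := by
      conv_lhs => rw [hn']
      exact Finset.sum_range_succ' _ _
    have e3 : ∑ i ∈ range n, r i * T (i+1) = ∑ i ∈ range (n-1), r i * T (i+1) + r (n-1) * T n := by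
      conv_lhs => rw [hn']
      rw [Finset.sum_range_succ, show n-1+1 = n from by omega]
    have e1 : ∑ i ∈ range n, r i * (T i - T (i+1))
        = ∑ i ∈ range n, r i * T i - ∑ i ∈ range n, r i * T (i+1) := by
      rw [← Finset.sum_sub_distrib]
      apply Finset.sum_congr rfl
      intros; ring
    rw [e1, e2, e3, T0, Tn] at habel0
    have e4 : ∑ i ∈ range (n-1), (r (i+1) - r i) * T (i+1)
        = ∑ i ∈ range (n-1), r (i+1) * T (i+1) - ∑ i ∈ range (n-1), r i * T (i+1) := by
      rw [← Finset.sum_sub_distrib]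
      apply Finset.sum_congr rfl
      intros; ring
    rw [e4]
    linarith [habel0]
  -- all terms nonpositive
  have hterm : ∀ i ∈ range (n-1), (r (i+1) - r i) * T (i+1) ≤ 0 := by
    intro i hi
    rw [mem_range] at hi
    by_cases hc : i + 1 ≤ m
    · have h1 : r i ≤ r (i+1) := hasc i (by omega)
      have h2 : T (i+1) < 0 := hTneg (i+1) (by omega) hc
      nlinarith
    · have h1 : r (i+1) < r i := hdesc i (by omega) (by omega)
      have h2 : 0 < T (i+1) := hTpos (i+1) (by omega) (by omega)
      nlinarith
  have hall := (Finset.sum_eq_zero_iff_of_nonpos hterm).mp habel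
  by_cases hm' : m ≤ n - 2
  · have h0 := hall m (mem_range.2 (by omega))
    have h1 : r (m+1) < r m := hm.2
    have h2 : 0 < T (m+1) := hTpos (m+1) (by omega) (by omega)
    nlinarith
  · have hmn : m = n - 1 := by omega
    have req : ∀ i : ℕ, i ≤ n - 1 → r i = r 0 := by
      intro i
      induction i with
      | zero => intro _; rfl
      | succ i ih =>
        intro hle
        have h0 := hall i (mem_range.2 (by omega))
        have hTne := hTneg (i+1) (by omega) (by omega)
        have : r (i+1) = r i := by
          rcases mul_eq_zero.mp h0 with h | h
          · linarith [sub_eq_zero.mp h]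
          · exact absurd h (ne_of_lt hTne)
        rw [this, ih (by omega)]
    have e5 : r m = r 0 := req m (by omega)
    have e6 : r (m+1) = r 0 := by rw [show m+1 = n from by omega, hrn]
    have := hm.2
    rw [e5, e6] at this
    exact lt_irrefl _ this

lemma complex_match (z₁ z₂ : ℂ) (w₁ w₂ : ℝ) (hw₁ : 0 < w₁) (hw₂ : 0 < w₂)
    (habs₁ : ‖z₁‖ = w₁) (habs₂ : ‖z₂‖ = w₂)
    (him₁ : 0 < z₁.im) (him₂ : 0 < z₂.im)
    (hre : z₁.re / w₁ = z₂.re / w₂) : z₂ * w₁ = z₁ * w₂ := by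
  have h1 : z₁.re ^ 2 + z₁.im ^ 2 = w₁ ^ 2 := by
    have h := Complex.sq_norm z₁
    rw [habs₁, Complex.normSq_apply] at h
    linear_combination -h
  have h2 : z₂.re ^ 2 + z₂.im ^ 2 = w₂ ^ 2 := by
    have h := Complex.sq_norm z₂
    rw [habs₂, Complex.normSq_apply] at h
    linear_combination -h
  have hre' : z₁.re * w₂ = z₂.re * w₁ := by
    rw [div_eq_div_iff (by positivity) (by positivity)] at hre
    exact hre
  have hsq : (z₂.im * w₁)^2 = (z₁.im * w₂)^2 := by
    linear_combination (w₁^2) * h2 - (w₂^2) * h1 + (z₁.re*w₂ + z₂.re*w₁) * hre'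
  have him' : z₂.im * w₁ = z₁.im * w₂ := by
    have hfac : (z₂.im*w₁ - z₁.im*w₂) * (z₂.im*w₁ + z₁.im*w₂) = 0 := by
      linear_combination hsq
    rcases mul_eq_zero.mp hfac with h | h
    · linarith [sub_eq_zero.mp h]
    · nlinarith [mul_pos him₂ hw₁, mul_pos him₁ hw₂]
  apply Complex.ext
  · simp only [Complex.mul_re, Complex.ofReal_re, Complex.ofReal_im]
    linarith [hre']
  · simp only [Complex.mul_im, Complex.ofReal_re, Complex.ofReal_im]
    linarith [him']

lemma hdet_im (u v : ℂ) : planeDet u v = ((starRingEnd ℂ) u * v).im := by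
  simp [planeDet, Complex.mul_im]; ring

lemma exists_rho (n : ℕ) [NeZero n] (hn : 4 ≤ n) (V : ZMod n → ℂ) (hconv : IsConvexPolygon V)
    (hequiang : ∀ i j : ZMod n,
      EuclideanGeometry.angle (V (i - 1)) (V i) (V (i + 1)) =
      EuclideanGeometry.angle (V (j - 1)) (V j) (V (j + 1))) :
    ∃ ρ : ℂ, 0 < ρ.im ∧ ∀ i : ZMod n,
      ((‖V (i+1) - V i‖ : ℝ) : ℂ) * (V (i+1+1) - V (i+1))
        = ((‖V (i+1+1) - V (i+1)‖ : ℝ) : ℂ) * ρ * (V (i+1) - V i) := by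
  have h2ne : ∀ i : ZMod n, i + 2 ≠ i := by
    intro i h
    have h2 : ((2:ℕ) : ZMod n) = 0 := by push_cast; linear_combination h
    rw [ZMod.natCast_eq_zero_iff] at h2
    have := Nat.le_of_dvd (by norm_num) h2
    omega
  have h21ne : ∀ i : ZMod n, i + 2 ≠ i + 1 := by
    intro i h
    have h2 : ((1:ℕ) : ZMod n) = 0 := by push_cast; linear_combination h
    rw [ZMod.natCast_eq_zero_iff] at h2
    have := Nat.le_of_dvd (by norm_num) h2
    omega
  set e : ZMod n → ℂ := fun i => V (i+1) - V i with he
  set s : ZMod n → ℝ := fun i => ‖e i‖ with hsdef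
  set z : ZMod n → ℂ := fun i => (starRingEnd ℂ) (e i) * e (i+1) with hz
  have hdet1 : ∀ i : ZMod n, 0 < (z i).im := by
    intro i
    have h := hconv i (i+2) (h2ne i) (h21ne i)
    rw [hdet_im] at h
    have hv : V (i+2) - V i = e (i+1) + e i := by
      simp only [he]
      rw [show i+1+1 = i+2 from by ring]
      ring
    have hsplit : (starRingEnd ℂ) (V (i + 1) - V i) * (V (i+2) - V i)
        = z i + ((Complex.normSq (e i) : ℝ) : ℂ) := by
      rw [hv, hz]
      have : (starRingEnd ℂ) (e i) * e i = ((Complex.normSq (e i) : ℝ) : ℂ) := by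
        rw [mul_comm, Complex.mul_conj]
      rw [show (starRingEnd ℂ) (V (i + 1) - V i) = (starRingEnd ℂ) (e i) from rfl]
      rw [mul_add, this]
    rw [hsplit, Complex.add_im, Complex.ofReal_im, add_zero] at h
    exact h
  have he0 : ∀ i : ZMod n, e i ≠ 0 := by
    intro i h
    have := hdet1 i
    rw [hz] at this
    simp only [h, map_zero, zero_mul, Complex.zero_im] at this
    exact lt_irrefl _ this
  have spos : ∀ i : ZMod n, 0 < s i := fun i => by
    rw [hsdef]; exact norm_pos_iff.mpr (he0 i)
  have habs : ∀ i : ZMod n, ‖z i‖ = s i * s (i+1) := by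
    intro i
    rw [hz, hsdef]
    simp only [norm_mul, Complex.norm_conj]
  have hcos : ∀ i : ZMod n,
      Real.cos (EuclideanGeometry.angle (V i) (V (i+1)) (V (i+1+1)))
        = -((z i).re) / (s i * s (i+1)) := by
    intro i
    rw [show EuclideanGeometry.angle (V i) (V (i+1)) (V (i+1+1))
        = InnerProductGeometry.angle (V i - V (i+1)) (V (i+1+1) - V (i+1)) from rfl,
      InnerProductGeometry.cos_angle]
    have h1 : V i - V (i+1) = -(e i) := by simp only [he]; ring
    have h2 : V (i+1+1) - V (i+1) = e (i+1) := rfl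
    rw [h1, h2]
    rw [show (inner ℝ (-(e i)) (e (i+1)) : ℝ) = ((starRingEnd ℂ) (-(e i)) * (e (i+1))).re from by rw [Complex.inner, mul_comm]]
    rw [map_neg, neg_mul, Complex.neg_re, norm_neg]
  have hre : ∀ i j : ZMod n, (z i).re / (s i * s (i+1)) = (z j).re / (s j * s (j+1)) := by
    intro i j
    have h := hequiang (i+1) (j+1)
    rw [add_sub_cancel_right, add_sub_cancel_right] at h
    have := congrArg Real.cos h
    rw [hcos i, hcos j] at this
    rw [neg_div, neg_div] at this
    exact neg_injective this
  set ρ : ℂ := z 0 / (((s 0 * s (0+1) : ℝ)) : ℂ) with hρ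
  have hw0 : (0:ℝ) < s 0 * s (0+1) := mul_pos (spos 0) (spos (0+1))
  refine ⟨ρ, ?_, ?_⟩
  · rw [hρ, Complex.div_ofReal_im]
    exact div_pos (hdet1 0) hw0
  · intro i
    show ((s i : ℝ) : ℂ) * e (i+1) = ((s (i+1) : ℝ) : ℂ) * ρ * e i
    have hmatch := complex_match (z 0) (z i) (s 0 * s (0+1)) (s i * s (i+1)) hw0
      (mul_pos (spos i) (spos (i+1))) (habs 0) (habs i) (hdet1 0) (hdet1 i) (hre 0 i)
    have hzi : z i = ρ * ((s i * s (i+1) : ℝ) : ℂ) := by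
      rw [hρ, div_mul_eq_mul_div, eq_div_iff (Complex.ofReal_ne_zero.mpr (ne_of_gt hw0))]
      exact hmatch
    have hkey : e i * z i = (((s i)^2 : ℝ) : ℂ) * e (i+1) := by
      rw [show z i = (starRingEnd ℂ) (e i) * e (i+1) from rfl]
      rw [← mul_assoc, Complex.mul_conj]
      congr 1
      rw [Complex.normSq_eq_norm_sq]
    have hfin : ((s i : ℝ) : ℂ) * (((s i : ℝ):ℂ) * e (i+1))
        = ((s i : ℝ) : ℂ) * (((s (i+1) : ℝ):ℂ) * ρ * e i) := by
      calc ((s i : ℝ):ℂ) * (((s i : ℝ):ℂ) * e (i+1)) = (((s i)^2 : ℝ):ℂ) * e (i+1) := by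
            push_cast; ring
        _ = e i * z i := hkey.symm
        _ = e i * (ρ * ((s i * s (i+1) : ℝ) : ℂ)) := by rw [hzi]
        _ = ((s i : ℝ):ℂ) * (((s (i+1) : ℝ):ℂ) * ρ * e i) := by push_cast; ring
    exact mul_left_cancel₀ (Complex.ofReal_ne_zero.mpr (ne_of_gt (spos i))) hfin

lemma aux_e0 (n : ℕ) [NeZero n] (hn : 4 ≤ n) (V : ZMod n → ℂ) (hconv : IsConvexPolygon V)
    (i : ZMod n) : V (i+1) - V i ≠ 0 := by
  intro h0
  have h2ne : i + 2 ≠ i := by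
    intro h
    have h2 : ((2:ℕ) : ZMod n) = 0 := by push_cast; linear_combination h
    rw [ZMod.natCast_eq_zero_iff] at h2
    have := Nat.le_of_dvd (by norm_num) h2
    omega
  have h21ne : i + 2 ≠ i + 1 := by
    intro h
    have h2 : ((1:ℕ) : ZMod n) = 0 := by push_cast; linear_combination h
    rw [ZMod.natCast_eq_zero_iff] at h2
    have := Nat.le_of_dvd (by norm_num) h2
    omega
  have h := hconv i (i+2) h2ne h21ne
  rw [hdet_im, h0] at h
  simp at h

set_option maxHeartbeats 1000000 in
/-- In an equiangular convex polygon with `n ≥ 4` vertices, the cyclic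
sequence of side lengths has at least two local minima and at least two local maxima. -/
theorem equiangular_convex_polygon_four_side_extrema (n : ℕ) [NeZero n] (hn : 4 ≤ n)
    (V : ZMod n → ℂ) (hconv : IsConvexPolygon V)
    (hequiang : ∀ i j : ZMod n,
      EuclideanGeometry.angle (V (i - 1)) (V i) (V (i + 1)) =
      EuclideanGeometry.angle (V (j - 1)) (V j) (V (j + 1))) :
    (∃ i j : ZMod n, i ≠ j ∧
      (dist (V i) (V (i + 1)) ≤ dist (V (i - 1)) (V i) ∧
       dist (V i) (V (i + 1)) ≤ dist (V (i + 1)) (V (i + 2))) ∧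
      (dist (V j) (V (j + 1)) ≤ dist (V (j - 1)) (V j) ∧
       dist (V j) (V (j + 1)) ≤ dist (V (j + 1)) (V (j + 2)))) ∧
    (∃ i j : ZMod n, i ≠ j ∧
      (dist (V (i - 1)) (V i) ≤ dist (V i) (V (i + 1)) ∧
       dist (V (i + 1)) (V (i + 2)) ≤ dist (V i) (V (i + 1))) ∧
      (dist (V (j - 1)) (V j) ≤ dist (V j) (V (j + 1)) ∧
       dist (V (j + 1)) (V (j + 2)) ≤ dist (V j) (V (j + 1)))) := by
  set e : ZMod n → ℂ := fun i => V (i+1) - V i with he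
  set s : ZMod n → ℝ := fun i => ‖V (i+1) - V i‖ with hsdef
  obtain ⟨ρ, hρim, hstep⟩ := exists_rho n hn V hconv hequiang
  have hstep' : ∀ i : ZMod n, ((s i : ℝ) : ℂ) * e (i+1) = ((s (i+1) : ℝ) : ℂ) * ρ * e i := hstep
  have he0 : ∀ i : ZMod n, e i ≠ 0 := fun i => aux_e0 n hn V hconv i
  have spos : ∀ i : ZMod n, 0 < s i := fun i => norm_pos_iff.mpr (he0 i)
  have hsne : ∀ i : ZMod n, ((s i : ℝ) : ℂ) ≠ 0 :=
    fun i => Complex.ofReal_ne_zero.mpr (ne_of_gt (spos i))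
  have hpow : ∀ (i : ZMod n) (p : ℕ),
      ((s i : ℝ) : ℂ) * e (i + (p : ZMod n)) = ((s (i + (p:ZMod n)) : ℝ) : ℂ) * ρ^p * e i := by
    intro i p
    induction p with
    | zero => simp
    | succ p ih =>
      have hc : ((p+1 : ℕ) : ZMod n) = (p : ZMod n) + 1 := by push_cast; ring
      rw [hc, ← add_assoc]
      apply mul_left_cancel₀ (hsne (i + (p:ZMod n)))
      calc ((s (i + (p:ZMod n)) : ℝ):ℂ) * (((s i : ℝ):ℂ) * e (i + (p:ZMod n) + 1))
          = ((s i : ℝ):ℂ) * (((s (i + (p:ZMod n)) : ℝ):ℂ) * e ((i + (p:ZMod n)) + 1)) := by ring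
        _ = ((s i : ℝ):ℂ) * (((s ((i + (p:ZMod n)) + 1) : ℝ):ℂ) * ρ * e (i + (p:ZMod n))) := by
            rw [hstep' (i + (p:ZMod n))]
        _ = ((s ((i + (p:ZMod n)) + 1) : ℝ):ℂ) * ρ * (((s i : ℝ):ℂ) * e (i + (p:ZMod n))) := by
            ring
        _ = ((s ((i + (p:ZMod n)) + 1) : ℝ):ℂ) * ρ * (((s (i + (p:ZMod n)) : ℝ):ℂ) * ρ^p * e i) := by
            rw [ih]
        _ = ((s (i + (p:ZMod n)) : ℝ):ℂ) * (((s (i + (p:ZMod n) + 1) : ℝ):ℂ) * ρ^(p+1) * e i) := by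
            rw [pow_succ]; ring
  have hρn : ρ^n = 1 := by
    have h := hpow 0 n
    rw [ZMod.natCast_self, add_zero] at h
    have h2 : ((s 0 : ℝ):ℂ) * (e 0 * 1) = ((s 0 : ℝ):ℂ) * (e 0 * ρ^n) := by
      rw [mul_one, h]; ring
    have h3 := mul_left_cancel₀ (hsne 0) h2
    exact (mul_left_cancel₀ (he0 0) h3).symm
  have htel : ∑ p ∈ range n, e (p : ZMod n) = 0 := by
    have hterm : ∀ p : ℕ, V (((p+1:ℕ)) : ZMod n) - V ((p : ℕ) : ZMod n) = e ((p:ℕ) : ZMod n) := by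
      intro p
      rw [show (((p+1:ℕ)) : ZMod n) = ((p:ℕ) : ZMod n) + 1 from by push_cast; ring]
    calc ∑ p ∈ range n, e ((p:ℕ) : ZMod n)
        = ∑ p ∈ range n, (V (((p+1:ℕ)) : ZMod n) - V ((p:ℕ) : ZMod n)) := by
          apply Finset.sum_congr rfl
          intro p _
          rw [hterm p]
      _ = V ((n:ℕ) : ZMod n) - V ((0:ℕ) : ZMod n) :=
          Finset.sum_range_sub (fun p : ℕ => V ((p : ℕ) : ZMod n)) n
      _ = 0 := by rw [ZMod.natCast_self, Nat.cast_zero, sub_self]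
  have hssum : ∑ p ∈ range n, ((s ((p:ℕ) : ZMod n) : ℝ):ℂ) * ρ^p = 0 := by
    have h1 : ((s 0 : ℝ):ℂ) * ∑ p ∈ range n, e ((p:ℕ):ZMod n)
        = (∑ p ∈ range n, ((s ((p:ℕ):ZMod n) : ℝ):ℂ) * ρ^p) * e 0 := by
      rw [Finset.mul_sum, Finset.sum_mul]
      apply Finset.sum_congr rfl
      intro p _
      have h := hpow 0 p
      rw [zero_add] at h
      exact h
    rw [htel, mul_zero] at h1
    rcases mul_eq_zero.mp h1.symm with h | h
    · exact h
    · exact absurd h (he0 0)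
  have hVtel : ∀ (i : ZMod n) (j : ℕ),
      V (i + (j : ZMod n)) - V i = ∑ p ∈ range j, e (i + (p : ZMod n)) := by
    intro i j
    have hterm : ∀ p : ℕ, V (i + ((p+1:ℕ) : ZMod n)) - V (i + ((p:ℕ) : ZMod n))
        = e (i + ((p:ℕ):ZMod n)) := by
      intro p
      rw [show (((p+1:ℕ)) : ZMod n) = ((p:ℕ) : ZMod n) + 1 from by push_cast; ring,
        ← add_assoc]
    calc V (i + (j : ZMod n)) - V i
        = V (i + ((j:ℕ) : ZMod n)) - V (i + ((0:ℕ) : ZMod n)) := by rw [Nat.cast_zero, add_zero]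
      _ = ∑ p ∈ range j, (V (i + ((p+1:ℕ) : ZMod n)) - V (i + ((p:ℕ) : ZMod n))) :=
          (Finset.sum_range_sub (fun p : ℕ => V (i + ((p:ℕ) : ZMod n))) j).symm
      _ = ∑ p ∈ range j, e (i + ((p:ℕ):ZMod n)) := by
          apply Finset.sum_congr rfl
          intro p _
          rw [hterm p]
  have hjne0 : ∀ (j : ℕ), 2 ≤ j → j ≤ n - 1 → ((j : ZMod n) ≠ 0) := by
    intro j h2 hj h0
    rw [ZMod.natCast_eq_zero_iff] at h0
    have := Nat.le_of_dvd (by omega) h0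
    omega
  have hjne1 : ∀ (j : ℕ), 2 ≤ j → j ≤ n - 1 → ((j : ZMod n) ≠ 1) := by
    intro j h2 hj h0
    have h1 : ((j - 1 : ℕ) : ZMod n) = 0 := by
      have hjw : (j : ℕ) = (j-1) + 1 := by omega
      rw [hjw] at h0
      push_cast at h0
      linear_combination h0
    rw [ZMod.natCast_eq_zero_iff] at h1
    have := Nat.le_of_dvd (by omega) h1
    omega
  have hconvsum : ∀ (j : ℕ), 2 ≤ j → j ≤ n - 1 → ∀ i : ZMod n,
      0 < ∑ p ∈ range j, s (i + (p : ZMod n)) * (ρ^p).im := by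
    intro j h2 hj i
    have hne1 : i + (j : ZMod n) ≠ i := by
      intro h
      exact hjne0 j h2 hj (by rwa [add_eq_left] at h)
    have hne2 : i + (j : ZMod n) ≠ i + 1 := by
      intro h
      exact hjne1 j h2 hj (add_left_cancel h)
    have h := hconv i (i + (j : ZMod n)) hne1 hne2
    rw [hdet_im] at h
    have hmul : ((s i : ℝ):ℂ) * ((starRingEnd ℂ) (V (i + 1) - V i) * (V (i + (j:ZMod n)) - V i))
        = (((s i)^2 : ℝ):ℂ) * ∑ p ∈ range j, ((s (i + (p:ZMod n)) : ℝ):ℂ) * ρ^p := by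
      rw [hVtel i j, Finset.mul_sum, Finset.mul_sum, Finset.mul_sum]
      apply Finset.sum_congr rfl
      intro p _
      calc ((s i : ℝ):ℂ) * ((starRingEnd ℂ) (V (i+1) - V i) * e (i + (p:ZMod n)))
          = (starRingEnd ℂ) (e i) * (((s i : ℝ):ℂ) * e (i + (p:ZMod n))) := by ring
        _ = (starRingEnd ℂ) (e i) * (((s (i + (p:ZMod n)) : ℝ):ℂ) * ρ^p * e i) := by
            rw [hpow i p]
        _ = ((starRingEnd ℂ) (e i) * e i) * (((s (i + (p:ZMod n)) : ℝ):ℂ) * ρ^p) := by ring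
        _ = (((s i)^2 : ℝ):ℂ) * (((s (i + (p:ZMod n)) : ℝ):ℂ) * ρ^p) := by
            rw [mul_comm ((starRingEnd ℂ) (e i)) (e i), Complex.mul_conj]
            congr 2
            rw [Complex.normSq_eq_norm_sq]
    have him := congrArg Complex.im hmul
    rw [ofReal_mul_im', ofReal_mul_im', Complex.im_sum] at him
    have him2 : ∑ p ∈ range j, (((s (i + (p:ZMod n)) : ℝ):ℂ) * ρ^p).im
        = ∑ p ∈ range j, s (i + (p:ZMod n)) * (ρ^p).im := by
      apply Finset.sum_congr rfl
      intro p _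
      rw [ofReal_mul_im']
    rw [him2] at him
    have hlhs : 0 < s i * ((starRingEnd ℂ) (V (i + 1) - V i) * (V (i + (j:ZMod n)) - V i)).im :=
      mul_pos (spos i) h
    rw [him] at hlhs
    by_contra hcon
    push_neg at hcon
    nlinarith [sq_nonneg (s i)]
  have havg : ∀ (j : ℕ), 2 ≤ j → j ≤ n - 1 → 0 < ∑ p ∈ range j, (ρ^p).im := by
    intro j h2 hj
    have hpos : 0 < ∑ i : ZMod n, ∑ p ∈ range j, s (i + (p:ZMod n)) * (ρ^p).im :=
      Finset.sum_pos (fun i _ => hconvsum j h2 hj i) ⟨0, mem_univ 0⟩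
    rw [Finset.sum_comm] at hpos
    have hshift : ∀ p : ℕ, ∑ i : ZMod n, s (i + (p:ZMod n)) = ∑ i : ZMod n, s i := by
      intro p
      have h := Equiv.sum_comp (Equiv.addRight ((p : ZMod n))) s
      simp only [Equiv.coe_addRight] at h
      exact h
    have heq : ∑ p ∈ range j, ∑ i : ZMod n, s (i + (p:ZMod n)) * (ρ^p).im
        = (∑ i : ZMod n, s i) * ∑ p ∈ range j, (ρ^p).im := by
      rw [Finset.mul_sum]
      apply Finset.sum_congr rfl
      intro p _
      rw [← Finset.sum_mul, hshift p]
    rw [heq] at hpos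
    have hS : 0 < ∑ i : ZMod n, s i := Finset.sum_pos (fun i _ => spos i) ⟨0, mem_univ 0⟩
    by_contra hcon
    push_neg at hcon
    nlinarith
  obtain ⟨k, hklt, hkρ⟩ := (Complex.isPrimitiveRoot_exp n (by omega)).eq_pow_of_pow_eq_one hρn
  have hρp : ∀ p : ℕ, (ρ^p).im = Real.sin (p * (2*π*k/n)) := by
    intro p
    rw [← hkρ, ← pow_mul]
    rw [show Complex.exp (2*π*Complex.I/(n:ℂ)) ^ (k*p)
        = Complex.exp ((((p * (2*π*(k:ℝ)/(n:ℝ))) : ℝ)) * Complex.I) from ?_]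
    · exact Complex.exp_ofReal_mul_I_im _
    · rw [← Complex.exp_nat_mul]
      congr 1
      have hne : (n:ℂ) ≠ 0 := by
        exact_mod_cast Nat.cast_ne_zero.mpr (by omega : n ≠ 0)
      push_cast
      ring
  have hsin1 : 0 < Real.sin (2*π*k/n) := by
    have h := hρim
    rw [show ρ = ρ^1 from (pow_one ρ).symm, hρp 1] at h
    rwa [show ((1:ℕ):ℝ) * (2*π*k/n) = 2*π*k/n from by push_cast; ring] at h
  have hk1 : 1 ≤ k := by
    rcases Nat.eq_zero_or_pos k with h | h
    · exfalso
      rw [h] at hsin1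
      norm_num at hsin1
    · omega
  have hnR : (0:ℝ) < n := by positivity
  have hπ := Real.pi_pos
  have hk2 : 2*k < n := by
    by_contra hcon
    push_neg at hcon
    have hkn : (k:ℝ) < n := by exact_mod_cast hklt
    have hnk : (n:ℝ) ≤ 2*k := by exact_mod_cast hcon
    have hle : Real.sin (2*π*k/n) ≤ 0 := by
      apply sin_nonpos_pi_two_pi
      · rw [show 2*π*(k:ℝ)/n = π * ((2*k)/n) from by ring]
        have : (1:ℝ) ≤ (2*(k:ℝ))/n := by
          rw [le_div_iff₀ hnR]; linarith
        nlinarith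
      · rw [show 2*π*(k:ℝ)/n = π * ((2*k)/n) from by ring]
        have : (2*(k:ℝ))/n ≤ 2 := by
          rw [div_le_iff₀ hnR]; linarith
        nlinarith
    linarith
  have hkone : k = 1 := by
    apply k_eq_one n k hn hk1 hk2 (fun j => sin_sum_formula _ j)
    intro j h2 hj
    have h := havg j h2 hj
    calc (0:ℝ) < ∑ p ∈ range j, (ρ^p).im := h
      _ = ∑ m ∈ range j, Real.sin (m * (2*π*k/n)) := by
          apply Finset.sum_congr rfl
          intro p _
          exact hρp p
  have hρζ : ρ = Complex.exp (2*π*Complex.I/n) := by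
    rw [← hkρ, hkone, pow_one]
  have hs1 : ∑ m ∈ range n, ((s ((m:ℕ) : ZMod n) : ℝ) : ℂ) * Complex.exp (2*π*Complex.I/(n:ℂ)) ^ m = 0 := by
    rw [← hρζ]
    exact hssum
  obtain ⟨i1, j1, hij1, h1a, h1b⟩ := key_min n hn s hs1
  have hs2 : ∑ m ∈ range n, (((fun i => -(s i)) ((m:ℕ) : ZMod n) : ℝ) : ℂ) * Complex.exp (2*π*Complex.I/(n:ℂ)) ^ m = 0 := by
    have : ∀ m : ℕ, (((-(s ((m:ℕ):ZMod n)) : ℝ)) : ℂ) * Complex.exp (2*π*Complex.I/(n:ℂ)) ^ m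
        = -(((s ((m:ℕ):ZMod n) : ℝ):ℂ) * Complex.exp (2*π*Complex.I/(n:ℂ)) ^ m) := by
      intro m; push_cast; ring
    calc ∑ m ∈ range n, (((fun i => -(s i)) ((m:ℕ) : ZMod n) : ℝ) : ℂ) * Complex.exp (2*π*Complex.I/(n:ℂ)) ^ m
        = ∑ m ∈ range n, -(((s ((m:ℕ):ZMod n) : ℝ):ℂ) * Complex.exp (2*π*Complex.I/(n:ℂ)) ^ m) := by
          apply Finset.sum_congr rfl
          intro m _
          exact this m
      _ = -∑ m ∈ range n, ((s ((m:ℕ):ZMod n) : ℝ):ℂ) * Complex.exp (2*π*Complex.I/(n:ℂ)) ^ m := by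
          rw [Finset.sum_neg_distrib]
      _ = 0 := by rw [hs1, neg_zero]
  obtain ⟨i2, j2, hij2, h2a, h2b⟩ := key_min n hn (fun i => -(s i)) hs2
  have hdist : ∀ a : ZMod n, dist (V a) (V (a+1)) = s a := by
    intro a
    rw [dist_eq_norm, norm_sub_rev]
  have hdist' : ∀ a : ZMod n, dist (V (a-1)) (V a) = s (a-1) := by
    intro a
    have h := hdist (a-1)
    rwa [sub_add_cancel] at h
  have hdist'' : ∀ a : ZMod n, dist (V (a+1)) (V (a+2)) = s (a+1) := by
    intro a
    have h := hdist (a+1)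
    rwa [show a+1+1 = a+2 from by ring] at h
  constructor
  · refine ⟨i1, j1, hij1, ?_, ?_⟩
    · rw [hdist, hdist', hdist'']
      exact h1a
    · rw [hdist, hdist', hdist'']
      exact h1b
  · refine ⟨i2, j2, hij2, ?_, ?_⟩
    · rw [hdist, hdist', hdist'']
      constructor
      · have := h2a.1
        simp only [neg_le_neg_iff] at this
        linarith [this]
      · have := h2a.2
        simp only [neg_le_neg_iff] at this
        linarith [this]
    · rw [hdist, hdist', hdist'']
      constructor
      · have := h2b.1
        simp only [neg_le_neg_iff] at this
        linarith [this]
      · have := h2b.2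
        simp only [neg_le_neg_iff] at this
        linarith [this]
end

section
/- Let M = A₁…Aₙ be a convex n-gon in the plane with n > 3 such that no four of its vertices lie on a common circle. For each i let Cᵢ be the circle through A_{i−1}, Aᵢ, A_{i+1} (indices mod n). Call Cᵢ empty if all other vertices of M lie strictly outside Cᵢ and full if they all lie strictly inside. Then at least two of the circles Cᵢ are empty and at least two are full. -/
/-- No four vertices of the family `V` lie on a common circle. -/
def NoFourConcyclic {n : ℕ} [NeZero n] (V : ZMod n → ℂ) : Prop :=
  ∀ (O : ℂ) (r : ℝ), Set.ncard {i : ZMod n | dist O (V i) = r} ≤ 3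

/-- The circle through the three consecutive vertices `V (i-1), V i, V (i+1)` is *empty*:
all other vertices lie strictly outside it. -/
def EmptyNbrCircle {n : ℕ} (V : ZMod n → ℂ) (i : ZMod n) : Prop :=
  ∃ (O : ℂ) (r : ℝ), dist O (V (i - 1)) = r ∧ dist O (V i) = r ∧ dist O (V (i + 1)) = r ∧
    ∀ j : ZMod n, j ≠ i - 1 → j ≠ i → j ≠ i + 1 → r < dist O (V j)

/-- The circle through the three consecutive vertices `V (i-1), V i, V (i+1)` is *full*:
all other vertices lie strictly inside it. -/
def FullNbrCircle {n : ℕ} (V : ZMod n → ℂ) (i : ZMod n) : Prop :=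
  ∃ (O : ℂ) (r : ℝ), dist O (V (i - 1)) = r ∧ dist O (V i) = r ∧ dist O (V (i + 1)) = r ∧
    ∀ j : ZMod n, j ≠ i - 1 → j ≠ i → j ≠ i + 1 → dist O (V j) < r

noncomputable def pw (O a x : ℂ) : ℝ := Complex.normSq (x - O) - Complex.normSq (a - O)

lemma pw_dist (O a x : ℂ) : pw O a x = dist O x ^ 2 - dist O a ^ 2 := by
  rw [pw, Complex.dist_eq, Complex.dist_eq, ← Complex.sq_norm, ← Complex.sq_norm,
    norm_sub_rev O x, norm_sub_rev O a]

lemma pw_zero_iff (O a x : ℂ) : pw O a x = 0 ↔ dist O x = dist O a := by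
  rw [pw_dist]
  constructor
  · intro h
    have h1 : dist O x ^ 2 = dist O a ^ 2 := by linarith
    calc dist O x = Real.sqrt (dist O x ^ 2) := (Real.sqrt_sq dist_nonneg).symm
      _ = Real.sqrt (dist O a ^ 2) := by rw [h1]
      _ = dist O a := Real.sqrt_sq dist_nonneg
  · intro h; rw [h]; ring

lemma pw_pos_iff (O a x : ℂ) : 0 < pw O a x ↔ dist O a < dist O x := by
  rw [pw_dist]
  constructor
  · intro h
    nlinarith [dist_nonneg (x := O) (y := x), dist_nonneg (x := O) (y := a)]
  · intro h
    nlinarith [dist_nonneg (x := O) (y := a)]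

lemma pw_neg_iff (O a x : ℂ) : pw O a x < 0 ↔ dist O x < dist O a := by
  rw [pw_dist]
  constructor
  · intro h
    nlinarith [dist_nonneg (x := O) (y := x), dist_nonneg (x := O) (y := a)]
  · intro h
    nlinarith [dist_nonneg (x := O) (y := x)]

lemma pw_rebase (O a b x : ℂ) : pw O b x = pw O a x - pw O a b := by
  simp only [pw]; ring

lemma pw_self (O a : ℂ) : pw O a a = 0 := by simp [pw]

lemma pw_shift (O a x u : ℂ) (t : ℝ) :
    pw (O + (t : ℂ) * (Complex.I * u)) a x = pw O a x - 2 * t * planeDet u (x - a) := by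
  simp [pw, planeDet, Complex.normSq_apply]
  ring

lemma planeDet_self (u : ℂ) : planeDet u u = 0 := by simp [planeDet]; ring

lemma planeDet_flip (x y z : ℂ) : planeDet (x - y) (z - y) = - planeDet (y - x) (z - x) := by
  simp [planeDet]; ring

lemma cast_injOn {n : ℕ} [NeZero n] (a : ZMod n) {m₁ m₂ : ℕ} (h₁ : m₁ < n) (h₂ : m₂ < n)
    (h : a + (m₁ : ZMod n) = a + (m₂ : ZMod n)) : m₁ = m₂ := by
  have := add_left_cancel h
  have := congrArg ZMod.val this
  rwa [ZMod.val_cast_of_lt h₁, ZMod.val_cast_of_lt h₂] at this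

lemma ne_of_idx {n : ℕ} [NeZero n] (a : ZMod n) {m₁ m₂ : ℕ} (h₁ : m₁ < n) (h₂ : m₂ < n)
    (h : m₁ ≠ m₂) : a + (m₁ : ZMod n) ≠ a + (m₂ : ZMod n) :=
  fun hc => h (cast_injOn a h₁ h₂ hc)

lemma idx_ne_base {n : ℕ} [NeZero n] (a : ZMod n) {m : ℕ} (h0 : 0 < m) (h : m < n) :
    a + (m : ZMod n) ≠ a := by
  nth_rewrite 2 [show a = a + ((0 : ℕ) : ZMod n) by simp]
  exact ne_of_idx a h (by omega) (by omega)

lemma add_cast_add {n : ℕ} (a : ZMod n) (m₁ m₂ : ℕ) :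
    a + (m₁ : ZMod n) + (m₂ : ZMod n) = a + ((m₁ + m₂ : ℕ) : ZMod n) := by
  push_cast; ring

lemma idx_repr {n : ℕ} [NeZero n] (a j : ZMod n) : j = a + ((j - a).val : ZMod n) := by
  rw [ZMod.natCast_val, ZMod.cast_id]
  ring

lemma four_circle {n : ℕ} [NeZero n] {V : ZMod n → ℂ} (hgen : NoFourConcyclic V)
    (O : ℂ) (i₁ i₂ i₃ i₄ : ZMod n)
    (h12 : i₁ ≠ i₂) (h13 : i₁ ≠ i₃) (h14 : i₁ ≠ i₄) (h23 : i₂ ≠ i₃) (h24 : i₂ ≠ i₄)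
    (h34 : i₃ ≠ i₄)
    (d2 : dist O (V i₂) = dist O (V i₁)) (d3 : dist O (V i₃) = dist O (V i₁))
    (d4 : dist O (V i₄) = dist O (V i₁)) : False := by
  set r := dist O (V i₁) with hr
  have hsub : ({i₁, i₂, i₃, i₄} : Set (ZMod n)) ⊆ {i : ZMod n | dist O (V i) = r} := by
    intro x hx
    simp only [Set.mem_insert_iff, Set.mem_singleton_iff] at hx
    rcases hx with rfl | rfl | rfl | rfl <;> simp [Set.mem_setOf_eq, d2, d3, d4, hr]
  have h4 : ({i₁, i₂, i₃, i₄} : Set (ZMod n)).ncard = 4 := by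
    rw [Set.ncard_insert_of_notMem (by simp [h12, h13, h14]),
      Set.ncard_insert_of_notMem (by simp [h23, h24]),
      Set.ncard_insert_of_notMem (by simp [h34]), Set.ncard_singleton]
  have hle := Set.ncard_le_ncard hsub (Set.toFinite _)
  have := hgen O r
  omega

lemma conv_chord {n : ℕ} [NeZero n] (V : ZMod n → ℂ) (hconv : IsConvexPolygon V) :
    ∀ ℓ : ℕ, ∀ a : ZMod n, ∀ m : ℕ, 0 < m → m < ℓ → ℓ < n →
      planeDet (V (a + (ℓ : ZMod n)) - V a) (V (a + (m : ZMod n)) - V a) < 0 := by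
  intro ℓ
  induction ℓ using Nat.strong_induction_on with
  | _ ℓ ih =>
    intro a m hm0 hmℓ hℓn
    have hℓ2 : 2 ≤ ℓ := by omega
    have ha0 : a = a + ((0 : ℕ) : ZMod n) := by simp
    have ha1 : a + 1 = a + ((1 : ℕ) : ZMod n) := by simp
    have hcast : ((ℓ - 1 : ℕ) : ZMod n) = ((ℓ : ℕ) : ZMod n) - 1 := by
      push_cast [Nat.cast_sub (by omega : 1 ≤ ℓ)]; ring
    have hc1 : (a + ((ℓ - 1 : ℕ) : ZMod n)) + 1 = a + ((ℓ : ℕ) : ZMod n) := by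
      rw [hcast]; ring
    have hKa : a + ((ℓ : ℕ) : ZMod n) ≠ a := by
      nth_rewrite 2 [ha0]; exact ne_of_idx a (by omega) (by omega) (by omega)
    have hKa1 : a + ((ℓ : ℕ) : ZMod n) ≠ a + 1 := by
      rw [ha1]; exact ne_of_idx a (by omega) (by omega) (by omega)
    rcases eq_or_lt_of_le (Nat.one_le_iff_ne_zero.mpr (by omega) : 1 ≤ m) with hm1 | hm1
    · -- m = 1 : use edge at a
      have hedge := hconv a (a + ((ℓ : ℕ) : ZMod n)) hKa hKa1
      rw [← hm1, Nat.cast_one]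
      simp only [planeDet] at hedge ⊢
      linarith
    · rcases eq_or_lt_of_le (by omega : m + 1 ≤ ℓ) with hml | hml
      · -- m = ℓ - 1 : use edge at a + (ℓ-1)
        have hmval : m = ℓ - 1 := by omega
        subst hmval
        have h₁ : a ≠ a + ((ℓ - 1 : ℕ) : ZMod n) := by
          nth_rewrite 1 [ha0]; exact ne_of_idx a (by omega) (by omega) (by omega)
        have h₂ : a ≠ (a + ((ℓ - 1 : ℕ) : ZMod n)) + 1 := by
          rw [hc1]; exact hKa.symm
        have hedge := hconv (a + ((ℓ - 1 : ℕ) : ZMod n)) a h₁ h₂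
        rw [hc1] at hedge
        simp only [planeDet, Complex.sub_re, Complex.sub_im] at hedge ⊢
        linarith
      · -- middle case
        have hℓ4 : 4 ≤ ℓ := by omega
        have hJK : a + ((m : ℕ) : ZMod n) ≠ a + ((ℓ : ℕ) : ZMod n) :=
          ne_of_idx a (by omega) (by omega) (by omega)
        have h1 := hconv a (a + ((ℓ : ℕ) : ZMod n)) hKa hKa1
        have hCa : a ≠ a + ((ℓ - 1 : ℕ) : ZMod n) := by
          nth_rewrite 1 [ha0]; exact ne_of_idx a (by omega) (by omega) (by omega)
        have hCK : a ≠ (a + ((ℓ - 1 : ℕ) : ZMod n)) + 1 := by rw [hc1]; exact hKa.symm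
        have h2 := hconv (a + ((ℓ - 1 : ℕ) : ZMod n)) a hCa hCK
        rw [hc1] at h2
        have hJC : a + ((m : ℕ) : ZMod n) ≠ a + ((ℓ - 1 : ℕ) : ZMod n) :=
          ne_of_idx a (by omega) (by omega) (by omega)
        have hJK' : a + ((m : ℕ) : ZMod n) ≠ (a + ((ℓ - 1 : ℕ) : ZMod n)) + 1 := by
          rw [hc1]; exact hJK
        have h4 := hconv (a + ((ℓ - 1 : ℕ) : ZMod n)) (a + ((m : ℕ) : ZMod n)) hJC hJK'
        rw [hc1] at h4
        have hBC : a + 1 ≠ a + ((ℓ - 1 : ℕ) : ZMod n) := by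
          rw [ha1]; exact ne_of_idx a (by omega) (by omega) (by omega)
        have hBK : a + 1 ≠ (a + ((ℓ - 1 : ℕ) : ZMod n)) + 1 := by rw [hc1]; exact hKa1.symm
        have h5 := hconv (a + ((ℓ - 1 : ℕ) : ZMod n)) (a + 1) hBC hBK
        rw [hc1] at h5
        have e1 : (a + 1) + ((ℓ - 1 : ℕ) : ZMod n) = a + ((ℓ : ℕ) : ZMod n) := by
          rw [hcast]; ring
        have hcastm : ((m - 1 : ℕ) : ZMod n) = ((m : ℕ) : ZMod n) - 1 := by
          push_cast [Nat.cast_sub (by omega : 1 ≤ m)]; ring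
        have e2 : (a + 1) + ((m - 1 : ℕ) : ZMod n) = a + ((m : ℕ) : ZMod n) := by
          rw [hcastm]; ring
        have h3 := ih (ℓ - 1) (by omega) (a + 1) (m - 1) (by omega) (by omega) (by omega)
        rw [e1, e2] at h3
        by_contra hcon
        push_neg at hcon
        simp only [planeDet, Complex.sub_re, Complex.sub_im] at h1 h2 h3 h4 h5 hcon
        nlinarith [mul_pos h1 h4, mul_pos h2 (neg_pos.mpr h3), mul_nonneg hcon h5.le]

lemma pivot {n : ℕ} [NeZero n] (V : ZMod n → ℂ) (hgen : NoFourConcyclic V)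
    {s : ℝ} (hs : s ≠ 0) (p q : ZMod n) (hpq : p ≠ q) (O₀ : ℂ)
    (h0 : pw O₀ (V p) (V q) = 0) (a : ZMod n) (T : Finset ℕ)
    (hT : T.Nonempty)
    (hinj : ∀ m ∈ T, ∀ m' ∈ T, a + (m : ZMod n) = a + (m' : ZMod n) → m = m')
    (hnep : ∀ m ∈ T, a + (m : ZMod n) ≠ p)
    (hneq : ∀ m ∈ T, a + (m : ZMod n) ≠ q)
    (hpos : ∀ m ∈ T, 0 < planeDet (V q - V p) (V (a + (m : ZMod n)) - V p)) :
    ∃ (k : ℕ) (O : ℂ), k ∈ T ∧ pw O (V p) (V q) = 0 ∧ pw O (V p) (V (a + (k : ZMod n))) = 0 ∧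
      (∀ m ∈ T, m ≠ k → 0 < s * pw O (V p) (V (a + (m : ZMod n)))) ∧
      (0 < s * pw O₀ (V p) (V (a + (k : ZMod n))) →
        ∀ x : ℂ, 0 ≤ s * pw O₀ (V p) x → planeDet (V q - V p) (x - V p) < 0 →
          0 < s * pw O (V p) x) := by
  set u := V q - V p with hu
  set E : ℕ → ℝ := fun m => planeDet u (V (a + (m : ZMod n)) - V p) with hE
  set τ : ℕ → ℝ := fun m => pw O₀ (V p) (V (a + (m : ZMod n))) / (2 * E m) with hτ
  obtain ⟨k, hkT, hkmin⟩ := T.exists_min_image (fun m => s * τ m) hT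
  set O := O₀ + ((τ k : ℝ) : ℂ) * (Complex.I * u) with hO
  have hg : ∀ x, pw O (V p) x = pw O₀ (V p) x - 2 * τ k * planeDet u (x - V p) :=
    fun x => pw_shift O₀ (V p) x u (τ k)
  have hEk : 0 < E k := hpos k hkT
  have c1 : pw O (V p) (V q) = 0 := by
    rw [hg, ← hu, planeDet_self, h0]; ring
  have c2 : pw O (V p) (V (a + (k : ZMod n))) = 0 := by
    rw [hg]
    have : planeDet u (V (a + (k : ZMod n)) - V p) = E k := rfl
    rw [this, hτ]
    field_simp
    ring
  have c3 : ∀ m ∈ T, m ≠ k → 0 < s * pw O (V p) (V (a + (m : ZMod n))) := by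
    intro m hmT hmk
    have hEm : 0 < E m := hpos m hmT
    have key : s * pw O (V p) (V (a + (m : ZMod n))) = 2 * E m * (s * τ m - s * τ k) := by
      rw [hg]
      have h1 : planeDet u (V (a + (m : ZMod n)) - V p) = E m := rfl
      rw [h1]
      have h2 : pw O₀ (V p) (V (a + (m : ZMod n))) = τ m * (2 * E m) := by
        rw [hτ]; field_simp
      rw [h2]; ring
    have hge : 0 ≤ s * pw O (V p) (V (a + (m : ZMod n))) := by
      rw [key]
      have := hkmin m hmT
      have h3 : s * τ k ≤ s * τ m := this
      nlinarith
    rcases lt_or_eq_of_le hge with h | h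
    · exact h
    · exfalso
      have hpw0 : pw O (V p) (V (a + (m : ZMod n))) = 0 := by
        rcases mul_eq_zero.mp h.symm with h' | h'
        · exact absurd h' hs
        · exact h'
      exact four_circle hgen O p q (a + (k : ZMod n)) (a + (m : ZMod n))
        hpq ((hnep k hkT).symm) ((hnep m hmT).symm) ((hneq k hkT).symm) ((hneq m hmT).symm)
        (fun h' => hmk ((hinj k hkT m hmT h').symm))
        ((pw_zero_iff O (V p) (V q)).mp c1)
        ((pw_zero_iff O (V p) (V (a + (k : ZMod n)))).mp c2)
        ((pw_zero_iff O (V p) (V (a + (m : ZMod n)))).mp hpw0)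
  have c4 : 0 < s * pw O₀ (V p) (V (a + (k : ZMod n))) →
      ∀ x : ℂ, 0 ≤ s * pw O₀ (V p) x → planeDet (V q - V p) (x - V p) < 0 →
        0 < s * pw O (V p) x := by
    intro hks x hx hdet
    rw [← hu] at hdet
    have hτk : 0 < s * τ k := by
      have heq : s * τ k = (s * pw O₀ (V p) (V (a + (k : ZMod n)))) / (2 * E k) := by
        rw [hτ]; ring
      rw [heq]
      exact div_pos hks (by linarith)
    have key : s * pw O (V p) x =
        s * pw O₀ (V p) x - 2 * (s * τ k) * planeDet u (x - V p) := by
      rw [hg]; ring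
    rw [key]
    nlinarith [mul_pos hτk (neg_pos.mpr hdet)]
  exact ⟨k, O, hkT, c1, c2, c3, c4⟩

/-- `s`-extremal neighbour circle at `i`. -/
def SC {n : ℕ} (V : ZMod n → ℂ) (s : ℝ) (i : ZMod n) : Prop :=
  ∃ O : ℂ, pw O (V (i - 1)) (V i) = 0 ∧ pw O (V (i - 1)) (V (i + 1)) = 0 ∧
    ∀ j : ZMod n, j ≠ i - 1 → j ≠ i → j ≠ i + 1 → 0 < s * pw O (V (i - 1)) (V j)

lemma rec_lemma {n : ℕ} [NeZero n] (V : ZMod n → ℂ) (hconv : IsConvexPolygon V)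
    (hgen : NoFourConcyclic V) {s : ℝ} (hs : s ≠ 0) :
    ∀ ℓ : ℕ, ∀ a : ZMod n, 2 ≤ ℓ → ℓ < n →
      (∃ O₀ : ℂ, pw O₀ (V a) (V (a + ((ℓ : ℕ) : ZMod n))) = 0 ∧
        (∀ m : ℕ, 0 < m → m < ℓ → 0 < s * pw O₀ (V a) (V (a + (m : ZMod n)))) ∧
        (∀ m : ℕ, ℓ < m → m < n → 0 ≤ s * pw O₀ (V a) (V (a + (m : ZMod n))))) →
      ∃ m : ℕ, 0 < m ∧ m < ℓ ∧ SC V s (a + (m : ZMod n)) := by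
  intro ℓ
  induction ℓ using Nat.strong_induction_on with
  | _ ℓ ih =>
    intro a hℓ2 hℓn hH
    obtain ⟨O₀, hO₀c, hInt, hOut⟩ := hH
    have hn4 : 2 < n := by omega
    set c := a + ((ℓ : ℕ) : ZMod n) with hc
    have hreb : ∀ x, pw O₀ (V c) x = pw O₀ (V a) x := by
      intro x
      rw [pw_rebase O₀ (V a) (V c) x, hO₀c]
      ring
    have hca : c ≠ a := idx_ne_base a (by omega) hℓn
    -- sides of the chord
    have hsideIn : ∀ m : ℕ, 0 < m → m < ℓ →
        0 < planeDet (V a - V c) (V (a + (m : ZMod n)) - V c) := by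
      intro m h0 h1
      have := conv_chord V hconv ℓ a m h0 h1 hℓn
      rw [planeDet_flip (V a) (V c)]
      rw [← hc] at this
      linarith
    have hsideOut : ∀ m : ℕ, ℓ < m → m < n →
        planeDet (V a - V c) (V (a + (m : ZMod n)) - V c) < 0 := by
      intro m h0 h1
      have e1 : c + ((n - ℓ : ℕ) : ZMod n) = a := by
        rw [hc, add_cast_add]
        have : ℓ + (n - ℓ) = n := by omega
        rw [this, ZMod.natCast_self, add_zero]
      have e2 : c + ((m - ℓ : ℕ) : ZMod n) = a + ((m : ℕ) : ZMod n) := by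
        rw [hc, add_cast_add]
        congr 2
        omega
      have := conv_chord V hconv (n - ℓ) c (m - ℓ) (by omega) (by omega) (by omega)
      rw [e1, e2] at this
      exact this
    -- apply pivot with p = c, q = a
    obtain ⟨k, O, hkT, c1, c2, c3, c4⟩ := pivot V hgen hs c a hca O₀
      (by rw [hreb (V a)]; exact pw_self O₀ (V a)) a (Finset.Ioo 0 ℓ)
      ⟨1, by simp; omega⟩
      (fun m hm m' hm' h => by
        simp only [Finset.mem_Ioo] at hm hm'
        exact cast_injOn a (by omega) (by omega) h)
      (fun m hm => by
        simp only [Finset.mem_Ioo] at hm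
        exact ne_of_idx a (by omega) (by omega) (by omega))
      (fun m hm => by
        simp only [Finset.mem_Ioo] at hm
        exact idx_ne_base a (by omega) (by omega))
      (fun m hm => by
        simp only [Finset.mem_Ioo] at hm
        exact hsideIn m hm.1 hm.2)
    simp only [Finset.mem_Ioo] at hkT
    -- rebase the new circle to V a
    have hrebO : ∀ x, pw O (V a) x = pw O (V c) x := by
      intro x
      rw [pw_rebase O (V c) (V a) x, c1]
      ring
    have gC : pw O (V a) (V c) = 0 := by rw [hrebO]; exact pw_self O (V c)
    have gK : pw O (V a) (V (a + (k : ZMod n))) = 0 := by rw [hrebO]; exact c2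
    have gT : ∀ m : ℕ, 0 < m → m < ℓ → m ≠ k → 0 < s * pw O (V a) (V (a + (m : ZMod n))) := by
      intro m h0 h1 hmk
      rw [hrebO]
      exact c3 m (by simp [Finset.mem_Ioo]; omega) hmk
    have gOut : ∀ m : ℕ, ℓ < m → m < n → 0 < s * pw O (V a) (V (a + (m : ZMod n))) := by
      intro m h0 h1
      rw [hrebO]
      refine c4 ?_ (V (a + (m : ZMod n))) ?_ (hsideOut m h0 h1)
      · rw [hreb]
        exact hInt k hkT.1 hkT.2
      · rw [hreb]
        exact hOut m h0 h1
    rcases eq_or_lt_of_le hℓ2 with hℓeq | hℓ3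
    · -- base case ℓ = 2
      have hk1 : k = 1 := by omega
      subst hk1
      refine ⟨1, by omega, by omega, O, ?_, ?_, ?_⟩
      · have e : (a + ((1 : ℕ) : ZMod n)) - 1 = a := by push_cast; ring
        rw [e]
        exact gK
      · have e : (a + ((1 : ℕ) : ZMod n)) - 1 = a := by push_cast; ring
        have e2 : (a + ((1 : ℕ) : ZMod n)) + 1 = a + ((2 : ℕ) : ZMod n) := by push_cast; ring
        rw [e, e2]
        rw [hc] at gC
        rw [← hℓeq] at gC
        exact gC
      · intro j hj1 hj2 hj3
        have e : (a + ((1 : ℕ) : ZMod n)) - 1 = a := by push_cast; ring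
        have e2 : (a + ((1 : ℕ) : ZMod n)) + 1 = a + ((2 : ℕ) : ZMod n) := by push_cast; ring
        rw [e] at hj1 ⊢
        rw [e2] at hj3
        set m := (j - a).val with hm
        have hjr : j = a + (m : ZMod n) := idx_repr a j
        have hmn : m < n := ZMod.val_lt _
        have hm0 : m ≠ 0 := by
          intro h; rw [h] at hjr; simp at hjr; exact hj1 hjr
        have hm1 : m ≠ 1 := by
          intro h; rw [h] at hjr; exact hj2 hjr
        have hm2 : m ≠ 2 := by
          intro h; rw [h] at hjr; exact hj3 hjr
        rw [hjr]
        exact gOut m (by omega) hmn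
    · -- recursive case ℓ ≥ 3
      rcases Nat.lt_or_ge k 2 with hk2 | hk2
      · -- k = 1 : recurse on the chord (a+1, ℓ-1)
        have hk1 : k = 1 := by omega
        subst hk1
        set a' := a + ((1 : ℕ) : ZMod n) with ha'
        have hrebO' : ∀ x, pw O (V a') x = pw O (V a) x := by
          intro x
          rw [pw_rebase O (V a) (V a') x, gK]
          ring
        have hidx : ∀ m : ℕ, a' + (m : ZMod n) = a + ((1 + m : ℕ) : ZMod n) := by
          intro m
          rw [ha', add_cast_add]
        have hend : a' + ((ℓ - 1 : ℕ) : ZMod n) = c := by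
          rw [hidx, hc]
          congr 2
          omega
        have hyp : ∃ O₁ : ℂ, pw O₁ (V a') (V (a' + ((ℓ - 1 : ℕ) : ZMod n))) = 0 ∧
            (∀ m : ℕ, 0 < m → m < ℓ - 1 → 0 < s * pw O₁ (V a') (V (a' + (m : ZMod n)))) ∧
            (∀ m : ℕ, ℓ - 1 < m → m < n → 0 ≤ s * pw O₁ (V a') (V (a' + (m : ZMod n)))) := by
          refine ⟨O, ?_, ?_, ?_⟩
          · rw [hend, hrebO']
            exact gC
          · intro m h0 h1
            rw [hidx, hrebO']
            exact gT (1 + m) (by omega) (by omega) (by omega)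
          · intro m h0 h1
            rw [hidx, hrebO']
            rcases Nat.lt_or_ge (1 + m) n with hlt | hge
            · rcases Nat.lt_or_ge ℓ (1 + m) with h2 | h2
              · exact le_of_lt (gOut (1 + m) h2 hlt)
              · have h1m : ((1 + m : ℕ) : ZMod n) = ((ℓ : ℕ) : ZMod n) := by
                  congr 1
                  omega
                rw [h1m, ← hc, gC]
                simp
            · have h1m : 1 + m = n := by omega
              have he : a + ((1 + m : ℕ) : ZMod n) = a := by
                rw [h1m, ZMod.natCast_self, add_zero]
              rw [he, pw_self]
              simp
        obtain ⟨m, hm0, hm1, hSC⟩ := ih (ℓ - 1) (by omega) a' (by omega) (by omega) hyp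
        refine ⟨1 + m, by omega, by omega, ?_⟩
        rw [← hidx]
        exact hSC
      · -- k ≥ 2 : recurse on the chord (a, k)
        have hyp : ∃ O₁ : ℂ, pw O₁ (V a) (V (a + ((k : ℕ) : ZMod n))) = 0 ∧
            (∀ m : ℕ, 0 < m → m < k → 0 < s * pw O₁ (V a) (V (a + (m : ZMod n)))) ∧
            (∀ m : ℕ, k < m → m < n → 0 ≤ s * pw O₁ (V a) (V (a + (m : ZMod n)))) := by
          refine ⟨O, gK, ?_, ?_⟩
          · intro m h0 h1
            exact gT m h0 (by omega) (by omega)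
          · intro m h0 h1
            rcases Nat.lt_or_ge m ℓ with h2 | h2
            · exact le_of_lt (gT m (by omega) h2 (by omega))
            · rcases Nat.eq_or_lt_of_le h2 with h3 | h3
              · have h1m : ((m : ℕ) : ZMod n) = ((ℓ : ℕ) : ZMod n) := by
                  congr 1
                  omega
                rw [h1m, ← hc, gC]
                simp
              · exact le_of_lt (gOut m h3 h1)
        obtain ⟨m, hm0, hm1, hSC⟩ := ih k hkT.2 a hk2 (by omega) hyp
        exact ⟨m, hm0, by omega, hSC⟩

lemma one_lemma {n : ℕ} [NeZero n] (hn : 3 < n) (V : ZMod n → ℂ) (hconv : IsConvexPolygon V)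
    (hgen : NoFourConcyclic V) {s : ℝ} (hs : s ≠ 0) (a : ZMod n) :
    ∃ i : ZMod n, SC V s i ∧ i ≠ a ∧ i ≠ a + 1 := by
  set b := a + ((1 : ℕ) : ZMod n) with hb
  have hb1 : a + 1 = b := by rw [hb]; push_cast; ring
  set O₀ : ℂ := (V a + V b) / 2 with hO₀
  have h0 : pw O₀ (V a) (V b) = 0 := by
    rw [pw]
    have e1 : V b - O₀ = (V b - V a) / 2 := by rw [hO₀]; ring
    have e2 : V a - O₀ = -((V b - V a) / 2) := by rw [hO₀]; ring
    rw [e1, e2, Complex.normSq_neg]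
    ring
  have hab : a ≠ b := (idx_ne_base a (by omega) (by omega)).symm
  obtain ⟨k, O, hkT, c1, c2, c3, _⟩ := pivot V hgen hs a b hab O₀ h0 a (Finset.Ioo 1 n)
    ⟨2, by simp; omega⟩
    (fun m hm m' hm' h => by
      simp only [Finset.mem_Ioo] at hm hm'
      exact cast_injOn a (by omega) (by omega) h)
    (fun m hm => by
      simp only [Finset.mem_Ioo] at hm
      exact idx_ne_base a (by omega) (by omega))
    (fun m hm => by
      simp only [Finset.mem_Ioo] at hm
      rw [hb]
      exact ne_of_idx a (by omega) (by omega) (by omega))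
    (fun m hm => by
      simp only [Finset.mem_Ioo] at hm
      have h1 : a + (m : ZMod n) ≠ a := idx_ne_base a (by omega) (by omega)
      have h2 : a + (m : ZMod n) ≠ a + 1 := by
        rw [hb1, hb]
        exact ne_of_idx a (by omega) (by omega) (by omega)
      have := hconv a (a + (m : ZMod n)) h1 h2
      rwa [hb1] at this)
  simp only [Finset.mem_Ioo] at hkT
  have hrebO : ∀ x, pw O (V b) x = pw O (V a) x := by
    intro x
    rw [pw_rebase O (V a) (V b) x, c1]
    ring
  rcases Nat.lt_or_ge k 3 with hk2 | hk3
  · -- k = 2 : recurse on chord (a+2, n-2)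
    have hk : k = 2 := by omega
    subst hk
    set e := a + ((2 : ℕ) : ZMod n) with he
    have hrebO2 : ∀ x, pw O (V e) x = pw O (V a) x := by
      intro x
      rw [pw_rebase O (V a) (V e) x, c2]
      ring
    have hidx : ∀ m : ℕ, e + (m : ZMod n) = a + ((2 + m : ℕ) : ZMod n) := by
      intro m
      rw [he, add_cast_add]
    have hyp : ∃ O₁ : ℂ, pw O₁ (V e) (V (e + ((n - 2 : ℕ) : ZMod n))) = 0 ∧
        (∀ m : ℕ, 0 < m → m < n - 2 → 0 < s * pw O₁ (V e) (V (e + (m : ZMod n)))) ∧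
        (∀ m : ℕ, n - 2 < m → m < n → 0 ≤ s * pw O₁ (V e) (V (e + (m : ZMod n)))) := by
      refine ⟨O, ?_, ?_, ?_⟩
      · have hend : e + ((n - 2 : ℕ) : ZMod n) = a := by
          rw [hidx]
          have : 2 + (n - 2) = n := by omega
          rw [this, ZMod.natCast_self, add_zero]
        rw [hend, hrebO2, pw_self]
      · intro m h0' h1'
        rw [hidx, hrebO2]
        exact c3 (2 + m) (by simp only [Finset.mem_Ioo]; omega) (by omega)
      · intro m h0' h1'
        have hm : m = n - 1 := by omega
        have hend : e + ((m : ℕ) : ZMod n) = b := by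
          rw [hidx, hb]
          have : ((2 + m : ℕ) : ZMod n) = ((n + 1 : ℕ) : ZMod n) := by congr 1; omega
          rw [this]
          push_cast [ZMod.natCast_self]
          ring
        rw [hend, hrebO2, c1]
        simp
    obtain ⟨m, hm0, hm1, hSC⟩ := rec_lemma V hconv hgen hs (n - 2) e (by omega) (by omega) hyp
    rw [hidx] at hSC
    refine ⟨a + ((2 + m : ℕ) : ZMod n), hSC, idx_ne_base a (by omega) (by omega), ?_⟩
    rw [hb1, hb]
    exact ne_of_idx a (by omega) (by omega) (by omega)
  · -- k ≥ 3 : recurse on chord (a+1, k-1)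
    have hidx : ∀ m : ℕ, b + (m : ZMod n) = a + ((1 + m : ℕ) : ZMod n) := by
      intro m
      rw [hb, add_cast_add]
    have hyp : ∃ O₁ : ℂ, pw O₁ (V b) (V (b + ((k - 1 : ℕ) : ZMod n))) = 0 ∧
        (∀ m : ℕ, 0 < m → m < k - 1 → 0 < s * pw O₁ (V b) (V (b + (m : ZMod n)))) ∧
        (∀ m : ℕ, k - 1 < m → m < n → 0 ≤ s * pw O₁ (V b) (V (b + (m : ZMod n)))) := by
      refine ⟨O, ?_, ?_, ?_⟩
      · have hend : b + ((k - 1 : ℕ) : ZMod n) = a + ((k : ℕ) : ZMod n) := by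
          rw [hidx]
          congr 2
          omega
        rw [hend, hrebO]
        exact c2
      · intro m h0' h1'
        rw [hidx, hrebO]
        exact c3 (1 + m) (by simp only [Finset.mem_Ioo]; omega) (by omega)
      · intro m h0' h1'
        rw [hidx, hrebO]
        rcases Nat.lt_or_ge (1 + m) n with hlt | hge
        · have hq : 1 + m ≠ k := by omega
          exact le_of_lt (c3 (1 + m) (by simp only [Finset.mem_Ioo]; omega) hq)
        · have h1m : 1 + m = n := by omega
          have hend : a + ((1 + m : ℕ) : ZMod n) = a := by
            rw [h1m, ZMod.natCast_self, add_zero]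
          rw [hend, pw_self]
          simp
    obtain ⟨m, hm0, hm1, hSC⟩ := rec_lemma V hconv hgen hs (k - 1) b (by omega) (by omega) hyp
    rw [hidx] at hSC
    refine ⟨a + ((1 + m : ℕ) : ZMod n), hSC, idx_ne_base a (by omega) (by omega), ?_⟩
    rw [hb1, hb]
    exact ne_of_idx a (by omega) (by omega) (by omega)

/-- **discrete H. Kneser four-vertex theorem.** For a convex `n`-gon (`n > 3`)
with no four vertices concyclic, at least two of the neighboring circles `Cᵢ` are empty
and at least two are full. -/
theorem four_extremal_circles (n : ℕ) [NeZero n] (hn : 3 < n) (V : ZMod n → ℂ)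
    (hconv : IsConvexPolygon V) (hgen : NoFourConcyclic V) :
    (∃ i j : ZMod n, i ≠ j ∧ EmptyNbrCircle V i ∧ EmptyNbrCircle V j) ∧
    (∃ i j : ZMod n, i ≠ j ∧ FullNbrCircle V i ∧ FullNbrCircle V j) := by
  have two : ∀ s : ℝ, s ≠ 0 → ∃ i j : ZMod n, i ≠ j ∧ SC V s i ∧ SC V s j := by
    intro s hs
    obtain ⟨i₁, h1, -, -⟩ := one_lemma hn V hconv hgen hs 0
    obtain ⟨i₂, h2, hne, -⟩ := one_lemma hn V hconv hgen hs i₁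
    exact ⟨i₂, i₁, hne, h2, h1⟩
  constructor
  · have convE : ∀ i : ZMod n, SC V 1 i → EmptyNbrCircle V i := by
      rintro i ⟨O, e1, e2, e3⟩
      refine ⟨O, dist O (V (i - 1)), rfl, (pw_zero_iff _ _ _).mp e1,
        (pw_zero_iff _ _ _).mp e2, ?_⟩
      intro j hj1 hj2 hj3
      have h := e3 j hj1 hj2 hj3
      rw [one_mul] at h
      exact (pw_pos_iff O (V (i - 1)) (V j)).mp h
    obtain ⟨i, j, hne, h1, h2⟩ := two 1 one_ne_zero
    exact ⟨i, j, hne, convE i h1, convE j h2⟩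
  · have convF : ∀ i : ZMod n, SC V (-1) i → FullNbrCircle V i := by
      rintro i ⟨O, e1, e2, e3⟩
      refine ⟨O, dist O (V (i - 1)), rfl, (pw_zero_iff _ _ _).mp e1,
        (pw_zero_iff _ _ _).mp e2, ?_⟩
      intro j hj1 hj2 hj3
      have h := e3 j hj1 hj2 hj3
      have h' : pw O (V (i - 1)) (V j) < 0 := by linarith
      exact (pw_neg_iff O (V (i - 1)) (V j)).mp h'
    obtain ⟨i, j, hne, h1, h2⟩ := two (-1) (by norm_num)
    exact ⟨i, j, hne, convF i h1, convF j h2⟩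
end

section
/- Let M = A₁…Aₙ be a convex polygon such that for each i the circumcenter of triangle A_{i−1}AᵢA_{i+1} lies inside the angle ∠A_{i−1}AᵢA_{i+1}. Let Rᵢ be the circumradius of triangle A_{i−1}AᵢA_{i+1}. Then the cyclic sequence R₁,…,Rₙ has at least two local minima and at least two local maxima (i.e., at least two indices i with Rᵢ ≤ R_{i−1}, R_{i+1}, and at least two with Rᵢ ≥ R_{i−1}, R_{i+1}). -/
/-- `O i` and `R i` are the circumcenter and circumradius of the triangle
`V (i-1) V i V (i+1)`. -/
def AreCircumData {n : ℕ} (V O : ZMod n → ℂ) (R : ZMod n → ℝ) : Prop :=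
  ∀ i : ZMod n, dist (O i) (V (i - 1)) = R i ∧ dist (O i) (V i) = R i ∧
    dist (O i) (V (i + 1)) = R i

/-- Each circumcenter `O i` lies strictly inside the angle `∠ V (i-1) V i V (i+1)`. -/
def CircumcentersInsideAngles {n : ℕ} (V O : ZMod n → ℂ) : Prop :=
  ∀ i : ZMod n, ∃ a b : ℝ, 0 < a ∧ 0 < b ∧
    O i - V i = a • (V (i - 1) - V i) + b • (V (i + 1) - V i)

namespace FV

noncomputable def dotR (u v : ℂ) : ℝ := u.re * v.re + u.im * v.im
noncomputable def nsq (u : ℂ) : ℝ := u.re * u.re + u.im * u.im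

noncomputable def edge {n : ℕ} (V : ZMod n → ℂ) (i : ZMod n) : ℂ := V (i + 1) - V i
noncomputable def din {n : ℕ} (V : ZMod n → ℂ) (i : ZMod n) (x : ℂ) : ℝ :=
  planeDet (edge V i) (x - V i)

-- basic planeDet algebra
lemma pd_swap (u v : ℂ) : planeDet u v = - planeDet v u := by simp [planeDet]; ring

lemma pd_self (u : ℂ) : planeDet u u = 0 := by simp [planeDet]; ring

lemma pd_add_right (u v w : ℂ) : planeDet u (v + w) = planeDet u v + planeDet u w := by
  simp [planeDet]; ring

lemma pd_sub_right (u v w : ℂ) : planeDet u (v - w) = planeDet u v - planeDet u w := by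
  simp [planeDet]; ring

lemma pd_neg_right (u v : ℂ) : planeDet u (-v) = - planeDet u v := by
  simp [planeDet]; ring

lemma pd_zero_right (u : ℂ) : planeDet u 0 = 0 := by simp [planeDet]

lemma pd_zero_left (u : ℂ) : planeDet 0 u = 0 := by simp [planeDet]

lemma pd_csmul_right (t : ℝ) (u v : ℂ) : planeDet u ((t : ℂ) * v) = t * planeDet u v := by
  simp [planeDet, Complex.mul_re, Complex.mul_im]; ring

lemma pd_csmul_left (t : ℝ) (u v : ℂ) : planeDet ((t : ℂ) * u) v = t * planeDet u v := by
  simp [planeDet, Complex.mul_re, Complex.mul_im]; ring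

lemma pd_smul_right (t : ℝ) (u v : ℂ) : planeDet u (t • v) = t * planeDet u v := by
  rw [Complex.real_smul]; exact pd_csmul_right t u v

lemma pd_I_right (u v : ℂ) : planeDet u (Complex.I * v) = dotR u v := by
  simp only [planeDet, dotR, Complex.mul_re, Complex.mul_im, Complex.I_re, Complex.I_im]
  ring

-- the 2D Plücker style identity
lemma id1 (P Q w Z : ℂ) :
    planeDet P Q * planeDet w Z = planeDet Z Q * planeDet w P + planeDet P Z * planeDet w Q := by
  simp [planeDet]; ring

-- decomposition in a basis
lemma id2 (u v z : ℂ) :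
    ((planeDet u v : ℝ) : ℂ) * z = ((planeDet z v : ℝ) : ℂ) * u + ((planeDet u z : ℝ) : ℂ) * v := by
  apply Complex.ext <;>
    simp [planeDet, Complex.mul_re, Complex.mul_im, Complex.add_re, Complex.add_im] <;> ring

-- parallel decomposition
lemma id3 {u v : ℂ} (h : planeDet u v = 0) :
    ((nsq u : ℝ) : ℂ) * v = ((dotR u v : ℝ) : ℂ) * u := by
  simp only [planeDet] at h
  apply Complex.ext <;>
      simp [nsq, dotR, Complex.mul_re, Complex.mul_im]
  · linear_combination (-u.im) * h
  · linear_combination u.re * h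

lemma id4 (e u w : ℂ) :
    nsq e * dotR u w = dotR u e * dotR e w + planeDet e u * planeDet e w := by
  simp [planeDet, dotR, nsq]; ring

lemma nsq_nonneg (u : ℂ) : 0 ≤ nsq u := by
  simp only [nsq]; nlinarith [sq_nonneg u.re, sq_nonneg u.im]

lemma nsq_pos {u : ℂ} (h : u ≠ 0) : 0 < nsq u := by
  rcases (nsq_nonneg u).lt_or_eq with h1 | h1
  · exact h1
  · exfalso; apply h
    have h2 : u.re * u.re + u.im * u.im = 0 := by simp only [nsq] at h1; linarith
    have : u.re = 0 ∧ u.im = 0 := by constructor <;> nlinarith [sq_nonneg u.re, sq_nonneg u.im]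
    exact Complex.ext this.1 this.2

-- power-of-point step identities
lemma id5 (A B : ℂ) : nsq A - nsq B = dotR (A - B) (A + B) := by simp [nsq, dotR]; ring

lemma id6 (x y O O' : ℂ) :
    (nsq (x - O') - nsq (x - O)) - (nsq (y - O') - nsq (y - O))
      = -2 * dotR (O' - O) (x - y) := by
  simp [nsq, dotR]; ring

lemma id7 {A B P Q : ℂ} (h1 : nsq (A - P) = nsq (A - Q)) (h2 : nsq (B - P) = nsq (B - Q)) :
    dotR (B - A) (Q - P) = 0 := by
  simp only [nsq, dotR, Complex.sub_re, Complex.sub_im] at h1 h2 ⊢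
  linear_combination (h2 - h1) / 2

set_option linter.unusedSectionVars false

section ZModHelpers

variable {n : ℕ} [NeZero n]

lemma castinj {s t : ℕ} (hs : s < n) (ht : t < n) (h : (s : ZMod n) = t) : s = t := by
  have := congrArg ZMod.val h
  rwa [ZMod.val_cast_of_lt hs, ZMod.val_cast_of_lt ht] at this

lemma cast_ne {s t : ℕ} (hs : s < n) (ht : t < n) (hne : s ≠ t) : (s : ZMod n) ≠ t :=
  fun h => hne (castinj hs ht h)

lemma cast_ne_zero {s : ℕ} (h1 : s ≠ 0) (hs : s < n) : (s : ZMod n) ≠ 0 := by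
  have h0 : (0 : ℕ) < n := Nat.pos_of_ne_zero (NeZero.ne n)
  intro H
  exact h1 (castinj hs h0 (by simpa using H))

lemma off_ne {i : ZMod n} {s : ℕ} (h1 : s ≠ 0) (hs : s < n) : i + (s : ZMod n) ≠ i := by
  intro H
  exact cast_ne_zero h1 hs (by
    have H2 : i + (s : ZMod n) = i + 0 := by rw [add_zero]; exact H
    exact add_left_cancel H2)

lemma cast_n : ((n : ℕ) : ZMod n) = 0 := ZMod.natCast_self n

end ZModHelpers
section Convexity

variable {n : ℕ} [NeZero n]

lemma hD {V : ZMod n → ℂ} (hconv : IsConvexPolygon V) {i j : ZMod n}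
    (h1 : j ≠ i) (h2 : j ≠ i + 1) : 0 < din V i (V j) :=
  hconv i j h1 h2

lemma offc (i : ZMod n) {s t : ℕ} (hs : s < n) (ht : t < n) (hne : s ≠ t) :
    i + (s : ZMod n) ≠ i + (t : ZMod n) :=
  fun H => hne (castinj hs ht (add_left_cancel H))

lemma i2_ne_i (hn : 4 ≤ n) (i : ZMod n) : i + 2 ≠ i := by
  have := offc i (s := 2) (t := 0) (by omega) (by omega) (by omega)
  simpa using this

lemma i2_ne_i1 (hn : 4 ≤ n) (i : ZMod n) : i + 2 ≠ i + 1 := by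
  have := offc i (s := 2) (t := 1) (by omega) (by omega) (by omega)
  simpa using this

lemma i1_ne_i (hn : 4 ≤ n) (i : ZMod n) : i + 1 ≠ i := by
  have := offc i (s := 1) (t := 0) (by omega) (by omega) (by omega)
  simpa using this

lemma edge_ne {V : ZMod n → ℂ} (hconv : IsConvexPolygon V) (hn : 4 ≤ n) (i : ZMod n) :
    edge V i ≠ 0 := by
  intro h
  have key := hD hconv (i2_ne_i hn i) (i2_ne_i1 hn i)
  rw [din, h, pd_zero_left] at key
  exact lt_irrefl 0 key

lemma turn {V : ZMod n → ℂ} (hconv : IsConvexPolygon V) (hn : 4 ≤ n) (i : ZMod n) :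
    0 < planeDet (edge V i) (edge V (i + 1)) := by
  have key := hD hconv (i2_ne_i hn i) (i2_ne_i1 hn i)
  have e1 : edge V (i + 1) = (V (i + 2) - V i) - edge V i := by
    simp only [edge]
    have h : i + 1 + 1 = i + 2 := by ring
    rw [h]; ring
  rw [e1, pd_sub_right, pd_self, sub_zero]
  simpa [din] using key

end Convexity
section RuleR

variable {n : ℕ} [NeZero n]

lemma cast_succ (t : ℕ) (ht : 1 ≤ t) : ((t - 1 : ℕ) : ZMod n) + 1 = (t : ZMod n) := by
  rw [show ((t : ℕ) : ZMod n) = (((t - 1) + 1 : ℕ) : ZMod n) by congr 1; omega]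
  push_cast
  ring

lemma cast_pred_add_one (hn : 4 ≤ n) : ((n - 1 : ℕ) : ZMod n) + 1 = 0 := by
  have h : ((n - 1 : ℕ) : ZMod n) + ((1 : ℕ) : ZMod n) = ((n : ℕ) : ZMod n) := by
    rw [← Nat.cast_add]; congr 1; omega
  simpa [cast_n] using h

lemma ruleR {V : ZMod n → ℂ} (hconv : IsConvexPolygon V) (hn : 4 ≤ n) (a : ZMod n)
    {j k : ℕ} (hj : 1 ≤ j) (hjk : j < k) (hk : k ≤ n - 1)
    (h1 : planeDet (edge V a) (edge V (a + (j : ZMod n))) ≤ 0)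
    (h2 : 0 < planeDet (edge V a) (edge V (a + (k : ZMod n)))) : False := by
  set g : ℕ → ℝ := fun s => planeDet (edge V a) (V (a + (s : ZMod n)) - V a) with hg
  have g_step : ∀ s : ℕ, g (s + 1) - g s = planeDet (edge V a) (edge V (a + (s : ZMod n))) := by
    intro s
    have hc : ((s + 1 : ℕ) : ZMod n) = (s : ZMod n) + 1 := by push_cast; ring
    simp only [hg, hc]
    rw [← pd_sub_right]
    congr 1
    simp only [edge, ← add_assoc]
    ring
  have g_pos : ∀ s : ℕ, 2 ≤ s → s ≤ n - 1 → 0 < g s := by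
    intro s hs2 hsn
    have hne1 : a + (s : ZMod n) ≠ a := by
      have := offc a (s := s) (t := 0) (by omega) (by omega) (by omega)
      simpa using this
    have hne2 : a + (s : ZMod n) ≠ a + 1 := by
      have := offc a (s := s) (t := 1) (by omega) (by omega) (by omega)
      simpa using this
    exact hD hconv hne1 hne2
  obtain ⟨t, htmem, htmin⟩ :=
    Finset.exists_min_image (Finset.Icc (j + 1) k) g ⟨j + 1, by simp [Finset.mem_Icc]; omega⟩
  obtain ⟨hta, htb⟩ := Finset.mem_Icc.mp htmem
  have hP : 0 ≤ planeDet (edge V a) (edge V (a + (t : ZMod n))) := by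
    rw [← g_step]
    by_cases hcase : t = k
    · subst hcase
      have := g_step t
      have h2' := h2
      linarith [htmin t htmem, g_step t]
    · have ht1 : t + 1 ∈ Finset.Icc (j + 1) k := Finset.mem_Icc.mpr ⟨by omega, by omega⟩
      linarith [htmin (t + 1) ht1]
  by_cases ht_top : t = n - 1
  · subst ht_top
    have hturn := turn hconv hn (a + ((n - 1 : ℕ) : ZMod n))
    rw [show a + ((n - 1 : ℕ) : ZMod n) + 1 = a by rw [add_assoc, cast_pred_add_one hn, add_zero]]
      at hturn
    rw [pd_swap] at hP
    linarith
  have htn2 : t ≤ n - 2 := by omega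
  have hQ : 0 ≤ g (t - 1) - g t := by
    by_cases hcase : t = j + 1
    · have hstep := g_step j
      have : t - 1 = j := by omega
      rw [this, hcase]
      have : j + 1 = t := by omega
      linarith [g_step j, h1]
    · have ht1 : t - 1 ∈ Finset.Icc (j + 1) k := Finset.mem_Icc.mpr ⟨by omega, by omega⟩
      linarith [htmin (t - 1) ht1]
  have hZpos : 0 < g t := g_pos t (by omega) (by omega)
  -- cone setup
  set i : ZMod n := a + (t : ZMod n) with hi
  set i' : ZMod n := a + ((t - 1 : ℕ) : ZMod n) with hi'
  have hi'1 : i' + 1 = i := by rw [hi', hi, add_assoc, cast_succ t (by omega)]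
  set P : ℂ := edge V i with hP'
  set Q : ℂ := -(edge V i') with hQ'
  set Z : ℂ := V a - V i with hZ'
  set w : ℂ := edge V a with hw
  have dwP : 0 ≤ planeDet w P := hP
  have dwQ : 0 ≤ planeDet w Q := by
    have hstep := g_step (t - 1)
    have ht1 : t - 1 + 1 = t := by omega
    rw [ht1] at hstep
    rw [hQ', pd_neg_right]
    linarith
  have dwZ : planeDet w Z < 0 := by
    have : planeDet w Z = - g t := by
      rw [hZ', show V a - V i = -(V (a + (t : ZMod n)) - V a) by rw [hi]; ring, pd_neg_right]
    rw [this]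
    linarith
  have dPZ : 0 < planeDet P Z := by
    have hne1 : a ≠ i := by
      rw [hi]
      have := offc a (s := 0) (t := t) (by omega) (by omega) (by omega)
      simpa using this
    have hne2 : a ≠ i + 1 := by
      rw [hi, show a + (t : ZMod n) + 1 = a + ((t + 1 : ℕ) : ZMod n) by push_cast; ring]
      have := offc a (s := 0) (t := t + 1) (by omega) (by omega) (by omega)
      simpa using this
    exact hD hconv hne1 hne2
  have dZQ : 0 < planeDet Z Q := by
    have hne1 : a ≠ i' := by
      rw [hi']
      have := offc a (s := 0) (t := t - 1) (by omega) (by omega) (by omega)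
      simpa using this
    have hne2 : a ≠ i' + 1 := by
      rw [hi'1, hi]
      have := offc a (s := 0) (t := t) (by omega) (by omega) (by omega)
      simpa using this
    have hdin : 0 < din V i' (V a) := hD hconv hne1 hne2
    have hVa : V a - V i' = Z + edge V i' := by
      rw [hZ', edge, hi'1]; ring
    rw [din, hVa, pd_add_right, pd_self, add_zero] at hdin
    have heq : planeDet Z Q = planeDet (edge V i') Z := by
      rw [hQ', pd_neg_right, pd_swap Z (edge V i')]; ring
    rw [heq]; exact hdin
  have dPQ : 0 < planeDet P Q := by
    have hturn := turn hconv hn i'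
    rw [hi'1] at hturn
    rw [hQ', pd_neg_right, pd_swap, hP']
    linarith
  have hL : planeDet P Q * planeDet w Z < 0 := mul_neg_of_pos_of_neg dPQ dwZ
  have hR : 0 ≤ planeDet Z Q * planeDet w P + planeDet P Z * planeDet w Q :=
    add_nonneg (mul_nonneg dZQ.le dwP) (mul_nonneg dPZ.le dwQ)
  linarith [id1 P Q w Z]

end RuleR
section Dicho

variable {n : ℕ} [NeZero n]

lemma dicho {V : ZMod n → ℂ} (hconv : IsConvexPolygon V) (hn : 4 ≤ n) (p : ZMod n)
    {r : ℕ} (h2r : 2 ≤ r) (hrn : r ≤ n - 2) :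
    0 < planeDet (edge V p) (edge V (p + ((r - 1 : ℕ) : ZMod n))) ∨
    0 < planeDet (edge V (p + (r : ZMod n))) (edge V (p + ((n - 1 : ℕ) : ZMod n))) := by
  by_contra hcon
  push_neg at hcon
  obtain ⟨hA, hB⟩ := hcon
  set a' : ZMod n := p + (r : ZMod n) with ha'
  have hA1 : planeDet (edge V p) (edge V a') ≤ 0 := by
    by_contra hpos
    push_neg at hpos
    exact ruleR hconv hn p (j := r - 1) (k := r) (by omega) (by omega) (by omega) hA hpos
  have hB1 : planeDet (edge V a') (edge V p) ≤ 0 := by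
    by_contra hpos
    push_neg at hpos
    have e1 : a' + ((n - 1 - r : ℕ) : ZMod n) = p + ((n - 1 : ℕ) : ZMod n) := by
      rw [ha', add_assoc, ← Nat.cast_add, show r + (n - 1 - r) = n - 1 by omega]
    have e2 : a' + ((n - r : ℕ) : ZMod n) = p := by
      rw [ha', add_assoc, ← Nat.cast_add, show r + (n - r) = n by omega, cast_n, add_zero]
    apply ruleR hconv hn a' (j := n - 1 - r) (k := n - r) (by omega) (by omega) (by omega)
    · rw [e1]; exact hB
    · rw [e2]; exact hpos
  have hzero : planeDet (edge V p) (edge V a') = 0 := by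
    rw [pd_swap] at hB1; linarith
  have hc1 : 0 < nsq (edge V p) := nsq_pos (edge_ne hconv hn p)
  set c1 : ℝ := nsq (edge V p) with hc1d
  set c2 : ℝ := dotR (edge V p) (edge V a') with hc2d
  have hscale : ∀ w : ℂ, c1 * planeDet (edge V a') w = c2 * planeDet (edge V p) w := by
    intro w
    have := id3 hzero
    calc c1 * planeDet (edge V a') w = planeDet (((c1 : ℝ) : ℂ) * edge V a') w := by
          rw [pd_csmul_left]
      _ = planeDet (((c2 : ℝ) : ℂ) * edge V p) w := by rw [this]
      _ = c2 * planeDet (edge V p) w := by rw [pd_csmul_left]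
  have hrne : a' ≠ p := by
    rw [ha']
    have := offc p (s := r) (t := 0) (by omega) (by omega) (by omega)
    simpa using this
  have hrne1 : a' ≠ p + 1 := by
    rw [ha']
    have := offc p (s := r) (t := 1) (by omega) (by omega) (by omega)
    simpa using this
  have hpne1 : p ≠ a' + 1 := by
    rw [ha', show p + (r : ZMod n) + 1 = p + ((r + 1 : ℕ) : ZMod n) by push_cast; ring]
    have := offc p (s := 0) (t := r + 1) (by omega) (by omega) (by omega)
    simpa using this
  have hd1 : 0 < planeDet (edge V p) (V a' - V p) := hD hconv hrne hrne1
  have hd2 : 0 < planeDet (edge V a') (V p - V a') := hD hconv hrne.symm hpne1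
  have hc2neg : c2 < 0 := by
    have hts := hscale (V p - V a')
    have hneg1 : planeDet (edge V p) (V p - V a') = - planeDet (edge V p) (V a' - V p) := by
      rw [show V p - V a' = -(V a' - V p) by ring, pd_neg_right]
    rw [hneg1] at hts
    nlinarith
  have hturn := turn hconv hn (p + ((n - 1 : ℕ) : ZMod n))
  rw [show p + ((n - 1 : ℕ) : ZMod n) + 1 = p by
    rw [add_assoc, cast_pred_add_one hn, add_zero]] at hturn
  have hlast : planeDet (edge V p) (edge V (p + ((n - 1 : ℕ) : ZMod n))) < 0 := by
    rw [pd_swap]; linarith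
  have := hscale (edge V (p + ((n - 1 : ℕ) : ZMod n)))
  nlinarith

end Dicho
section Apex

variable {n : ℕ} [NeZero n]

lemma din_shift {V : ZMod n → ℂ} (i : ZMod n) (y u : ℂ) (σ : ℝ) :
    din V i (y + (σ : ℂ) * u) = din V i y + σ * planeDet (edge V i) u := by
  simp only [din]
  rw [show y + (σ : ℂ) * u - V i = (y - V i) + (σ : ℂ) * u by ring, pd_add_right,
    pd_csmul_right]

lemma dotR_self (u : ℂ) : dotR u u = nsq u := by simp [dotR, nsq]

-- the singleton-arc case
lemma apex_single {V : ZMod n → ℂ} (hconv : IsConvexPolygon V) (hn : 4 ≤ n) (a : ZMod n) :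
    ∃ x : ℂ, din V a x ≤ 0 ∧
      (∀ s : ℕ, 1 ≤ s → s ≤ n - 1 → 0 < din V (a + (s : ZMod n)) x) := by
  have hnn : 0 < n := by omega
  -- the doubled midpoint sum
  set m : ℕ → ℝ := fun s => din V (a + (s : ZMod n)) (V a) + din V (a + (s : ZMod n)) (V (a + 1))
    with hm
  have hmpos : ∀ s : ℕ, 1 ≤ s → s ≤ n - 1 → 0 < m s := by
    intro s h1s hsn
    set i : ZMod n := a + (s : ZMod n) with hi
    by_cases hs1 : s = 1
    · subst hs1
      have h2 : 0 < din V i (V a) := by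
        apply hD hconv
        · have := offc a (s := 0) (t := 1) (by omega) (by omega) (by omega)
          simpa [hi] using this
        · rw [hi, show a + ((1 : ℕ) : ZMod n) + 1 = a + ((2 : ℕ) : ZMod n) by push_cast; ring]
          have := offc a (s := 0) (t := 2) (by omega) (by omega) (by omega)
          simpa using this
      have h3 : din V i (V (a + 1)) = 0 := by
        rw [hi, din]
        norm_cast
        rw [sub_self, pd_zero_right]
      rw [hm]
      simp only [hi] at h2 h3 ⊢
      rw [h3]
      linarith
    by_cases hsn1 : s = n - 1
    · subst hsn1
      have hia : i + 1 = a := by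
        rw [hi, add_assoc, cast_pred_add_one hn, add_zero]
      have h2 : din V i (V a) = 0 := by
        rw [din, ← hia, edge]
        exact pd_self _
      have h3 : 0 < din V i (V (a + 1)) := by
        apply hD hconv
        · have := offc a (s := 1) (t := n - 1) (by omega) (by omega) (by omega)
          simpa [hi] using this
        · have := offc a (s := 1) (t := 0) (by omega) (by omega) (by omega)
          rw [hia]
          simpa using this
      rw [hm]
      simp only [hi] at h2 h3 ⊢
      rw [h2]
      linarith
    · -- middle case : both strictly positive
      have h2 : 0 < din V i (V a) := by
        apply hD hconv
        · have := offc a (s := 0) (t := s) (by omega) (by omega) (by omega)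
          simpa [hi] using this
        · rw [hi, show a + (s : ZMod n) + 1 = a + ((s + 1 : ℕ) : ZMod n) by push_cast; ring]
          have := offc a (s := 0) (t := s + 1) (by omega) (by omega) (by omega)
          simpa using this
      have h3 : 0 < din V i (V (a + 1)) := by
        apply hD hconv
        · have := offc a (s := 1) (t := s) (by omega) (by omega) (by omega)
          simpa [hi] using this
        · have := offc a (s := 1) (t := s + 1) (by omega) (by omega) (by omega)
          rw [hi, show a + (s : ZMod n) + 1 = a + ((s + 1 : ℕ) : ZMod n) by push_cast; ring]
          simpa using this
      rw [hm]; simp only [hi] at h2 h3 ⊢; linarith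
  -- choose epsilon
  set D : ℕ → ℝ := fun s => dotR (edge V (a + (s : ZMod n))) (edge V a) with hDdef
  set f : ℕ → ℝ := fun s => m s / (4 * (|D s| + 1)) with hf
  obtain ⟨s₀, hs₀mem, hs₀min⟩ :=
    Finset.exists_min_image (Finset.Icc 1 (n - 1)) f ⟨1, by simp [Finset.mem_Icc]; omega⟩
  obtain ⟨hs₀1, hs₀n⟩ := Finset.mem_Icc.mp hs₀mem
  have hfpos : ∀ s : ℕ, 1 ≤ s → s ≤ n - 1 → 0 < f s := by
    intro s h1 h2
    apply div_pos (hmpos s h1 h2)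
    have := abs_nonneg (D s)
    linarith
  set ε : ℝ := f s₀ with hε
  have hεpos : 0 < ε := hfpos s₀ hs₀1 hs₀n
  -- the point
  refine ⟨V a + ((1 / 2 : ℝ) : ℂ) * edge V a + ((-ε : ℝ) : ℂ) * (Complex.I * edge V a), ?_, ?_⟩
  · -- din at a is negative
    rw [show V a + ((1 / 2 : ℝ) : ℂ) * edge V a + ((-ε : ℝ) : ℂ) * (Complex.I * edge V a)
        = (V a + ((1 / 2 : ℝ) : ℂ) * edge V a) + ((-ε : ℝ) : ℂ) * (Complex.I * edge V a) by ring]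
    rw [din_shift, din_shift, pd_I_right, pd_self, dotR_self]
    have h0 : din V a (V a) = 0 := by rw [din, sub_self, pd_zero_right]
    have := nsq_pos (edge_ne hconv hn a)
    rw [h0]
    nlinarith
  · intro s h1s hsn
    rw [show V a + ((1 / 2 : ℝ) : ℂ) * edge V a + ((-ε : ℝ) : ℂ) * (Complex.I * edge V a)
        = (V a + ((1 / 2 : ℝ) : ℂ) * edge V a) + ((-ε : ℝ) : ℂ) * (Complex.I * edge V a) by ring]
    rw [din_shift, din_shift, pd_I_right]
    set i : ZMod n := a + (s : ZMod n) with hi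
    -- identify the halves
    have hsplit : din V i (V a) + (1 / 2) * planeDet (edge V i) (edge V a) = (1 / 2) * m s := by
      rw [hm]
      simp only [← hi]
      have : edge V a = (V (a + 1) - V i) - (V a - V i) := by rw [edge]; ring
      rw [this, pd_sub_right, din, din]
      ring
    have hDs : dotR (edge V i) (edge V a) = D s := by rw [hDdef]
    rw [hDs]
    have hmin := hs₀min s (Finset.mem_Icc.mpr ⟨h1s, hsn⟩)
    have hms := hmpos s h1s hsn
    -- ε * |D s| < m s / 2
    have habs : 0 ≤ |D s| := abs_nonneg _
    have key : ε * |D s| < m s / 2 := by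
      have h2 : ε ≤ m s / (4 * (|D s| + 1)) := hmin
      have h3 : ε * |D s| ≤ m s / (4 * (|D s| + 1)) * |D s| :=
        mul_le_mul_of_nonneg_right h2 habs
      have h4 : m s / (4 * (|D s| + 1)) * |D s| < m s / 2 := by
        rw [div_mul_eq_mul_div, div_lt_div_iff₀ (by linarith) (by norm_num)]
        nlinarith
      linarith
    have hDle : -ε * D s ≥ -(ε * |D s|) := by
      have := le_abs_self (D s)
      have := neg_abs_le (D s)
      nlinarith
    nlinarith [hsplit]

end Apex
section ApexMain

variable {n : ℕ} [NeZero n]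

lemma apex_main {V : ZMod n → ℂ} (hconv : IsConvexPolygon V) (hn : 4 ≤ n) (a : ZMod n)
    {ℓ : ℕ} (h2ℓ : 2 ≤ ℓ) (hℓn : ℓ ≤ n - 1)
    (hΔ : 0 < planeDet (edge V a) (edge V (a + ((ℓ - 1 : ℕ) : ZMod n)))) :
    ∃ x : ℂ, (∀ s : ℕ, s ≤ ℓ - 1 → din V (a + (s : ZMod n)) x ≤ 0) ∧
      (∀ s : ℕ, ℓ ≤ s → s ≤ n - 1 → 0 < din V (a + (s : ZMod n)) x) := by
  have hnn : 0 < n := by omega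
  set b : ZMod n := a + ((ℓ - 1 : ℕ) : ZMod n) with hb
  set Δ : ℝ := planeDet (edge V a) (edge V b) with hΔd
  -- b + 1 = a + ℓ
  have hb1 : b + 1 = a + ((ℓ : ℕ) : ZMod n) := by
    rw [hb, add_assoc, cast_succ ℓ (by omega)]
  -- a ≠ b etc.
  have hba : b ≠ a := by
    have := offc a (s := ℓ - 1) (t := 0) (by omega) (by omega) (by omega)
    simpa [hb] using this
  -- σ
  have hN : 0 < din V b (V a) := by
    apply hD hconv
    · exact hba.symm
    · rw [hb1]
      have := offc a (s := 0) (t := ℓ) (by omega) (by omega) (by omega)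
      simpa using this
  set σ : ℝ := din V b (V a) / Δ with hσd
  have hσ : 0 < σ := div_pos hN hΔ
  set x : ℂ := V a + (σ : ℂ) * edge V a with hx
  have hdin_i : ∀ i : ZMod n, din V i x = din V i (V a) + σ * planeDet (edge V i) (edge V a) := by
    intro i
    rw [hx, din_shift]
  have hdina0 : din V a (V a) = 0 := by rw [din, sub_self, pd_zero_right]
  have hxa : din V a x = 0 := by rw [hdin_i, hdina0, pd_self]; ring
  have hxb : din V b x = 0 := by
    rw [hdin_i, hσd]
    have : planeDet (edge V b) (edge V a) = -Δ := by rw [hΔd, pd_swap]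
    rw [this]
    field_simp
    ring
  refine ⟨x, ?_, ?_⟩
  · -- A side
    intro s hs
    rcases Nat.eq_or_lt_of_le (Nat.zero_le s) with h0 | h0
    · rw [← h0]
      simp only [Nat.cast_zero, add_zero]
      rw [hxa]
    by_cases hstop : s = ℓ - 1
    · subst hstop
      rw [← hb]
      rw [hxb]
    -- now 1 ≤ s ≤ ℓ - 2
    have hs1 : 1 ≤ s := h0
    have hs2 : s ≤ ℓ - 2 := by omega
    set i : ZMod n := a + (s : ZMod n) with hi
    have fact1 : 0 < planeDet (edge V a) (edge V i) := by
      by_contra hcon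
      push_neg at hcon
      exact ruleR hconv hn a (j := s) (k := ℓ - 1) (by omega) (by omega) (by omega) hcon hΔ
    have fact2 : planeDet (edge V b) (edge V i) ≤ 0 := by
      by_contra hcon
      push_neg at hcon
      have e1 : b + ((n - ℓ + 1 : ℕ) : ZMod n) = a := by
        rw [hb, add_assoc, ← Nat.cast_add, show (ℓ - 1) + (n - ℓ + 1) = n by omega, cast_n,
          add_zero]
      have e2 : b + ((n - ℓ + 1 + s : ℕ) : ZMod n) = i := by
        rw [hb, add_assoc, ← Nat.cast_add, show (ℓ - 1) + (n - ℓ + 1 + s) = n + s by omega,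
          Nat.cast_add, cast_n, zero_add, hi]
      apply ruleR hconv hn b (j := n - ℓ + 1) (k := n - ℓ + 1 + s) (by omega) (by omega)
        (by omega)
      · rw [e1, show planeDet (edge V b) (edge V a) = -Δ by rw [hΔd, pd_swap]]
        linarith
      · rw [e2]; exact hcon
    -- decomposition of z = x - V i
    set z : ℂ := x - V i with hz
    have hza : planeDet (edge V a) z = - din V a (V i) := by
      rw [hz, show x - V i = (x - V a) + (V a - V i) by ring, pd_add_right]
      rw [hx, show V a + (σ : ℂ) * edge V a - V a = (σ : ℂ) * edge V a by ring, pd_csmul_right,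
        pd_self]
      rw [din, show V a - V i = -(V i - V a) by ring, pd_neg_right]
      ring
    have hdina_nonneg : 0 ≤ din V a (V i) := by
      by_cases hq : s = 1
      · subst hq
        rw [hi, din]
        norm_cast
        rw [edge]
        rw [pd_self]
      · apply le_of_lt
        apply hD hconv
        · have := offc a (s := s) (t := 0) (by omega) (by omega) (by omega)
          simpa [hi] using this
        · have := offc a (s := s) (t := 1) (by omega) (by omega) (by omega)
          simpa [hi] using this
    have hzb : planeDet (edge V b) z = - din V b (V i) := by
      rw [hz, show x - V i = (x - V b) + (V b - V i) by ring, pd_add_right]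
      have : planeDet (edge V b) (x - V b) = din V b x := rfl
      rw [this, hxb]
      rw [din, show V b - V i = -(V i - V b) by ring, pd_neg_right]
      ring
    have hdinb_pos : 0 < din V b (V i) := by
      apply hD hconv
      · rw [hi, hb]
        exact offc a (by omega) (by omega) (by omega)
      · rw [hi, hb1]
        exact offc a (by omega) (by omega) (by omega)
    -- apply id2
    have hdec := id2 (edge V a) (edge V b) z
    have := congrArg (fun w => planeDet (edge V i) w) hdec
    simp only [pd_add_right, pd_csmul_right] at this
    -- this : Δ * planeDet (edge V i) z = det(z, Eb) * det(Ei, Ea) + det(Ea, z)*det(Ei,Eb)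
    have hzEb : planeDet z (edge V b) = din V b (V i) := by
      rw [pd_swap, hzb]; ring
    rw [hzEb, hza] at this
    have hfin : Δ * planeDet (edge V i) z < 0 := by
      rw [this]
      have t1 : din V b (V i) * planeDet (edge V i) (edge V a) < 0 := by
        have : planeDet (edge V i) (edge V a) < 0 := by rw [pd_swap]; linarith
        exact mul_neg_of_pos_of_neg hdinb_pos this
      have t2 : -din V a (V i) * planeDet (edge V i) (edge V b) ≤ 0 := by
        have h1 : 0 ≤ planeDet (edge V i) (edge V b) := by rw [pd_swap]; linarith
        nlinarith
      linarith
    have : planeDet (edge V i) z < 0 := by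
      by_contra hcc
      push_neg at hcc
      nlinarith
    have hdd : din V i x = planeDet (edge V i) z := by rw [din, hz]
    rw [hdd]
    linarith
  · -- B side
    intro s hls hsn
    set i : ZMod n := a + (s : ZMod n) with hi
    by_cases hca : 0 < planeDet (edge V i) (edge V a)
    · rw [hdin_i]
      have hnonneg : 0 ≤ din V i (V a) := by
        by_cases hq : s = n - 1
        · subst hq
          have hia : i + 1 = a := by rw [hi, add_assoc, cast_pred_add_one hn, add_zero]
          rw [din, ← hia, edge, pd_self]
        · apply le_of_lt
          apply hD hconv
          · have := offc a (s := 0) (t := s) (by omega) (by omega) (by omega)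
            simpa [hi] using this
          · rw [hi, show a + (s : ZMod n) + 1 = a + ((s + 1 : ℕ) : ZMod n) by push_cast; ring]
            have := offc a (s := 0) (t := s + 1) (by omega) (by omega) (by omega)
            simpa using this
      nlinarith
    · push_neg at hca
      have hcb : planeDet (edge V i) (edge V b) ≤ 0 := by
        by_contra hcon
        push_neg at hcon
        have e1 : i + ((n - s : ℕ) : ZMod n) = a := by
          rw [hi, add_assoc, ← Nat.cast_add, show s + (n - s) = n by omega, cast_n, add_zero]
        have e2 : i + ((n - s + ℓ - 1 : ℕ) : ZMod n) = b := by
          rw [hi, hb, add_assoc, ← Nat.cast_add, show s + (n - s + ℓ - 1) = n + (ℓ - 1) by omega,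
            Nat.cast_add, cast_n, zero_add]
        apply ruleR hconv hn i (j := n - s) (k := n - s + ℓ - 1) (by omega) (by omega) (by omega)
        · rw [e1]; exact hca
        · rw [e2]; exact hcon
      -- b-side representation of x
      set v : ℂ := x - V (b + 1) with hv
      have hvb : planeDet (edge V b) v = 0 := by
        rw [hv, show x - V (b + 1) = (x - V b) - edge V b by rw [edge]; ring, pd_sub_right,
          pd_self, sub_zero]
        exact hxb
      have hnsqb : 0 < nsq (edge V b) := nsq_pos (edge_ne hconv hn b)
      set τ : ℝ := dotR (edge V b) v / nsq (edge V b) with hτd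
      have hveq : v = (τ : ℂ) * edge V b := by
        have h3 := id3 hvb
        rw [hτd]
        rw [Complex.ofReal_div]
        rw [div_mul_eq_mul_div, eq_div_iff (by exact_mod_cast ne_of_gt hnsqb)]
        linear_combination h3
      have hdinab1 : 0 < din V a (V (b + 1)) := by
        apply hD hconv
        · rw [hb1]
          have := offc a (s := ℓ) (t := 0) (by omega) (by omega) (by omega)
          simpa using this
        · rw [hb1]
          have := offc a (s := ℓ) (t := 1) (by omega) (by omega) (by omega)
          simpa using this
      have hτneg : τ < 0 := by
        have h1 : planeDet (edge V a) v = τ * Δ := by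
          rw [hveq, pd_csmul_right, hΔd]
        have h2 : planeDet (edge V a) v = - din V a (V (b + 1)) := by
          rw [hv, show x - V (b + 1) = (x - V a) + (V a - V (b + 1)) by ring, pd_add_right]
          rw [hx, show V a + (σ : ℂ) * edge V a - V a = (σ : ℂ) * edge V a by ring,
            pd_csmul_right, pd_self]
          rw [din, show V a - V (b + 1) = -(V (b + 1) - V a) by ring, pd_neg_right]
          ring
        nlinarith
      have hsplit : din V i x = planeDet (edge V i) (V (b + 1) - V i)
          + τ * planeDet (edge V i) (edge V b) := by
        rw [din, show x - V i = (V (b + 1) - V i) + v by rw [hv]; ring, pd_add_right, hveq,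
          pd_csmul_right]
      by_cases hq : s = ℓ
      · -- i = b + 1
        have hib : i = b + 1 := by rw [hi, hb1, hq]
        have first : planeDet (edge V i) (V (b + 1) - V i) = 0 := by
          rw [hib, sub_self, pd_zero_right]
        have hturn := turn hconv hn b
        have second : 0 < τ * planeDet (edge V i) (edge V b) := by
          rw [hib]
          have : planeDet (edge V (b + 1)) (edge V b) < 0 := by rw [pd_swap]; linarith
          exact mul_pos_of_neg_of_neg hτneg this
        rw [hsplit, first]
        linarith
      · -- s ≥ ℓ + 1
        have first : 0 < planeDet (edge V i) (V (b + 1) - V i) := by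
          have hdd : planeDet (edge V i) (V (b + 1) - V i) = din V i (V (b + 1)) := rfl
          rw [hdd]
          apply hD hconv
          · rw [hi, hb1]
            exact offc a (by omega) (by omega) (by omega)
          · by_cases hq2 : s = n - 1
            · subst hq2
              have hia : i + 1 = a := by rw [hi, add_assoc, cast_pred_add_one hn, add_zero]
              rw [hia, hb1]
              have := offc a (s := ℓ) (t := 0) (by omega) (by omega) (by omega)
              simpa using this
            · rw [hi, hb1, show a + (s : ZMod n) + 1 = a + ((s + 1 : ℕ) : ZMod n) by
                push_cast; ring]
              exact offc a (by omega) (by omega) (by omega)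
        have second : 0 ≤ τ * planeDet (edge V i) (edge V b) := by nlinarith
        rw [hsplit]
        linarith

end ApexMain
section ApexAll

variable {n : ℕ} [NeZero n]

lemma apex {V : ZMod n → ℂ} (hconv : IsConvexPolygon V) (hn : 4 ≤ n) (a : ZMod n)
    {ℓ : ℕ} (h1ℓ : 1 ≤ ℓ) (hℓn : ℓ ≤ n - 1)
    (hspan : ℓ = 1 ∨ 0 < planeDet (edge V a) (edge V (a + ((ℓ - 1 : ℕ) : ZMod n)))) :
    ∃ x : ℂ, (∀ s : ℕ, s ≤ ℓ - 1 → din V (a + (s : ZMod n)) x ≤ 0) ∧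
      (∀ s : ℕ, ℓ ≤ s → s ≤ n - 1 → 0 < din V (a + (s : ZMod n)) x) := by
  by_cases h1 : ℓ = 1
  · obtain ⟨x, hx1, hx2⟩ := apex_single hconv hn a
    refine ⟨x, ?_, ?_⟩
    · intro s hs
      have : s = 0 := by omega
      subst this
      simpa using hx1
    · intro s hs1 hs2
      exact hx2 s (by omega) hs2
  · rcases hspan with h | h
    · exact absurd h h1
    · exact apex_main hconv hn a (by omega) hℓn h

lemma sum_shift (f : ZMod n → ℝ) (p : ZMod n) :
    ∑ i : ZMod n, f i = ∑ s ∈ Finset.range n, f (p + (s : ZMod n)) := by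
  have h1 : ∑ i : ZMod n, f i = ∑ i : ZMod n, f (p + i) :=
    (Fintype.sum_equiv (Equiv.addLeft p) (fun i => f (p + i)) f (fun i => rfl)).symm
  rw [h1]
  apply Finset.sum_nbij' (i := fun (i : ZMod n) => i.val) (j := fun (s : ℕ) => (s : ZMod n))
  · intro i _
    exact Finset.mem_range.mpr (ZMod.val_lt i)
  · intro s _
    exact Finset.mem_univ _
  · intro i _
    exact ZMod.natCast_rightInverse i
  · intro s hs
    exact ZMod.val_cast_of_lt (Finset.mem_range.mp hs)
  · intro i _
    rw [ZMod.natCast_rightInverse i]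

end ApexAll
section Contra

variable {n : ℕ} [NeZero n]

lemma contra {V : ZMod n → ℂ} (hconv : IsConvexPolygon V) (hn : 4 ≤ n)
    (c : ZMod n → ℝ) (hid : ∀ x : ℂ, ∑ i : ZMod n, c i * din V i x = 0)
    (p : ZMod n) {r : ℕ} (hr1 : 1 ≤ r) (hrn : r ≤ n - 1)
    (hpos : ∀ s : ℕ, s < r → 0 < c (p + (s : ZMod n)))
    (hnp : ∀ s : ℕ, r ≤ s → s ≤ n - 1 → c (p + (s : ZMod n)) ≤ 0)
    (hneg : c (p + ((n - 1 : ℕ) : ZMod n)) < 0) : False := by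
  have hnn : 0 < n := by omega
  set a : ZMod n := p + (r : ZMod n) with ha
  -- the two possible apex hypotheses
  have hdich : (r = 1 ∨ 0 < planeDet (edge V p) (edge V (p + ((r - 1 : ℕ) : ZMod n))))
      ∨ (n - r = 1 ∨ 0 < planeDet (edge V a) (edge V (a + ((n - r - 1 : ℕ) : ZMod n)))) := by
    by_cases h1 : r = 1
    · exact Or.inl (Or.inl h1)
    by_cases h2 : r = n - 1
    · exact Or.inr (Or.inl (by omega))
    have := dicho hconv hn p (r := r) (by omega) (by omega)
    rcases this with h | h
    · exact Or.inl (Or.inr h)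
    · refine Or.inr (Or.inr ?_)
      have e1 : a + ((n - r - 1 : ℕ) : ZMod n) = p + ((n - 1 : ℕ) : ZMod n) := by
        rw [ha, add_assoc, ← Nat.cast_add, show r + (n - r - 1) = n - 1 by omega]
      rw [e1]
      exact h
  rcases hdich with hcase | hcase
  · -- apex on the positive arc [p, p + r - 1]
    obtain ⟨x, hA, hB⟩ := apex hconv hn p hr1 hrn hcase
    have h0 := hid x
    rw [sum_shift _ p] at h0
    have hterm : ∀ s ∈ Finset.range n, c (p + (s : ZMod n)) * din V (p + (s : ZMod n)) x ≤ 0 := by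
      intro s hs
      have hsn : s < n := Finset.mem_range.mp hs
      by_cases hc : s < r
      · have h1 := hpos s hc
        have h2 := hA s (by omega)
        nlinarith
      · have h1 := hnp s (by omega) (by omega)
        have h2 := hB s (by omega) (by omega)
        nlinarith
    have hstrict : c (p + ((n - 1 : ℕ) : ZMod n)) * din V (p + ((n - 1 : ℕ) : ZMod n)) x < 0 :=
      mul_neg_of_neg_of_pos hneg (hB (n - 1) (by omega) le_rfl)
    have hlt : ∑ s ∈ Finset.range n,
        c (p + (s : ZMod n)) * din V (p + (s : ZMod n)) x < 0 := by
      have hsum := Finset.sum_lt_sum (f := fun s : ℕ => c (p + (s : ZMod n)) *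
          din V (p + (s : ZMod n)) x) (g := fun _ : ℕ => (0 : ℝ)) hterm
        ⟨n - 1, Finset.mem_range.mpr (by omega), hstrict⟩
      simpa using hsum
    linarith
  · -- apex on the nonpositive arc [p + r, p + n - 1]
    obtain ⟨x, hA, hB⟩ := apex hconv hn a (ℓ := n - r) (by omega) (by omega) hcase
    have h0 := hid x
    rw [sum_shift _ p] at h0
    have eA : ∀ s : ℕ, r ≤ s → s ≤ n - 1 → a + ((s - r : ℕ) : ZMod n) = p + (s : ZMod n) := by
      intro s h1 h2
      rw [ha, add_assoc, ← Nat.cast_add, show r + (s - r) = s by omega]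
    have eB : ∀ s : ℕ, s < r → a + ((s + n - r : ℕ) : ZMod n) = p + (s : ZMod n) := by
      intro s h1
      rw [ha, add_assoc, ← Nat.cast_add, show r + (s + n - r) = s + n by omega, Nat.cast_add,
        cast_n, add_zero]
    have hterm : ∀ s ∈ Finset.range n,
        0 ≤ c (p + (s : ZMod n)) * din V (p + (s : ZMod n)) x := by
      intro s hs
      have hsn : s < n := Finset.mem_range.mp hs
      by_cases hc : s < r
      · have h1 := hpos s hc
        have h2 := hB (s + n - r) (by omega) (by omega)
        rw [eB s hc] at h2
        nlinarith
      · have h1 := hnp s (by omega) (by omega)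
        have h2 := hA (s - r) (by omega)
        rw [eA s (by omega) (by omega)] at h2
        nlinarith
    have hstrict : 0 < c (p + ((0 : ℕ) : ZMod n)) * din V (p + ((0 : ℕ) : ZMod n)) x := by
      have h1 := hpos 0 (by omega)
      have h2 := hB (0 + n - r) (by omega) (by omega)
      rw [eB 0 (by omega)] at h2
      exact mul_pos h1 h2
    have hlt : 0 < ∑ s ∈ Finset.range n,
        c (p + (s : ZMod n)) * din V (p + (s : ZMod n)) x := by
      have hsum := Finset.sum_lt_sum (f := fun _ : ℕ => (0 : ℝ)) (g := fun s : ℕ =>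
          c (p + (s : ZMod n)) * din V (p + (s : ZMod n)) x) hterm
        ⟨0, Finset.mem_range.mpr (by omega), hstrict⟩
      simpa using hsum
    linarith

end Contra
section Pattern

variable {n : ℕ} [NeZero n]

lemma pattern {R : ZMod n → ℝ} (hn : 4 ≤ n) (p : ZMod n)
    (hmin : ∀ i, R p ≤ R i)
    (huniq : ∀ i : ZMod n, (R i ≤ R (i - 1) ∧ R i ≤ R (i + 1)) → i = p) :
    ∃ r : ℕ, 1 ≤ r ∧ r ≤ n - 1 ∧
      (∀ s : ℕ, s < r → R (p + (s : ZMod n)) < R (p + ((s + 1 : ℕ) : ZMod n))) ∧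
      (∀ s : ℕ, r ≤ s → s ≤ n - 1 → R (p + ((s + 1 : ℕ) : ZMod n)) ≤ R (p + (s : ZMod n))) ∧
      R p < R (p + ((n - 1 : ℕ) : ZMod n)) := by
  classical
  have hnn : 0 < n := by omega
  have hd0 : R p < R (p + 1) := by
    by_contra hcon
    push_neg at hcon
    have heq : R (p + 1) = R p := le_antisymm hcon (hmin (p + 1))
    have := huniq (p + 1) ⟨by simpa [heq] using (hmin p).le.trans_eq rfl, by
      rw [heq]; exact hmin (p + 1 + 1)⟩
    have h1 : p + 1 ≠ p := i1_ne_i hn p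
    exact h1 this
  have hlast : R p < R (p + ((n - 1 : ℕ) : ZMod n)) := by
    by_contra hcon
    push_neg at hcon
    set i' : ZMod n := p + ((n - 1 : ℕ) : ZMod n) with hi'
    have heq : R i' = R p := le_antisymm hcon (hmin i')
    have hia : i' + 1 = p := by rw [hi', add_assoc, cast_pred_add_one hn, add_zero]
    have := huniq i' ⟨by rw [heq]; exact hmin (i' - 1), by rw [heq, hia]⟩
    have h1 : i' ≠ p := by
      rw [hi']
      have := offc p (s := n - 1) (t := 0) (by omega) (by omega) (by omega)
      simpa using this
    exact h1 this
  -- no interior local minima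
  have C1 : ∀ s1 s2 : ℕ, s1 < s2 → s2 ≤ n - 1 →
      R (p + ((s1 + 1 : ℕ) : ZMod n)) ≤ R (p + (s1 : ZMod n)) →
      R (p + (s2 : ZMod n)) < R (p + ((s2 + 1 : ℕ) : ZMod n)) → False := by
    intro s1 s2 h12 h2n hdown hup
    obtain ⟨t, htmem, htmin⟩ := Finset.exists_min_image (Finset.Icc (s1 + 1) s2)
      (fun s => R (p + (s : ZMod n))) ⟨s1 + 1, by simp [Finset.mem_Icc]; omega⟩
    obtain ⟨hta, htb⟩ := Finset.mem_Icc.mp htmem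
    have hL : R (p + (t : ZMod n)) ≤ R (p + ((t - 1 : ℕ) : ZMod n)) := by
      by_cases hcase : t = s1 + 1
      · rw [show t - 1 = s1 by omega]
        rw [hcase]
        exact hdown.trans_eq' rfl
      · exact htmin (t - 1) (Finset.mem_Icc.mpr ⟨by omega, by omega⟩)
    have hR : R (p + (t : ZMod n)) ≤ R (p + ((t + 1 : ℕ) : ZMod n)) := by
      by_cases hcase : t = s2
      · rw [hcase]; exact (hup).le
      · exact htmin (t + 1) (Finset.mem_Icc.mpr ⟨by omega, by omega⟩)
    set i : ZMod n := p + (t : ZMod n) with hi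
    have e1 : i - 1 = p + ((t - 1 : ℕ) : ZMod n) := by
      rw [hi, ← cast_succ t (by omega)]
      ring
    have e2 : i + 1 = p + ((t + 1 : ℕ) : ZMod n) := by
      rw [hi]; push_cast; ring
    have := huniq i ⟨by rw [e1]; exact hL, by rw [e2]; exact hR⟩
    have h1 : i ≠ p := by
      rw [hi]
      have := offc p (s := t) (t := 0) (by omega) (by omega) (by omega)
      simpa using this
    exact h1 this
  -- first descent
  set Q : ℕ → Prop := fun s => R (p + ((s + 1 : ℕ) : ZMod n)) ≤ R (p + (s : ZMod n)) with hQ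
  have hex : ∃ s, Q s := by
    refine ⟨n - 1, ?_⟩
    rw [hQ]
    simp only
    rw [show ((n - 1 + 1 : ℕ) : ZMod n) = 0 by
      rw [show n - 1 + 1 = n by omega]; exact cast_n]
    rw [add_zero]
    exact hlast.le
  set r : ℕ := Nat.find hex with hr
  have hQr : Q r := Nat.find_spec hex
  have hQmin : ∀ s, s < r → ¬ Q s := fun s hs => Nat.find_min hex hs
  have hr1 : 1 ≤ r := by
    by_contra hcon
    have hr0 : r = 0 := by omega
    have h2 := hQr
    rw [hr0, hQ] at h2
    norm_num at h2
    linarith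
  have hrn : r ≤ n - 1 := Nat.find_le (by
    rw [hQ]
    simp only
    rw [show ((n - 1 + 1 : ℕ) : ZMod n) = 0 by rw [show n - 1 + 1 = n by omega]; exact cast_n]
    rw [add_zero]
    exact hlast.le)
  refine ⟨r, hr1, hrn, ?_, ?_, hlast⟩
  · intro s hs
    have := hQmin s hs
    rw [hQ] at this
    simp only at this
    linarith [lt_of_not_ge this]
  · intro s hsr hsn
    by_cases hcase : s = r
    · rw [hcase]; exact hQr
    · by_contra hcon
      push_neg at hcon
      exact C1 r s (by omega) hsn hQr hcon

end Pattern
section Circum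

variable {n : ℕ} [NeZero n]

noncomputable def kappa {n : ℕ} (V O : ZMod n → ℂ) (i : ZMod n) : ℝ :=
  planeDet (edge V i) (O (i + 1) - O i) / nsq (edge V i)

lemma nsq_symm (a b : ℂ) : nsq (a - b) = nsq (b - a) := by simp [nsq]; ring

lemma circ_nsq {V O : ZMod n → ℂ} {R : ZMod n → ℝ} (hcirc : AreCircumData V O R) (i : ZMod n) :
    nsq (O i - V (i - 1)) = R i ^ 2 ∧ nsq (O i - V i) = R i ^ 2 ∧
      nsq (O i - V (i + 1)) = R i ^ 2 := by
  obtain ⟨h1, h2, h3⟩ := hcirc i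
  have conv : ∀ (z w : ℂ) (r : ℝ), dist z w = r → nsq (z - w) = r ^ 2 := by
    intro z w r h
    have ha : ‖z - w‖ = r := by rwa [Complex.dist_eq] at h
    have hb : ‖z - w‖ ^ 2 = r ^ 2 := by rw [ha]
    rw [Complex.sq_norm, Complex.normSq_apply] at hb
    simpa [nsq] using hb
  exact ⟨conv _ _ _ h1, conv _ _ _ h2, conv _ _ _ h3⟩

lemma circ_at_prev {V O : ZMod n → ℂ} {R : ZMod n → ℝ} (hcirc : AreCircumData V O R)
    (i : ZMod n) : nsq (O (i + 1) - V i) = R (i + 1) ^ 2 := by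
  have := (circ_nsq hcirc (i + 1)).1
  rwa [add_sub_cancel_right] at this

lemma hOrth {V O : ZMod n → ℂ} {R : ZMod n → ℝ} (hcirc : AreCircumData V O R) (i : ZMod n) :
    dotR (O (i + 1) - O i) (edge V i) = 0 := by
  have hA := (circ_nsq hcirc i).2.1
  have hB := (circ_nsq hcirc i).2.2
  have hC := circ_at_prev hcirc i
  have hE := (circ_nsq hcirc (i + 1)).2.1
  exact id7 (hA.trans hB.symm) (hC.trans hE.symm)

lemma hdotk {V O : ZMod n → ℂ} {R : ZMod n → ℝ} (hconv : IsConvexPolygon V) (hn : 4 ≤ n)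
    (hcirc : AreCircumData V O R) (i : ZMod n) (w : ℂ) :
    dotR (O (i + 1) - O i) w = kappa V O i * planeDet (edge V i) w := by
  have h4 := id4 (edge V i) (O (i + 1) - O i) w
  rw [hOrth hcirc i, zero_mul, zero_add] at h4
  have hne : nsq (edge V i) ≠ 0 := ne_of_gt (nsq_pos (edge_ne hconv hn i))
  rw [kappa]
  field_simp
  linarith [h4]

lemma one_ne_zero_z (hn : 4 ≤ n) : (1 : ZMod n) ≠ 0 := by
  have : ((1 : ℕ) : ZMod n) ≠ ((0 : ℕ) : ZMod n) := cast_ne (by omega) (by omega) (by omega)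
  simpa using this

lemma two_ne_zero_z (hn : 4 ≤ n) : (2 : ZMod n) ≠ 0 := by
  have : ((2 : ℕ) : ZMod n) ≠ ((0 : ℕ) : ZMod n) := cast_ne (by omega) (by omega) (by omega)
  simpa using this

lemma im1_ne_i (hn : 4 ≤ n) (i : ZMod n) : i - 1 ≠ i := by
  intro h
  apply one_ne_zero_z hn
  linear_combination -h

lemma im1_ne_ip1 (hn : 4 ≤ n) (i : ZMod n) : i - 1 ≠ i + 1 := by
  intro h
  apply two_ne_zero_z hn
  linear_combination -h

lemma hpos1 {V O : ZMod n → ℂ} (hconv : IsConvexPolygon V) (hn : 4 ≤ n)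
    (hin : CircumcentersInsideAngles V O) (i : ZMod n) :
    0 < planeDet (edge V i) (O i - V i) := by
  obtain ⟨a, b, ha, hb, heq⟩ := hin i
  rw [heq, pd_add_right, pd_smul_right, pd_smul_right]
  have h1 : planeDet (edge V i) (V (i + 1) - V i) = 0 := pd_self _
  have h2 : 0 < planeDet (edge V i) (V (i - 1) - V i) :=
    hD hconv (im1_ne_i hn i) (im1_ne_ip1 hn i)
  rw [h1]
  nlinarith

lemma hpos2 {V O : ZMod n → ℂ} (hconv : IsConvexPolygon V) (hn : 4 ≤ n)
    (hin : CircumcentersInsideAngles V O) (i : ZMod n) :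
    0 < planeDet (edge V i) (O (i + 1) - V i) := by
  obtain ⟨a, b, ha, hb, heq⟩ := hin (i + 1)
  rw [add_sub_cancel_right] at heq
  have hsplit : O (i + 1) - V i = (O (i + 1) - V (i + 1)) + edge V i := by
    rw [edge]; ring
  rw [hsplit, heq, pd_add_right, pd_add_right, pd_smul_right, pd_smul_right, pd_self]
  have h1 : planeDet (edge V i) (V i - V (i + 1)) = 0 := by
    rw [show V i - V (i + 1) = -(edge V i) by rw [edge]; ring, pd_neg_right, pd_self, neg_zero]
  have h2 : 0 < planeDet (edge V i) (V (i + 1 + 1) - V (i + 1)) := by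
    have hsplit2 : V (i + 1 + 1) - V (i + 1) = (V (i + 2) - V i) - edge V i := by
      rw [edge, show i + 1 + 1 = i + 2 by ring]; ring
    rw [hsplit2, pd_sub_right, pd_self, sub_zero]
    exact hD hconv (i2_ne_i hn i) (i2_ne_i1 hn i)
  rw [h1]
  nlinarith

lemma hsq {V O : ZMod n → ℂ} {R : ZMod n → ℝ} (hconv : IsConvexPolygon V) (hn : 4 ≤ n)
    (hcirc : AreCircumData V O R) (i : ZMod n) :
    R (i + 1) ^ 2 - R i ^ 2
      = kappa V O i * planeDet (edge V i) ((O i - V i) + (O (i + 1) - V i)) := by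
  have hA := circ_at_prev hcirc i
  have hB := (circ_nsq hcirc i).2.1
  have h5 := id5 (O (i + 1) - V i) (O i - V i)
  rw [show (O (i + 1) - V i) - (O i - V i) = O (i + 1) - O i by ring] at h5
  rw [← hA, ← hB, h5, show (O (i + 1) - V i) + (O i - V i) = (O i - V i) + (O (i + 1) - V i)
    by ring]
  exact hdotk hconv hn hcirc i _

lemma hRpos {V O : ZMod n → ℂ} {R : ZMod n → ℝ} (hconv : IsConvexPolygon V) (hn : 4 ≤ n)
    (hcirc : AreCircumData V O R) (i : ZMod n) : 0 < R i := by
  have h0 : 0 ≤ R i := by rw [← (hcirc i).2.1]; exact dist_nonneg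
  rcases h0.lt_or_eq with h | h
  · exact h
  · exfalso
    have h1 : O i = V i := by
      have := (hcirc i).2.1
      rw [← h] at this
      exact dist_eq_zero.mp this
    have h2 : O i = V (i + 1) := by
      have := (hcirc i).2.2
      rw [← h] at this
      exact dist_eq_zero.mp this
    apply edge_ne hconv hn i
    rw [edge, ← h1, ← h2, sub_self]

lemma main_id {V O : ZMod n → ℂ} {R : ZMod n → ℝ} (hconv : IsConvexPolygon V) (hn : 4 ≤ n)
    (hcirc : AreCircumData V O R) (x : ℂ) :
    ∑ i : ZMod n, kappa V O i * din V i x = 0 := by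
  set pw : ZMod n → ℝ := fun i => nsq (x - O i) - R i ^ 2 with hpw
  have hstep : ∀ i : ZMod n, pw (i + 1) - pw i = -2 * (kappa V O i * din V i x) := by
    intro i
    have h6 := id6 x (V i) (O i) (O (i + 1))
    have hA := circ_at_prev hcirc i
    have hB := (circ_nsq hcirc i).2.1
    have hD' := hdotk hconv hn hcirc i (x - V i)
    rw [hpw]
    simp only
    rw [nsq_symm (O (i+1)) (V i)] at hA
    rw [nsq_symm (O i) (V i)] at hB
    have hdin : planeDet (edge V i) (x - V i) = din V i x := rfl
    rw [hdin] at hD'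
    nlinarith [h6, hA, hB, hD']
  have hshift : ∑ i : ZMod n, pw (i + 1) = ∑ i : ZMod n, pw i :=
    Fintype.sum_equiv (Equiv.addRight (1 : ZMod n)) (fun i => pw (i + 1)) pw (fun i => rfl)
  have hzero : ∑ i : ZMod n, (pw (i + 1) - pw i) = 0 := by
    rw [Finset.sum_sub_distrib, hshift, sub_self]
  have h2 : ∑ i : ZMod n, (-2 : ℝ) * (kappa V O i * din V i x) = 0 := by
    rw [← Finset.sum_congr rfl (fun i _ => hstep i)]
    exact hzero
  rw [← Finset.mul_sum] at h2
  linarith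

lemma kpos {V O : ZMod n → ℂ} {R : ZMod n → ℝ} (hconv : IsConvexPolygon V) (hn : 4 ≤ n)
    (hcirc : AreCircumData V O R) (hin : CircumcentersInsideAngles V O) {i : ZMod n}
    (h : R i < R (i + 1)) : 0 < kappa V O i := by
  have hs := hsq hconv hn hcirc i
  have hS : 0 < planeDet (edge V i) ((O i - V i) + (O (i + 1) - V i)) := by
    rw [pd_add_right]
    linarith [hpos1 hconv hn hin i, hpos2 hconv hn hin i]
  have h1 := hRpos hconv hn hcirc i
  have h2 := hRpos hconv hn hcirc (i + 1)
  nlinarith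

lemma kneg {V O : ZMod n → ℂ} {R : ZMod n → ℝ} (hconv : IsConvexPolygon V) (hn : 4 ≤ n)
    (hcirc : AreCircumData V O R) (hin : CircumcentersInsideAngles V O) {i : ZMod n}
    (h : R (i + 1) < R i) : kappa V O i < 0 := by
  have hs := hsq hconv hn hcirc i
  have hS : 0 < planeDet (edge V i) ((O i - V i) + (O (i + 1) - V i)) := by
    rw [pd_add_right]
    linarith [hpos1 hconv hn hin i, hpos2 hconv hn hin i]
  have h1 := hRpos hconv hn hcirc i
  have h2 := hRpos hconv hn hcirc (i + 1)
  nlinarith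

lemma knp {V O : ZMod n → ℂ} {R : ZMod n → ℝ} (hconv : IsConvexPolygon V) (hn : 4 ≤ n)
    (hcirc : AreCircumData V O R) (hin : CircumcentersInsideAngles V O) {i : ZMod n}
    (h : R (i + 1) ≤ R i) : kappa V O i ≤ 0 := by
  have hs := hsq hconv hn hcirc i
  have hS : 0 < planeDet (edge V i) ((O i - V i) + (O (i + 1) - V i)) := by
    rw [pd_add_right]
    linarith [hpos1 hconv hn hin i, hpos2 hconv hn hin i]
  have h1 := hRpos hconv hn hcirc i
  have h2 := hRpos hconv hn hcirc (i + 1)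
  nlinarith

lemma knn {V O : ZMod n → ℂ} {R : ZMod n → ℝ} (hconv : IsConvexPolygon V) (hn : 4 ≤ n)
    (hcirc : AreCircumData V O R) (hin : CircumcentersInsideAngles V O) {i : ZMod n}
    (h : R i ≤ R (i + 1)) : 0 ≤ kappa V O i := by
  have hs := hsq hconv hn hcirc i
  have hS : 0 < planeDet (edge V i) ((O i - V i) + (O (i + 1) - V i)) := by
    rw [pd_add_right]
    linarith [hpos1 hconv hn hin i, hpos2 hconv hn hin i]
  have h1 := hRpos hconv hn hcirc i
  have h2 := hRpos hconv hn hcirc (i + 1)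
  nlinarith

end Circum
end FV

open FV in
/-- **Musin's theorem.** If each circumcenter of three consecutive vertices of a
convex polygon lies inside the corresponding vertex angle, then the cyclic sequence of
circumradii `R i` has at least two local minima and at least two local maxima. -/
theorem circumradii_four_extrema (n : ℕ) [NeZero n] (hn : 4 ≤ n) (V O : ZMod n → ℂ)
    (R : ZMod n → ℝ) (hconv : IsConvexPolygon V) (hcirc : AreCircumData V O R)
    (hin : CircumcentersInsideAngles V O) :
    (∃ i j : ZMod n, i ≠ j ∧ (R i ≤ R (i - 1) ∧ R i ≤ R (i + 1)) ∧
      (R j ≤ R (j - 1) ∧ R j ≤ R (j + 1))) ∧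
    (∃ i j : ZMod n, i ≠ j ∧ (R (i - 1) ≤ R i ∧ R (i + 1) ≤ R i) ∧
      (R (j - 1) ≤ R j ∧ R (j + 1) ≤ R j)) := by
  have hcast1 : ∀ (p : ZMod n) (s : ℕ), p + ((s + 1 : ℕ) : ZMod n) = (p + (s : ZMod n)) + 1 := by
    intro p s; push_cast; ring
  have hcastlast : ∀ p : ZMod n, (p + ((n - 1 : ℕ) : ZMod n)) + 1 = p := by
    intro p; rw [add_assoc, cast_pred_add_one hn, add_zero]
  constructor
  · -- at least two local minima
    by_contra hcon
    obtain ⟨p, _, hminp⟩ := Finset.exists_min_image Finset.univ R ⟨0, Finset.mem_univ 0⟩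
    have hmin : ∀ i, R p ≤ R i := fun i => hminp i (Finset.mem_univ i)
    have hAp : R p ≤ R (p - 1) ∧ R p ≤ R (p + 1) := ⟨hmin _, hmin _⟩
    have huniq : ∀ i : ZMod n, (R i ≤ R (i - 1) ∧ R i ≤ R (i + 1)) → i = p := by
      intro i hAi
      by_contra hne
      exact hcon ⟨i, p, hne, hAi, hAp⟩
    obtain ⟨r, hr1, hrn, hup, hdown, hlast⟩ := pattern hn p hmin huniq
    apply contra hconv hn (kappa V O) (main_id hconv hn hcirc) p hr1 hrn
    · intro s hs
      apply kpos hconv hn hcirc hin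
      have := hup s hs
      rwa [hcast1 p s] at this
    · intro s hs1 hs2
      apply knp hconv hn hcirc hin
      have := hdown s hs1 hs2
      rwa [hcast1 p s] at this
    · apply kneg hconv hn hcirc hin
      rw [hcastlast p]
      exact hlast
  · -- at least two local maxima
    by_contra hcon
    obtain ⟨p, _, hmaxp⟩ := Finset.exists_max_image Finset.univ R ⟨0, Finset.mem_univ 0⟩
    have hmax : ∀ i, R i ≤ R p := fun i => hmaxp i (Finset.mem_univ i)
    have hAp : R (p - 1) ≤ R p ∧ R (p + 1) ≤ R p := ⟨hmax _, hmax _⟩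
    set R' : ZMod n → ℝ := fun i => -R i with hR'
    have hmin' : ∀ i, R' p ≤ R' i := by
      intro i; simp only [hR']; linarith [hmax i]
    have huniq : ∀ i : ZMod n, (R' i ≤ R' (i - 1) ∧ R' i ≤ R' (i + 1)) → i = p := by
      intro i hAi
      by_contra hne
      simp only [hR', neg_le_neg_iff] at hAi
      exact hcon ⟨i, p, hne, hAi, hAp⟩
    obtain ⟨r, hr1, hrn, hup, hdown, hlast⟩ := pattern hn p hmin' huniq
    have hid : ∀ x : ℂ, ∑ i : ZMod n, (fun i => -(kappa V O i)) i * din V i x = 0 := by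
      intro x
      have := main_id hconv hn hcirc (R := R) x
      simp only [neg_mul]
      rw [Finset.sum_neg_distrib, this, neg_zero]
    apply contra hconv hn (fun i => -(kappa V O i)) hid p hr1 hrn
    · intro s hs
      have := hup s hs
      simp only [hR', neg_lt_neg_iff] at this
      rw [hcast1 p s] at this
      have hk := kneg hconv hn hcirc hin this
      simpa using hk
    · intro s hs1 hs2
      have := hdown s hs1 hs2
      simp only [hR', neg_le_neg_iff] at this
      rw [hcast1 p s] at this
      have hk := knn hconv hn hcirc hin this
      simpa using hk
    · have : R (p + ((n - 1 : ℕ) : ZMod n)) < R p := by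
        have := hlast
        simp only [hR', neg_lt_neg_iff] at this
        exact this
      have hk := kpos hconv hn hcirc hin (i := p + ((n - 1 : ℕ) : ZMod n))
        (by rw [hcastlast p]; exact this)
      simpa using hk
end
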